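/- arXiv:1803.03458 — 8 statements merged into one kernel-verified Lean document; each statement's English description precedes it below -/
import Mathlib

section
/- If X is a Menger subset of the real line, then the complement ℝ ∖ X is completely Baire. -/
/-- A topological space is Menger if for every sequence of open covers there exist
finite subfamilies whose unions together cover the space. -/
def MengerSpace (X : Type*) [TopologicalSpace X] : Prop :=
  ∀ U : ℕ → Set (Set X),
    (∀ n, (∀ u ∈ U n, IsOpen u) ∧ ⋃₀ U n = Set.univ) →
    ∃ V : ℕ → Set (Set X), (∀ n, V n ⊆ U n ∧ (V n).Finite) ∧
      (⋃ n, ⋃₀ V n) = Set.univ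

/-- A space is completely Baire if every closed subspace is a Baire space. -/
def CompletelyBaire (X : Type*) [TopologicalSpace X] : Prop :=
  ∀ C : Set X, IsClosed C → BaireSpace C

open Set

structure Bad (X : Set ℝ) where
  C : Set ℝ
  H : ℕ → Set ℝ
  hne : C.Nonempty
  hCX : C ⊆ Xᶜ
  hclosed : closure C ∩ Xᶜ ⊆ C
  hcover : C ⊆ ⋃ n, H n
  step : ∀ (n : ℕ) (a b η : ℝ), a < b → (C ∩ Set.Ioo a b).Nonempty → 0 < η →
    ∃ q : ℝ × ℝ, a < q.1 ∧ q.1 < q.2 ∧ q.2 < b ∧ q.2 - q.1 ≤ η ∧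
      (C ∩ Set.Ioo q.1 q.2).Nonempty ∧ ∀ j ≤ n, Set.Icc q.1 q.2 ∩ H j = ∅

namespace Bad

variable {X : Set ℝ} (B : Bad X)

lemma nonisol {t : ℝ} (ht : t ∈ B.C) {r : ℝ} (hr : 0 < r) :
    ∃ c, c ∈ B.C ∧ c ≠ t ∧ |c - t| < r := by
  obtain ⟨_, ⟨n, rfl⟩, hn⟩ := B.hcover ht
  obtain ⟨q, h1, h2, h3, h4, ⟨c, hc, hc2⟩, h6⟩ :=
    B.step n (t - r) (t + r) r (by linarith) ⟨t, ht, by simp only [Set.mem_Ioo]; exact ⟨by linarith, by linarith⟩⟩ hr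
  refine ⟨c, hc, ?_, ?_⟩
  · rintro rfl
    have h7 := h6 n le_rfl
    rw [Set.eq_empty_iff_forall_notMem] at h7
    exact h7 c ⟨⟨le_of_lt hc2.1, le_of_lt hc2.2⟩, hn⟩
  · rw [abs_sub_lt_iff]
    exact ⟨by linarith [hc2.2], by linarith [hc2.1]⟩

open Classical in
noncomputable def tpt (p : ℝ × ℝ) : ℝ :=
  if h : (B.C ∩ Set.Ioo p.1 p.2).Nonempty then h.choose else 0

lemma tpt_spec {p : ℝ × ℝ} (h : (B.C ∩ Set.Ioo p.1 p.2).Nonempty) :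
    B.tpt p ∈ B.C ∩ Set.Ioo p.1 p.2 := by
  rw [tpt, dif_pos h]; exact h.choose_spec

open Classical in
noncomputable def nip (t r : ℝ) : ℝ :=
  if h : ∃ c, c ∈ B.C ∧ c ≠ t ∧ |c - t| < r then h.choose else t + 1

lemma nip_spec {t : ℝ} (ht : t ∈ B.C) {r : ℝ} (hr : 0 < r) :
    B.nip t r ∈ B.C ∧ B.nip t r ≠ t ∧ |B.nip t r - t| < r := by
  have h := B.nonisol ht hr
  rw [nip, dif_pos h]; exact h.choose_spec

noncomputable def side (t r c : ℝ) : ℝ × ℝ := if t < c then (t, t + r) else (t - r, t)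

open Classical in
noncomputable def pick (n : ℕ) (p : ℝ × ℝ) (η : ℝ) : ℝ × ℝ :=
  if h : p.1 < p.2 ∧ (B.C ∩ Set.Ioo p.1 p.2).Nonempty ∧ 0 < η then
    (B.step n p.1 p.2 η h.1 h.2.1 h.2.2).choose
  else (0, 1)

lemma pick_spec (n : ℕ) {p : ℝ × ℝ} {η : ℝ} (h1 : p.1 < p.2)
    (h2 : (B.C ∩ Set.Ioo p.1 p.2).Nonempty) (h3 : 0 < η) :
    p.1 < (B.pick n p η).1 ∧ (B.pick n p η).1 < (B.pick n p η).2 ∧ (B.pick n p η).2 < p.2 ∧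
      (B.pick n p η).2 - (B.pick n p η).1 ≤ η ∧
      (B.C ∩ Set.Ioo (B.pick n p η).1 (B.pick n p η).2).Nonempty ∧
      ∀ j ≤ n, Set.Icc (B.pick n p η).1 (B.pick n p η).2 ∩ B.H j = ∅ := by
  rw [pick, dif_pos ⟨h1, h2, h3⟩]
  exact (B.step n p.1 p.2 η h1 h2 h3).choose_spec

noncomputable def rnext (t : ℝ) (p q : ℝ × ℝ) (k : ℕ) : ℝ :=
  min (min ((1/2 : ℝ) ^ (k+1)) (min (t - p.1) (p.2 - t)))
    (min |q.1 - t| |q.2 - t| / 2)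

noncomputable def rad0 (t : ℝ) (p : ℝ × ℝ) : ℝ := min 1 (min (t - p.1) (p.2 - t))

noncomputable def childF (B : Bad X) (p : ℝ × ℝ) (n : ℕ) : ℕ → ℝ × ℝ
  | 0 => B.pick n (side (B.tpt p) (rad0 (B.tpt p) p) (B.nip (B.tpt p) (rad0 (B.tpt p) p)))
      ((1/2 : ℝ) ^ (n+1))
  | (k+1) => B.pick n (side (B.tpt p) (rnext (B.tpt p) p (childF B p n k) k)
      (B.nip (B.tpt p) (rnext (B.tpt p) p (childF B p n k) k))) ((1/2 : ℝ) ^ (n+1))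

noncomputable def rad (B : Bad X) (p : ℝ × ℝ) (n : ℕ) : ℕ → ℝ
  | 0 => rad0 (B.tpt p) p
  | (k+1) => rnext (B.tpt p) p (childF B p n k) k

lemma childF_eq (p : ℝ × ℝ) (n k : ℕ) :
    childF B p n k = B.pick n (side (B.tpt p) (rad B p n k) (B.nip (B.tpt p) (rad B p n k)))
      ((1/2 : ℝ) ^ (n+1)) := by
  cases k <;> rfl

end Bad

namespace Bad

variable {X : Set ℝ} (B : Bad X)

lemma gap {t a b y : ℝ} (hab : a ≤ b) (hy : y ∈ Set.Icc a b) (hside : t < a ∨ b < t) :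
    0 < min |a - t| |b - t| ∧ min |a - t| |b - t| ≤ |y - t| := by
  obtain ⟨hy1, hy2⟩ := hy
  rcases hside with h | h
  · rw [abs_of_pos (by linarith), abs_of_pos (by linarith), abs_of_pos (by linarith)]
    constructor
    · simp only [lt_min_iff]; exact ⟨by linarith, by linarith⟩
    · exact le_trans (min_le_left _ _) (by linarith)
  · rw [abs_of_neg (by linarith), abs_of_neg (by linarith), abs_of_neg (by linarith)]
    constructor
    · simp only [lt_min_iff]; exact ⟨by linarith, by linarith⟩
    · exact le_trans (min_le_right _ _) (by linarith)

/-- Core construction step: properties of a picked child box in the one-sided interval. -/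
lemma core {p : ℝ × ℝ} {n : ℕ} (hpc : (B.C ∩ Set.Ioo p.1 p.2).Nonempty)
    {r : ℝ} (hr : 0 < r) (hr1 : r ≤ B.tpt p - p.1) (hr2 : r ≤ p.2 - B.tpt p) :
    ∀ q, q = B.pick n (side (B.tpt p) r (B.nip (B.tpt p) r)) ((1/2 : ℝ) ^ (n+1)) →
    (q.1 < q.2) ∧ (B.C ∩ Set.Ioo q.1 q.2).Nonempty ∧
      Set.Icc q.1 q.2 ⊆ Set.Ioo p.1 p.2 ∧
      (∀ j ≤ n, Set.Icc q.1 q.2 ∩ B.H j = ∅) ∧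
      (q.2 - q.1 ≤ (1/2 : ℝ)^(n+1)) ∧
      (∀ y ∈ Set.Icc q.1 q.2, |y - B.tpt p| ≤ r) ∧
      (B.tpt p < q.1 ∨ q.2 < B.tpt p) := by
  intro q hq
  set t := B.tpt p with hty
  have htC := B.tpt_spec hpc
  have hts : t ∈ Set.Ioo p.1 p.2 := htC.2
  obtain ⟨hcC, hcne, hcr⟩ := B.nip_spec htC.1 hr
  set c := B.nip t r with hc
  have hcr' := abs_lt.1 hcr
  have hη : (0:ℝ) < (1/2 : ℝ)^(n+1) := by positivity
  by_cases hlt : t < c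
  · have hs : side t r c = (t, t + r) := by rw [side, if_pos hlt]
    have h1 : (side t r c).1 < (side t r c).2 := by rw [hs]; simpa using hr
    have h2 : (B.C ∩ Set.Ioo (side t r c).1 (side t r c).2).Nonempty := by
      refine ⟨c, hcC, Set.mem_Ioo.mpr ⟨?_, ?_⟩⟩
      · rw [hs]; exact hlt
      · rw [hs]; show c < t + r; linarith [hcr'.2]
    obtain ⟨g1, g2, g3, g4, g5, g6⟩ := B.pick_spec n h1 h2 hη
    rw [← hq] at g1 g2 g3 g4 g5 g6
    rw [hs] at g1 g3
    have g1' : t < q.1 := g1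
    have g3' : q.2 < t + r := g3
    refine ⟨g2, g5, ?_, g6, g4, ?_, Or.inl g1'⟩
    · intro y hy
      exact ⟨by linarith [hts.1, hy.1], by linarith [hts.2, hy.2]⟩
    · intro y hy
      rw [abs_of_pos (by linarith [hy.1])]
      linarith [hy.2]
  · have hlt' : c < t := lt_of_le_of_ne (not_lt.1 hlt) hcne
    have hs : side t r c = (t - r, t) := by rw [side, if_neg hlt]
    have h1 : (side t r c).1 < (side t r c).2 := by rw [hs]; simpa using hr
    have h2 : (B.C ∩ Set.Ioo (side t r c).1 (side t r c).2).Nonempty := by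
      refine ⟨c, hcC, Set.mem_Ioo.mpr ⟨?_, ?_⟩⟩
      · rw [hs]; show t - r < c; linarith [hcr'.1]
      · rw [hs]; exact hlt'
    obtain ⟨g1, g2, g3, g4, g5, g6⟩ := B.pick_spec n h1 h2 hη
    rw [← hq] at g1 g2 g3 g4 g5 g6
    rw [hs] at g1 g3
    have g1' : t - r < q.1 := g1
    have g3' : q.2 < t := g3
    refine ⟨g2, g5, ?_, g6, g4, ?_, Or.inr g3'⟩
    · intro y hy
      exact ⟨by linarith [hts.1, hy.1], by linarith [hts.2, hy.2]⟩
    · intro y hy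
      rw [abs_of_neg (by linarith [hy.2]), neg_sub]
      linarith [hy.1]

def Good (B : Bad X) (p : ℝ × ℝ) (n k : ℕ) : Prop :=
  0 < rad B p n k ∧ rad B p n k ≤ (1/2 : ℝ)^k ∧
  rad B p n k ≤ B.tpt p - p.1 ∧ rad B p n k ≤ p.2 - B.tpt p ∧
  ((childF B p n k).1 < (childF B p n k).2) ∧
  (B.C ∩ Set.Ioo (childF B p n k).1 (childF B p n k).2).Nonempty ∧
  Set.Icc (childF B p n k).1 (childF B p n k).2 ⊆ Set.Ioo p.1 p.2 ∧
  (∀ j ≤ n, Set.Icc (childF B p n k).1 (childF B p n k).2 ∩ B.H j = ∅) ∧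
  ((childF B p n k).2 - (childF B p n k).1 ≤ (1/2 : ℝ)^(n+1)) ∧
  (∀ y ∈ Set.Icc (childF B p n k).1 (childF B p n k).2, |y - B.tpt p| ≤ rad B p n k) ∧
  (B.tpt p < (childF B p n k).1 ∨ (childF B p n k).2 < B.tpt p)

lemma good {p : ℝ × ℝ} {n : ℕ} (hp : p.1 < p.2) (hpc : (B.C ∩ Set.Ioo p.1 p.2).Nonempty) :
    ∀ k, Good B p n k := by
  have hts := (B.tpt_spec hpc).2
  intro k
  induction k with
  | zero =>
      have hr : 0 < rad B p n 0 := by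
        rw [rad, rad0]
        simp only [lt_min_iff]
        exact ⟨one_pos, by linarith [hts.1], by linarith [hts.2]⟩
      have hr1 : rad B p n 0 ≤ (1/2 : ℝ)^0 := by
        rw [rad, rad0, pow_zero]; exact min_le_left _ _
      have hr2 : rad B p n 0 ≤ B.tpt p - p.1 :=
        le_trans (min_le_right _ _) (min_le_left _ _)
      have hr3 : rad B p n 0 ≤ p.2 - B.tpt p :=
        le_trans (min_le_right _ _) (min_le_right _ _)
      obtain ⟨a1, a2, a3, a4, a5, a6, a7⟩ := B.core hpc hr hr2 hr3 _ (B.childF_eq p n 0)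
      exact ⟨hr, hr1, hr2, hr3, a1, a2, a3, a4, a5, a6, a7⟩
  | succ k ih =>
      obtain ⟨i1, i2, i3, i4, i5, i6, i7, i8, i9, i10, i11⟩ := ih
      have hgap := gap (le_of_lt i5) (⟨le_refl _, le_of_lt i5⟩ :
        (childF B p n k).1 ∈ Set.Icc (childF B p n k).1 (childF B p n k).2) i11
      have hradeq : rad B p n (k+1) = rnext (B.tpt p) p (childF B p n k) k := rfl
      have hr : 0 < rad B p n (k+1) := by
        rw [hradeq, rnext]
        simp only [lt_min_iff]
        refine ⟨⟨by positivity, by linarith [hts.1, i3, i1], by linarith [hts.2, i4, i1]⟩, ?_⟩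
        linarith [hgap.1]
      have hr1 : rad B p n (k+1) ≤ (1/2 : ℝ)^(k+1) := by
        rw [hradeq, rnext]
        exact le_trans (min_le_left _ _) (min_le_left _ _)
      have hr2 : rad B p n (k+1) ≤ B.tpt p - p.1 := by
        rw [hradeq, rnext]
        exact le_trans (min_le_left _ _) (le_trans (min_le_right _ _) (min_le_left _ _))
      have hr3 : rad B p n (k+1) ≤ p.2 - B.tpt p := by
        rw [hradeq, rnext]
        exact le_trans (min_le_left _ _) (le_trans (min_le_right _ _) (min_le_right _ _))
      obtain ⟨a1, a2, a3, a4, a5, a6, a7⟩ := B.core hpc hr hr2 hr3 _ (B.childF_eq p n (k+1))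
      exact ⟨hr, hr1, hr2, hr3, a1, a2, a3, a4, a5, a6, a7⟩

/-- the key separation: later radii are strictly inside the gap around `t` left by box `k`. -/
lemma rad_succ_lt {p : ℝ × ℝ} {n : ℕ} (hp : p.1 < p.2)
    (hpc : (B.C ∩ Set.Ioo p.1 p.2).Nonempty) (k : ℕ) :
    ∀ y ∈ Set.Icc (childF B p n k).1 (childF B p n k).2,
      rad B p n (k+1) < |y - B.tpt p| := by
  intro y hy
  obtain ⟨i1, i2, i3, i4, i5, i6, i7, i8, i9, i10, i11⟩ := B.good (n := n) hp hpc k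
  have hgap := gap (le_of_lt i5) hy i11
  have : rad B p n (k+1) ≤ min |(childF B p n k).1 - B.tpt p| |(childF B p n k).2 - B.tpt p| / 2 :=
    min_le_right _ _
  calc rad B p n (k+1) ≤ _ / 2 := this
    _ < min |(childF B p n k).1 - B.tpt p| |(childF B p n k).2 - B.tpt p| := by
        linarith [hgap.1]
    _ ≤ |y - B.tpt p| := hgap.2

lemma rad_antitone {p : ℝ × ℝ} {n : ℕ} (hp : p.1 < p.2)
    (hpc : (B.C ∩ Set.Ioo p.1 p.2).Nonempty) {k m : ℕ} (hkm : k ≤ m) :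
    rad B p n m ≤ rad B p n k := by
  induction m with
  | zero => simp_all
  | succ m ih =>
      rcases Nat.lt_or_ge k (m+1) with h | h
      · have h' : k ≤ m := Nat.lt_succ_iff.1 h
        refine le_trans ?_ (ih h')
        obtain ⟨i1, i2, i3, i4, i5, i6, i7, i8, i9, i10, i11⟩ := B.good (n := n) hp hpc m
        have h1 : rad B p n (m+1) ≤
            min |(childF B p n m).1 - B.tpt p| |(childF B p n m).2 - B.tpt p| / 2 :=
          min_le_right _ _
        have h2 : |(childF B p n m).1 - B.tpt p| ≤ rad B p n m :=
          i10 _ ⟨le_refl _, le_of_lt i5⟩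
        have h3 : (0:ℝ) ≤ |(childF B p n m).2 - B.tpt p| := abs_nonneg _
        have := min_le_left |(childF B p n m).1 - B.tpt p| |(childF B p n m).2 - B.tpt p|
        linarith
      · have : k = m + 1 := le_antisymm hkm h
        simp [this]

/-- distinct siblings have disjoint closed boxes. -/
lemma sib_disjoint {p : ℝ × ℝ} {n : ℕ} (hp : p.1 < p.2)
    (hpc : (B.C ∩ Set.Ioo p.1 p.2).Nonempty) {k m : ℕ} (hkm : k < m) :
    Set.Icc (childF B p n k).1 (childF B p n k).2 ∩
      Set.Icc (childF B p n m).1 (childF B p n m).2 = ∅ := by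
  rw [Set.eq_empty_iff_forall_notMem]
  rintro y ⟨hyk, hym⟩
  have h1 := B.rad_succ_lt hp hpc k y hyk
  obtain ⟨_, _, _, _, _, _, _, _, _, i10, _⟩ := B.good (n := n) hp hpc m
  have h2 := i10 y hym
  have h3 := B.rad_antitone hp hpc (n := n) (Nat.succ_le_of_lt hkm)
  linarith

end Bad


namespace Bad

variable {X : Set ℝ} (B : Bad X)

noncomputable def node : List ℕ → ℝ × ℝ
  | [] => (B.hne.choose - 1, B.hne.choose + 1)
  | (k :: s) => childF B (node s) s.length k

lemma node_valid : ∀ L : List ℕ,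
    (B.node L).1 < (B.node L).2 ∧ (B.C ∩ Set.Ioo (B.node L).1 (B.node L).2).Nonempty := by
  intro L
  induction L with
  | nil =>
      have e1 : (B.node []).1 = B.hne.choose - 1 := rfl
      have e2 : (B.node []).2 = B.hne.choose + 1 := rfl
      constructor
      · rw [e1, e2]; linarith
      · refine ⟨B.hne.choose, B.hne.choose_spec, ?_, ?_⟩
        · rw [e1]; linarith
        · rw [e2]; linarith
  | cons k s ih =>
      have g := B.good (n := s.length) ih.1 ih.2 k
      exact ⟨g.2.2.2.2.1, g.2.2.2.2.2.1⟩

lemma node_sub (k : ℕ) (s : List ℕ) :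
    Set.Icc (B.node (k :: s)).1 (B.node (k :: s)).2 ⊆ Set.Ioo (B.node s).1 (B.node s).2 :=
  (B.good (n := s.length) (B.node_valid s).1 (B.node_valid s).2 k).2.2.2.2.2.2.1

lemma node_H (k : ℕ) (s : List ℕ) :
    ∀ j ≤ s.length, Set.Icc (B.node (k :: s)).1 (B.node (k :: s)).2 ∩ B.H j = ∅ :=
  (B.good (n := s.length) (B.node_valid s).1 (B.node_valid s).2 k).2.2.2.2.2.2.2.1

lemma node_width (k : ℕ) (s : List ℕ) :
    (B.node (k :: s)).2 - (B.node (k :: s)).1 ≤ (1/2 : ℝ)^(s.length + 1) :=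
  (B.good (n := s.length) (B.node_valid s).1 (B.node_valid s).2 k).2.2.2.2.2.2.2.2.1

lemma node_ball (k : ℕ) (s : List ℕ) :
    ∀ y ∈ Set.Icc (B.node (k :: s)).1 (B.node (k :: s)).2,
      |y - B.tpt (B.node s)| ≤ (1/2 : ℝ)^k := by
  intro y hy
  have g := B.good (n := s.length) (B.node_valid s).1 (B.node_valid s).2 k
  exact le_trans (g.2.2.2.2.2.2.2.2.2.1 y hy) g.2.1

lemma node_disj : ∀ (L M : List ℕ), L.length = M.length → L ≠ M →
    Set.Icc (B.node L).1 (B.node L).2 ∩ Set.Icc (B.node M).1 (B.node M).2 = ∅ := by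
  intro L
  induction L with
  | nil =>
      intro M hlen hne
      exact absurd (List.length_eq_zero_iff.1 hlen.symm).symm hne
  | cons k s ih =>
      intro M hlen hne
      cases M with
      | nil => simp at hlen
      | cons m s' =>
          simp only [List.length_cons, Nat.add_right_cancel_iff] at hlen
          by_cases hss : s = s'
          · subst hss
            have hkm : k ≠ m := by rintro rfl; exact hne rfl
            rcases lt_or_gt_of_ne hkm with h | h
            · exact Set.eq_empty_of_subset_empty (by
                rw [← B.sib_disjoint (B.node_valid s).1 (B.node_valid s).2 h]
                exact Set.inter_subset_inter (by exact fun x hx => hx) (fun x hx => hx))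
            · rw [Set.inter_comm]
              exact Set.eq_empty_of_subset_empty (by
                rw [← B.sib_disjoint (B.node_valid s).1 (B.node_valid s).2 h]
                exact fun x hx => hx)
          · have hd := ih s' hlen hss
            rw [Set.eq_empty_iff_forall_notMem] at hd ⊢
            intro x ⟨hx1, hx2⟩
            exact hd x ⟨Set.Ioo_subset_Icc_self (B.node_sub k s hx1),
              Set.Ioo_subset_Icc_self (B.node_sub m s' hx2)⟩

lemma tpt_node_mem (L : List ℕ) :
    B.tpt (B.node L) ∈ B.C ∩ Set.Ioo (B.node L).1 (B.node L).2 :=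
  B.tpt_spec (B.node_valid L).2

/-- Accumulation lemma: a union of closed sets shrinking to `t`, together with `t`, is closed. -/
lemma acc_closed (t : ℝ) (Z : ℕ → Set ℝ) (hZ : ∀ k, IsClosed (Z k))
    (hball : ∀ k, Z k ⊆ Set.Icc (t - (1/2 : ℝ)^k) (t + (1/2 : ℝ)^k)) :
    IsClosed ({t} ∪ ⋃ k, Z k) := by
  rw [← isOpen_compl_iff, Metric.isOpen_iff]
  intro x hx
  simp only [Set.mem_compl_iff, Set.mem_union, Set.mem_singleton_iff, Set.mem_iUnion,
    not_or, not_exists] at hx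
  obtain ⟨hxt, hxZ⟩ := hx
  have hδ : 0 < |x - t| := abs_pos.2 (sub_ne_zero.2 hxt)
  obtain ⟨m, hm⟩ : ∃ m : ℕ, (1/2 : ℝ)^m < |x - t| / 2 :=
    exists_pow_lt_of_lt_one (by linarith) (by norm_num)
  have hF : IsClosed (⋃ k ∈ Finset.range m, Z k) :=
    (Finset.range m).finite_toSet.isClosed_biUnion (fun k _ => hZ k)
  have hxF : x ∈ (⋃ k ∈ Finset.range m, Z k)ᶜ := by
    simp only [Set.mem_compl_iff, Set.mem_iUnion]
    rintro ⟨k, _, hk⟩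
    exact hxZ k hk
  obtain ⟨ε₁, hε₁, hball₁⟩ := Metric.isOpen_iff.1 hF.isOpen_compl x hxF
  refine ⟨min ε₁ (|x - t| / 2), by positivity, ?_⟩
  intro y hy
  simp only [Metric.mem_ball, Real.dist_eq, lt_min_iff] at hy
  simp only [Set.mem_compl_iff, Set.mem_union, Set.mem_singleton_iff, Set.mem_iUnion,
    not_or, not_exists]
  have hyt : |x - t| / 2 < |y - t| := by
    have h1 := abs_sub_abs_le_abs_sub (x - t) (y - t)
    have h2 : |x - t - (y - t)| = |x - y| := by ring_nf
    rw [h2] at h1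
    have h4 : |x - y| = |y - x| := abs_sub_comm _ _
    linarith [hy.2]
  constructor
  · intro h; rw [h] at hyt; simp at hyt; linarith
  · intro k hk
    rcases Nat.lt_or_ge k m with h | h
    · exact absurd hk (by
        have := hball₁ (by simp only [Metric.mem_ball, Real.dist_eq]; exact hy.1)
        simp only [Set.mem_compl_iff, Set.mem_iUnion] at this
        intro hkk
        exact this ⟨k, Finset.mem_range.2 h, hkk⟩)
    · have h1 := hball k hk
      have h2 : |y - t| ≤ (1/2 : ℝ)^k := abs_le.2 ⟨by linarith [h1.1], by linarith [h1.2]⟩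
      have h3 : ((1:ℝ)/2)^k ≤ (1/2)^m := pow_le_pow_of_le_one (by norm_num) (by norm_num) h
      linarith

/-- Unions of closed sets over all nodes at a given level, plus all pivot points below, are
closed. -/
lemma closed_level : ∀ (n : ℕ) (Y : List ℕ → Set ℝ),
    (∀ L : List ℕ, L.length = n → IsClosed (Y L) ∧ Y L ⊆ Set.Icc (B.node L).1 (B.node L).2) →
    IsClosed ((⋃ L ∈ {L : List ℕ | L.length = n}, Y L) ∪
      {x | ∃ L : List ℕ, L.length < n ∧ x = B.tpt (B.node L)}) := by
  intro n
  induction n with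
  | zero =>
      intro Y hY
      have : ((⋃ L ∈ {L : List ℕ | L.length = 0}, Y L) ∪
          {x | ∃ L : List ℕ, L.length < 0 ∧ x = B.tpt (B.node L)}) = Y [] := by
        ext x
        simp [List.length_eq_zero_iff]
      rw [this]
      exact (hY [] rfl).1
  | succ n ih =>
      intro Y hY
      have key : ((⋃ L ∈ {L : List ℕ | L.length = n+1}, Y L) ∪
          {x | ∃ L : List ℕ, L.length < n+1 ∧ x = B.tpt (B.node L)}) =
          ((⋃ L ∈ {L : List ℕ | L.length = n},
            ({B.tpt (B.node L)} ∪ ⋃ k, Y (k :: L))) ∪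
          {x | ∃ L : List ℕ, L.length < n ∧ x = B.tpt (B.node L)}) := by
        ext x
        simp only [Set.mem_union, Set.mem_iUnion, Set.mem_setOf_eq, Set.mem_singleton_iff]
        constructor
        · rintro (⟨L, hL, hx⟩ | ⟨L, hL, hx⟩)
          · cases L with
            | nil => simp at hL
            | cons k s =>
                simp only [List.length_cons, Nat.add_right_cancel_iff] at hL
                exact Or.inl ⟨s, hL, Or.inr ⟨k, hx⟩⟩
          · rcases Nat.lt_or_ge L.length n with h | h
            · exact Or.inr ⟨L, h, hx⟩
            · have : L.length = n := le_antisymm (Nat.lt_succ_iff.1 hL) h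
              exact Or.inl ⟨L, this, Or.inl hx⟩
        · rintro (⟨L, hL, (hx | ⟨k, hx⟩)⟩ | ⟨L, hL, hx⟩)
          · exact Or.inr ⟨L, by omega, hx⟩
          · exact Or.inl ⟨k :: L, by simp [hL], hx⟩
          · exact Or.inr ⟨L, by omega, hx⟩
      rw [key]
      apply ih
      intro L hL
      constructor
      · apply acc_closed
        · exact fun k => (hY (k :: L) (by simp [hL])).1
        · intro k
          refine subset_trans (hY (k :: L) (by simp [hL])).2 ?_
          intro y hy
          have := B.node_ball k L y hy
          have h2 := abs_le.1 this
          exact ⟨by linarith [h2.1], by linarith [h2.2]⟩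
      · intro y hy
        simp only [Set.mem_union, Set.mem_singleton_iff, Set.mem_iUnion] at hy
        rcases hy with rfl | ⟨k, hk⟩
        · exact Set.Ioo_subset_Icc_self (B.tpt_node_mem L).2
        · exact Set.Ioo_subset_Icc_self (B.node_sub k L ((hY (k :: L) (by simp [hL])).2 hk))

end Bad


lemma fin_bound {α : Type*} {F : ℕ → Set α} (hmono : Monotone F) :
    ∀ (V : Set (Set α)), V.Finite → V ⊆ Set.range F → ∃ m, ⋃₀ V ⊆ F m := by
  intro V hV
  refine Set.Finite.induction_on
    (motive := fun W _ => W ⊆ Set.range F → ∃ m, ⋃₀ W ⊆ F m) V hV ?_ ?_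
  · intro _; exact ⟨0, by simp⟩
  · intro a s ha hs ih hsub
    obtain ⟨m1, hm1⟩ := ih (subset_trans (Set.subset_insert _ _) hsub)
    obtain ⟨k, hk⟩ := hsub (Set.mem_insert _ _)
    refine ⟨max k m1, ?_⟩
    rw [Set.sUnion_insert]
    rintro x (hx | hx)
    · exact hmono (le_max_left _ _) (hk ▸ hx)
    · exact hmono (le_max_right _ _) (hm1 hx)

namespace Bad

def br (σ : ℕ → ℕ) : ℕ → List ℕ
  | 0 => []
  | (n+1) => σ n :: br σ n

lemma br_len (σ : ℕ → ℕ) : ∀ n, (br σ n).length = n := by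
  intro n; induction n with
  | zero => rfl
  | succ n ih => simp [br, ih]

variable {X : Set ℝ} (B : Bad X)

lemma br_nested (σ : ℕ → ℕ) (n : ℕ) :
    Set.Icc (B.node (br σ (n+1))).1 (B.node (br σ (n+1))).2 ⊆
      Set.Ioo (B.node (br σ n)).1 (B.node (br σ n)).2 :=
  B.node_sub (σ n) (br σ n)

lemma br_mono (σ : ℕ → ℕ) : ∀ {n m : ℕ}, n ≤ m →
    Set.Icc (B.node (br σ m)).1 (B.node (br σ m)).2 ⊆
      Set.Icc (B.node (br σ n)).1 (B.node (br σ n)).2 := by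
  intro n m hnm
  induction m with
  | zero => simp_all
  | succ m ih =>
      rcases Nat.lt_or_ge n (m+1) with h | h
      · exact subset_trans (subset_trans (B.br_nested σ m) Set.Ioo_subset_Icc_self)
          (ih (Nat.lt_succ_iff.1 h))
      · have : n = m + 1 := le_antisymm hnm h
        subst this; exact fun x hx => hx

lemma br_width (σ : ℕ → ℕ) (n : ℕ) :
    (B.node (br σ n)).2 - (B.node (br σ n)).1 ≤ 2 * (1/2 : ℝ)^n := by
  cases n with
  | zero =>
      have e1 : (B.node []).1 = B.hne.choose - 1 := rfl
      have e2 : (B.node []).2 = B.hne.choose + 1 := rfl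
      show (B.node []).2 - (B.node []).1 ≤ _
      rw [e1, e2]; norm_num
  | succ n =>
      have h := B.node_width (σ n) (br σ n)
      rw [br_len] at h
      have h2 : (0:ℝ) ≤ (1/2 : ℝ)^(n+1) := by positivity
      calc (B.node (br σ (n+1))).2 - (B.node (br σ (n+1))).1 ≤ (1/2 : ℝ)^(n+1) := h
        _ ≤ 2 * (1/2 : ℝ)^(n+1) := by linarith

/-- the branch along `σ` converges to a point of `X ∩ closure C` lying in every branch box. -/
lemma branch_limit (σ : ℕ → ℕ) :
    ∃ x : ℝ, x ∈ X ∧ x ∈ closure B.C ∧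
      ∀ n, x ∈ Set.Icc (B.node (br σ (n+1))).1 (B.node (br σ (n+1))).2 := by
  set ct : ℕ → ℝ := fun n => B.tpt (B.node (br σ n)) with hct
  have hmem : ∀ n, ct n ∈ B.C ∩ Set.Ioo (B.node (br σ n)).1 (B.node (br σ n)).2 :=
    fun n => B.tpt_node_mem (br σ n)
  have hIcc : ∀ {n m : ℕ}, n ≤ m →
      ct m ∈ Set.Icc (B.node (br σ n)).1 (B.node (br σ n)).2 :=
    fun {n m} hnm => B.br_mono σ hnm (Set.Ioo_subset_Icc_self (hmem m).2)
  have hcauchy : CauchySeq ct := by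
    refine cauchySeq_of_le_geometric (1/2) 2 (by norm_num) (fun n => ?_)
    have h1 := hIcc (le_refl n)
    have h2 := hIcc (Nat.le_succ n)
    have h3 := B.br_width σ n
    rw [Real.dist_eq]
    rw [abs_le]
    constructor
    · linarith [h1.1, h2.2]
    · linarith [h1.2, h2.1]
  obtain ⟨x, hx⟩ := cauchySeq_tendsto_of_complete hcauchy
  have hxIcc : ∀ n, x ∈ Set.Icc (B.node (br σ n)).1 (B.node (br σ n)).2 := by
    intro n
    refine isClosed_Icc.mem_of_tendsto hx ?_
    rw [Filter.eventually_atTop]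
    exact ⟨n, fun m hm => hIcc hm⟩
  have hxcl : x ∈ closure B.C :=
    mem_closure_of_tendsto hx (Filter.Eventually.of_forall (fun n => (hmem n).1))
  have hxH : ∀ j, x ∉ B.H j := by
    intro j hj
    have h := B.node_H (σ j) (br σ j) j (by rw [br_len])
    rw [Set.eq_empty_iff_forall_notMem] at h
    exact h x ⟨hxIcc (j+1), hj⟩
  have hxC : x ∉ B.C := by
    intro hc
    obtain ⟨_, ⟨j, rfl⟩, hj⟩ := B.hcover hc
    exact hxH j hj
  have hxX : x ∈ X := by
    by_contra h
    exact hxC (B.hclosed ⟨hxcl, h⟩)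
  exact ⟨x, hxX, hxcl, fun n => hxIcc (n+1)⟩

/-- the closed "obstruction" set at level `n`, threshold `k`. -/
noncomputable def Abig (n k : ℕ) : Set ℝ :=
  (⋃ L ∈ {L : List ℕ | L.length = n+1 ∧ k ≤ L.headI},
    Set.Icc (B.node L).1 (B.node L).2) ∪
  {x | ∃ L : List ℕ, L.length < n+1 ∧ x = B.tpt (B.node L)}

lemma Abig_closed (n k : ℕ) : IsClosed (B.Abig n k) := by
  have key : B.Abig n k =
      (⋃ L ∈ {L : List ℕ | L.length = n+1},
        (if k ≤ L.headI then Set.Icc (B.node L).1 (B.node L).2 else ∅)) ∪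
      {x | ∃ L : List ℕ, L.length < n+1 ∧ x = B.tpt (B.node L)} := by
    rw [Abig]
    congr 1
    ext x
    simp only [Set.mem_iUnion, Set.mem_setOf_eq]
    constructor
    · rintro ⟨L, ⟨h1, h2⟩, hx⟩
      exact ⟨L, h1, by rw [if_pos h2]; exact hx⟩
    · rintro ⟨L, h1, hx⟩
      by_cases h2 : k ≤ L.headI
      · rw [if_pos h2] at hx; exact ⟨L, ⟨h1, h2⟩, hx⟩
      · rw [if_neg h2] at hx; exact absurd hx (Set.notMem_empty x)
  rw [key]
  apply B.closed_level
  intro L hL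
  constructor
  · by_cases h : k ≤ L.headI
    · rw [if_pos h]; exact isClosed_Icc
    · rw [if_neg h]; exact isClosed_empty
  · by_cases h : k ≤ L.headI
    · rw [if_pos h]
    · rw [if_neg h]; exact Set.empty_subset _

lemma Abig_anti (n : ℕ) : ∀ {k k' : ℕ}, k ≤ k' → B.Abig n k' ⊆ B.Abig n k := by
  intro k k' hkk
  rw [Abig, Abig]
  apply Set.union_subset_union_left
  intro x hx
  simp only [Set.mem_iUnion, Set.mem_setOf_eq] at hx ⊢
  obtain ⟨L, ⟨h1, h2⟩, hx⟩ := hx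
  exact ⟨L, ⟨h1, le_trans hkk h2⟩, hx⟩

lemma exists_k_not_Abig (n : ℕ) {x : ℝ} (hx : x ∉ B.C) : ∃ k, x ∉ B.Abig n k := by
  have hT : x ∉ {y | ∃ L : List ℕ, L.length < n+1 ∧ y = B.tpt (B.node L)} := by
    rintro ⟨L, _, rfl⟩
    exact hx (B.tpt_node_mem L).1
  by_cases h : ∃ L : List ℕ, L.length = n+1 ∧ x ∈ Set.Icc (B.node L).1 (B.node L).2
  · obtain ⟨L₀, hL₀, hxL₀⟩ := h
    refine ⟨L₀.headI + 1, ?_⟩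
    rintro (hmem | hmem)
    · simp only [Set.mem_iUnion, Set.mem_setOf_eq] at hmem
      obtain ⟨L, ⟨h1, h2⟩, hxL⟩ := hmem
      have hne : L ≠ L₀ := by
        intro h'; rw [h'] at h2; omega
      have hd := B.node_disj L L₀ (by rw [h1, hL₀]) hne
      rw [Set.eq_empty_iff_forall_notMem] at hd
      exact hd x ⟨hxL, hxL₀⟩
    · exact hT hmem
  · refine ⟨0, ?_⟩
    rintro (hmem | hmem)
    · simp only [Set.mem_iUnion, Set.mem_setOf_eq] at hmem
      obtain ⟨L, ⟨h1, _⟩, hxL⟩ := hmem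
      exact h ⟨L, h1, hxL⟩
    · exact hT hmem

end Bad

namespace Bad

/-- From a `Bad` witness, `X` is not Menger. -/
lemma not_menger {X : Set ℝ} (B : Bad X) : ¬ MengerSpace ↥X := by
  intro hM
  classical
  set cov : ℕ → ℕ → Set ↥X :=
    fun n k => Subtype.val ⁻¹' ((closure B.C ∩ B.Abig n k)ᶜ) with hcov
  have hcovmono : ∀ n, Monotone (cov n) := by
    intro n k k' hkk
    apply Set.preimage_mono
    apply Set.compl_subset_compl.2
    exact Set.inter_subset_inter_right _ (B.Abig_anti n hkk)
  obtain ⟨V, hV, hVU⟩ := hM (fun n => Set.range (cov n)) (by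
    intro n
    constructor
    · rintro u ⟨k, rfl⟩
      exact ((isClosed_closure.inter (B.Abig_closed n k)).isOpen_compl).preimage
        continuous_subtype_val
    · rw [Set.eq_univ_iff_forall]
      intro z
      have hzC : (z : ℝ) ∉ B.C := fun hc => (B.hCX hc) z.2
      obtain ⟨k, hk⟩ := B.exists_k_not_Abig n hzC
      exact ⟨cov n k, ⟨k, rfl⟩, fun hmem => hk hmem.2⟩)
  have hbound : ∀ n, ∃ m, ⋃₀ V n ⊆ cov n m :=
    fun n => fin_bound (hcovmono n) (V n) (hV n).2 (hV n).1
  choose g hg using hbound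
  obtain ⟨x, hxX, hxcl, hxIcc⟩ := B.branch_limit (fun n => g n + 1)
  have hz : (⟨x, hxX⟩ : ↥X) ∈ ⋃ n, ⋃₀ V n := by rw [hVU]; trivial
  rw [Set.mem_iUnion] at hz
  obtain ⟨n, hn⟩ := hz
  have hx2 := hg n hn
  apply hx2
  refine ⟨hxcl, Or.inl ?_⟩
  simp only [Set.mem_iUnion, Set.mem_setOf_eq]
  refine ⟨br (fun n => g n + 1) (n+1), ⟨br_len _ (n+1), ?_⟩, hxIcc n⟩
  show g n ≤ (br (fun n => g n + 1) (n+1)).headI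
  simp [br]

end Bad



section PartA

variable {X : Set ℝ}

lemma exists_bad (h : ¬ CompletelyBaire ↥(Xᶜ)) : Nonempty (Bad X) := by
  classical
  rw [CompletelyBaire] at h
  push_neg at h
  obtain ⟨C₀, hC₀closed, hC₀⟩ := h
  have hnb : ¬ ∀ f : ℕ → Set ↥C₀, (∀ n, IsOpen (f n)) → (∀ n, Dense (f n)) →
      Dense (⋂ n, f n) := fun hp => hC₀ ⟨hp⟩
  push_neg at hnb
  obtain ⟨f, hfo, hfd, hfnd⟩ := hnb
  set ρ : ↥C₀ → ℝ := fun z => ((z : ↥(Xᶜ)) : ℝ) with hρ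
  set E : Set ℝ := Subtype.val '' C₀ with hE
  have hrange : Set.range ρ = E := by
    rw [hρ, hE]
    have : (fun z : ↥C₀ => ((z : ↥(Xᶜ)) : ℝ)) =
        (Subtype.val : ↥(Xᶜ) → ℝ) ∘ (Subtype.val : ↥C₀ → ↥(Xᶜ)) := rfl
    rw [this, Set.range_comp, Subtype.range_val]
  -- extract open sets
  have hop : ∀ n, ∃ u : Set ℝ, IsOpen u ∧ f n = ρ ⁻¹' u := by
    intro n
    obtain ⟨s, hs, hsf⟩ := isOpen_induced_iff.1 (hfo n)
    obtain ⟨u, hu, hus⟩ := isOpen_induced_iff.1 hs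
    exact ⟨u, hu, by rw [← hsf, ← hus]; rfl⟩
  choose u hu huf using hop
  -- density transferred to ℝ
  have hdense : ∀ n, ∀ y ∈ E, y ∈ closure (E ∩ u n) := by
    intro n y hy
    obtain ⟨z, hz, rfl⟩ := hy
    have h1 : (⟨z, hz⟩ : ↥C₀) ∈ closure (f n) := (hfd n).closure_eq ▸ Set.mem_univ _
    rw [closure_subtype] at h1
    rw [closure_subtype] at h1
    have h2 : Subtype.val '' (Subtype.val '' f n) = E ∩ u n := by
      rw [Set.image_image]
      have : (fun z : ↥C₀ => ((z : ↥(Xᶜ)) : ℝ)) '' (f n) = ρ '' (ρ ⁻¹' (u n)) := by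
        rw [← huf n]
      rw [this, Set.image_preimage_eq_inter_range, hrange, Set.inter_comm]
    rw [h2] at h1
    exact h1
  -- non-density: a witness point and open set
  have hnd : ∃ z₀ : ↥C₀, z₀ ∉ closure (⋂ n, f n) := by
    by_contra hc
    push_neg at hc
    exact hfnd (fun z => hc z)
  obtain ⟨z₀, hz₀⟩ := hnd
  rw [closure_subtype, closure_subtype] at hz₀
  set w : Set ℝ := (closure (Subtype.val '' (Subtype.val '' (⋂ n, f n))))ᶜ with hw
  have hwopen : IsOpen w := isClosed_closure.isOpen_compl
  have he₀E : ρ z₀ ∈ E := hrange ▸ Set.mem_range_self _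
  have he₀w : ρ z₀ ∈ w := hz₀
  have hmeager : E ∩ w ∩ ⋂ n, u n = ∅ := by
    rw [Set.eq_empty_iff_forall_notMem]
    rintro y ⟨⟨hyE, hyw⟩, hyu⟩
    rw [← hrange] at hyE
    obtain ⟨yy, rfl⟩ := hyE
    apply hyw
    apply subset_closure
    have : yy ∈ ⋂ n, f n := by
      rw [Set.mem_iInter]
      intro n
      rw [huf n]
      exact Set.mem_iInter.1 hyu n
    exact ⟨_, ⟨yy, this, rfl⟩, rfl⟩
  have hEX : E ⊆ Xᶜ := by
    rintro x ⟨z, _, rfl⟩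
    exact z.2
  have hEcl : closure E ∩ Xᶜ ⊆ E := by
    obtain ⟨F, hF, hFC₀⟩ := isClosed_induced_iff.1 hC₀closed
    have hEF : E = F ∩ Xᶜ := by
      rw [hE, ← hFC₀, Set.image_preimage_eq_inter_range, Subtype.range_val, Set.inter_comm]
    rintro x ⟨hx1, hx2⟩
    rw [hEF]
    exact ⟨(hF.closure_eq ▸ closure_mono (hEF ▸ Set.inter_subset_left) hx1 :), hx2⟩
  -- the Bad structure
  set C : Set ℝ := closure (E ∩ w) ∩ Xᶜ with hC
  set H : ℕ → Set ℝ := fun n => match n with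
    | 0 => wᶜ
    | (m+1) => closure (E \ u m) with hH
  have hCE : C ⊆ E := by
    rintro y ⟨hy1, hy2⟩
    exact hEcl ⟨closure_mono Set.inter_subset_left hy1, hy2⟩
  -- the approximation claim
  have claim1 : ∀ (j : ℕ) (y : ℝ), y ∈ closure (E ∩ w) → ∀ ε > 0,
      ∃ z, z ∈ E ∩ w ∧ |z - y| < ε ∧ ∀ i < j, z ∈ u i := by
    intro j
    induction j with
    | zero =>
        intro y hy ε hε
        rw [Metric.mem_closure_iff] at hy
        obtain ⟨z, hz, hdist⟩ := hy ε hε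
        refine ⟨z, hz, ?_, by omega⟩
        rw [Real.dist_eq, abs_sub_comm] at hdist
        exact hdist
    | succ j ih =>
        intro y hy ε hε
        obtain ⟨z, hzEw, hzy, hzu⟩ := ih y hy ε hε
        set O : Set ℝ := w ∩ Metric.ball y ε ∩ ⋂ i ∈ Finset.range j, u i with hO
        have hOopen : IsOpen O :=
          (hwopen.inter Metric.isOpen_ball).inter
            (isOpen_biInter_finset (fun i _ => hu i))
        have hzO : z ∈ O := by
          refine ⟨⟨hzEw.2, ?_⟩, ?_⟩
          · rw [Metric.mem_ball, Real.dist_eq]; exact hzy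
          · simp only [Set.mem_iInter, Finset.mem_range]
            exact fun i hi => hzu i hi
        have hzcl : z ∈ closure (E ∩ u j) := hdense j z hzEw.1
        rw [mem_closure_iff] at hzcl
        obtain ⟨z', hz'O, hz'Eu⟩ := hzcl O hOopen hzO
        refine ⟨z', ⟨hz'Eu.1, hz'O.1.1⟩, ?_, ?_⟩
        · have := hz'O.1.2
          rw [Metric.mem_ball, Real.dist_eq] at this
          exact this
        · intro i hi
          rcases Nat.lt_succ_iff_lt_or_eq.1 hi with h' | h'
          · have := hz'O.2
            simp only [Set.mem_iInter, Finset.mem_range] at this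
            exact this i h'
          · rw [h']; exact hz'Eu.2
  have hHclosed : ∀ j, IsClosed (H j) := by
    intro j
    match j with
    | 0 => exact hwopen.isClosed_compl
    | (m+1) => exact isClosed_closure
  refine ⟨⟨C, H, ⟨ρ z₀, subset_closure ⟨he₀E, he₀w⟩, hEX he₀E⟩, Set.inter_subset_right, ?_, ?_, ?_⟩⟩
  · -- hclosed
    rintro x ⟨hx1, hx2⟩
    refine ⟨?_, hx2⟩
    have : closure C ⊆ closure (E ∩ w) := by
      rw [← (isClosed_closure (s := E ∩ w)).closure_eq]
      exact closure_mono Set.inter_subset_left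
    exact this hx1
  · -- hcover
    intro y hy
    have hyE : y ∈ E := hCE hy
    by_cases hyw : y ∈ w
    · have : ∃ n, y ∉ u n := by
        by_contra hc
        push_neg at hc
        rw [Set.eq_empty_iff_forall_notMem] at hmeager
        exact hmeager y ⟨⟨hyE, hyw⟩, Set.mem_iInter.2 hc⟩
      obtain ⟨n, hn⟩ := this
      exact Set.mem_iUnion.2 ⟨n + 1, subset_closure ⟨hyE, hn⟩⟩
    · exact Set.mem_iUnion.2 ⟨0, hyw⟩
  · -- step
    intro n a b η hab hne' hη
    obtain ⟨c, hcC, hcI⟩ := hne'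
    have hcy : c ∈ closure (E ∩ w) := hcC.1
    have hε : 0 < min (c - a) (b - c) := by
      simp only [lt_min_iff]
      exact ⟨by linarith [hcI.1], by linarith [hcI.2]⟩
    obtain ⟨z, hzEw, hzc, hzu⟩ := claim1 n c hcy _ hε
    have hzc' := abs_lt.1 hzc
    have hza : a < z := by
      have := min_le_left (c - a) (b - c)
      linarith [hzc'.1]
    have hzb : z < b := by
      have := min_le_right (c - a) (b - c)
      linarith [hzc'.2]
    have hzC : z ∈ C := ⟨subset_closure hzEw, hEX hzEw.1⟩
    have hzH : ∀ j ≤ n, z ∉ H j := by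
      intro j hj
      match j with
      | 0 => exact fun hmem => hmem hzEw.2
      | (m+1) =>
          intro hmem
          have hsub : closure (E \ u m) ⊆ (u m)ᶜ :=
            closure_minimal (fun x hx => hx.2) (hu m).isClosed_compl
          exact hsub hmem (hzu m (by omega))
    set Bset : Set ℝ := ⋃ j ∈ Finset.range (n+1), H j with hBset
    have hBclosed : IsClosed Bset :=
      (Finset.range (n+1)).finite_toSet.isClosed_biUnion (fun j _ => hHclosed j)
    have hzB : z ∈ Bsetᶜ := by
      simp only [Set.mem_compl_iff, hBset, Set.mem_iUnion, Finset.mem_range]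
      rintro ⟨j, hj, hjz⟩
      exact hzH j (by omega) hjz
    obtain ⟨δ, hδ, hball⟩ := Metric.isOpen_iff.1 hBclosed.isOpen_compl z hzB
    set ε' : ℝ := min δ η / 2 with hε'
    have hε'pos : 0 < ε' := by
      rw [hε']
      have : 0 < min δ η := lt_min hδ hη
      linarith
    refine ⟨(max ((a + z)/2) (z - ε'), min ((z + b)/2) (z + ε')), ?_, ?_, ?_, ?_, ?_, ?_⟩
    · simp only [lt_max_iff]
      left; linarith
    · show max ((a + z)/2) (z - ε') < min ((z + b)/2) (z + ε')
      have h1 : max ((a + z)/2) (z - ε') < z := by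
        rw [max_lt_iff]; exact ⟨by linarith, by linarith⟩
      have h2 : z < min ((z + b)/2) (z + ε') := by
        rw [lt_min_iff]; exact ⟨by linarith, by linarith⟩
      linarith
    · show min ((z + b)/2) (z + ε') < b
      simp only [min_lt_iff]
      left; linarith
    · show min ((z + b)/2) (z + ε') - max ((a + z)/2) (z - ε') ≤ η
      have h1 : z - ε' ≤ max ((a + z)/2) (z - ε') := le_max_right _ _
      have h2 : min ((z + b)/2) (z + ε') ≤ z + ε' := min_le_right _ _
      have h3 : min δ η ≤ η := min_le_right _ _
      rw [hε'] at h1 h2 ⊢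
      linarith
    · refine ⟨z, hzC, ?_, ?_⟩
      · show max ((a + z)/2) (z - ε') < z
        rw [max_lt_iff]; exact ⟨by linarith, by linarith⟩
      · show z < min ((z + b)/2) (z + ε')
        rw [lt_min_iff]; exact ⟨by linarith, by linarith⟩
    · intro j hj
      rw [Set.eq_empty_iff_forall_notMem]
      rintro y ⟨hy1, hy2⟩
      have hyz : |y - z| < δ := by
        obtain ⟨hl, hr⟩ := hy1
        have h1 : z - ε' ≤ max ((a + z)/2) (z - ε') := le_max_right _ _
        have h2 : min ((z + b)/2) (z + ε') ≤ z + ε' := min_le_right _ _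
        have h3 : min δ η ≤ δ := min_le_left _ _
        rw [abs_lt]
        constructor
        · rw [hε'] at h1; linarith
        · rw [hε'] at h2; linarith
      have : y ∈ Bsetᶜ := hball (by rw [Metric.mem_ball, Real.dist_eq]; exact hyz)
      apply this
      simp only [hBset, Set.mem_iUnion, Finset.mem_range]
      exact ⟨j, by omega, hy2⟩

end PartA

theorem menger_complement_completelyBaire (X : Set ℝ) (hX : MengerSpace X) :
    CompletelyBaire ↥(Xᶜ) := by
  by_contra h
  obtain ⟨B⟩ := exists_bad h
  exact B.not_menger hX
end

section
/- A nonempty Polish space that is nowhere locally compact and zero-dimensional is homeomorphic to the Baire space ℕ^ℕ (equivalently, to the space of irrational numbers). -/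
open Set Metric TopologicalSpace Function

/-- In a complete, second countable, zero-dimensional metric space where no point has a
compact neighborhood, every nonempty clopen set can be partitioned into an `ℕ`-indexed
family of nonempty clopen sets of diameter at most `ε`. -/
theorem au_partition {X : Type*} [MetricSpace X] [CompleteSpace X] [SecondCountableTopology X]
    (hNLC : ∀ x : X, ¬∃ s ∈ nhds x, IsCompact s)
    {B : Set (Set X)} (hB : IsTopologicalBasis B) (hBc : ∀ s ∈ B, IsClopen s)
    (U : Set X) (hU : IsClopen U) (hne : U.Nonempty) (ε : ℝ) (hε : 0 < ε) :
    ∃ D : ℕ → Set X, (∀ n, IsClopen (D n)) ∧ (∀ n, (D n).Nonempty) ∧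
      Pairwise (Function.onFun Disjoint D) ∧ (⋃ n, D n) = U ∧
      ∀ n, EMetric.diam (D n) ≤ ENNReal.ofReal ε := by
  -- U is not compact
  have hcomp : ¬ IsCompact U := by
    intro h
    obtain ⟨x, hx⟩ := hne
    exact hNLC x ⟨U, hU.isOpen.mem_nhds hx, h⟩
  -- U is not totally bounded
  have htb : ¬ TotallyBounded U := by
    intro h
    exact hcomp (isCompact_iff_totallyBounded_isComplete.2 ⟨h, hU.isClosed.isComplete⟩)
  rw [Metric.totallyBounded_iff] at htb
  push_neg at htb
  obtain ⟨ε', hε', hcover⟩ := htb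
  set δ : ℝ := min (ε / 2) (ε' / 3) with hδdef
  have hδ : 0 < δ := lt_min (by linarith) (by linarith)
  -- the collection of small clopen basis subsets of U
  set V : Set (Set X) := {b ∈ B | b ⊆ U ∧ EMetric.diam b ≤ ENNReal.ofReal (2 * δ)} with hVdef
  have hVopen : ∀ s ∈ V, IsOpen s := fun s hs => (hBc s hs.1).isOpen
  have hVU : ⋃₀ V = U := by
    apply subset_antisymm
    · exact sUnion_subset fun s hs => hs.2.1
    · intro x hx
      obtain ⟨b, hbB, hxb, hbsub⟩ := hB.exists_subset_of_mem_open
        (show x ∈ U ∩ ball x δ from ⟨hx, mem_ball_self hδ⟩)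
        (hU.isOpen.inter isOpen_ball)
      refine ⟨b, ⟨hbB, fun y hy => (hbsub hy).1, ?_⟩, hxb⟩
      apply EMetric.diam_le
      intro y hy z hz
      have h1 : dist y z ≤ 2 * δ := by
        have := (hbsub hy).2
        have := (hbsub hz).2
        rw [mem_ball] at *
        calc dist y z ≤ dist y x + dist x z := dist_triangle _ _ _
          _ ≤ δ + δ := by
              rw [dist_comm x z] at *
              exact add_le_add (le_of_lt ‹dist y x < δ›) (le_of_lt ‹dist z x < δ›)
          _ = 2 * δ := by ring
      rw [edist_dist]
      exact ENNReal.ofReal_le_ofReal h1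
  obtain ⟨T, hTc, hTV, hTU⟩ := isOpen_sUnion_countable V hVopen
  rw [hVU] at hTU
  have hTne : T.Nonempty := by
    rcases T.eq_empty_or_nonempty with h | h
    · exfalso; rw [h] at hTU; simp at hTU; exact hne.ne_empty hTU.symm
    · exact h
  obtain ⟨C, hC⟩ := hTc.exists_eq_range hTne
  have hCmem : ∀ n, C n ∈ V := fun n => hTV (hC ▸ mem_range_self n)
  have hCclopen : ∀ n, IsClopen (C n) := fun n => hBc _ (hCmem n).1
  have hCU : ∀ n, C n ⊆ U := fun n => (hCmem n).2.1
  have hCdiam : ∀ n, EMetric.diam (C n) ≤ ENNReal.ofReal (2 * δ) := fun n => (hCmem n).2.2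
  have hCunion : (⋃ n, C n) = U := by
    rw [← hTU, hC, sUnion_range]
  -- disjointify
  set D' : ℕ → Set X := fun n => C n \ ⋃ m ∈ Finset.range n, C m with hD'def
  have hD'clopen : ∀ n, IsClopen (D' n) :=
    fun n => (hCclopen n).diff (isClopen_biUnion_finset fun m _ => hCclopen m)
  have hD'sub : ∀ n, D' n ⊆ C n := fun n => diff_subset
  have hD'disj : Pairwise (Function.onFun Disjoint D') := by
    intro m n hmn
    wlog h : m < n generalizing m n
    · exact (this hmn.symm (by omega)).symm
    refine Set.disjoint_left.2 fun x hxm hxn => ?_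
    exact hxn.2 (mem_biUnion (Finset.mem_range.2 h) hxm.1)
  have hD'union : (⋃ n, D' n) = U := by
    apply subset_antisymm
    · exact iUnion_subset fun n => (hD'sub n).trans (hCU n)
    · rw [← hCunion]
      intro x hx
      classical
      have hxex : ∃ n, x ∈ C n := mem_iUnion.1 hx
      refine mem_iUnion.2 ⟨Nat.find hxex, Nat.find_spec hxex, fun hmem => ?_⟩
      simp only [mem_iUnion, Finset.mem_range, exists_prop] at hmem
      obtain ⟨m, hm1, hm2⟩ := hmem
      exact Nat.find_min hxex hm1 hm2
  have hD'diam : ∀ n, EMetric.diam (D' n) ≤ ENNReal.ofReal ε := fun n =>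
    le_trans (EMetric.diam_mono (hD'sub n)) <| (hCdiam n).trans <|
      ENNReal.ofReal_le_ofReal (by
        have : δ ≤ ε / 2 := min_le_left _ _
        linarith)
  -- infinitely many pieces are nonempty
  set S : Set ℕ := {n | (D' n).Nonempty} with hSdef
  have hSinf : S.Infinite := by
    intro hSfin
    classical
    have : Nonempty X := ⟨hne.choose⟩
    choose! y hy using fun n (h : n ∈ S) => h
    refine hcover (y '' S) (hSfin.image y) fun x hx => ?_
    rw [← hD'union] at hx
    obtain ⟨n, hn⟩ := mem_iUnion.1 hx
    have hnS : n ∈ S := ⟨x, hn⟩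
    refine mem_biUnion (mem_image_of_mem y hnS) ?_
    rw [mem_ball]
    have hyn : y n ∈ D' n := hy n hnS
    have : edist x (y n) ≤ ENNReal.ofReal (2 * δ) :=
      le_trans (EMetric.edist_le_diam_of_mem hn hyn) ((EMetric.diam_mono (hD'sub n)).trans (hCdiam n))
    have hd : dist x (y n) ≤ 2 * δ := by
      rw [edist_dist] at this
      exact (ENNReal.ofReal_le_ofReal_iff (by linarith)).1 this
    have : 2 * δ ≤ 2 * (ε' / 3) := by
      have : δ ≤ ε' / 3 := min_le_right _ _
      linarith
    calc dist x (y n) ≤ 2 * (ε' / 3) := by linarith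
      _ < ε' := by linarith
  -- reindex the nonempty pieces
  have hSinf' : {n | (fun n => n ∈ S) n}.Infinite := hSinf
  refine ⟨fun k => D' (Nat.nth (· ∈ S) k), fun k => hD'clopen _, fun k => ?_, ?_, ?_, fun k => hD'diam _⟩
  · exact Nat.nth_mem_of_infinite hSinf' k
  · exact fun j k hjk => hD'disj ((Nat.nth_injective hSinf').ne hjk)
  · apply subset_antisymm
    · exact iUnion_subset fun k => ((hD'sub _).trans (hCU _))
    · rw [← hD'union]
      refine iUnion_subset fun n x hx => ?_
      have hnS : n ∈ S := ⟨x, hx⟩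
      obtain ⟨k, -, hk⟩ := Nat.exists_lt_card_nth_eq hnS
      exact mem_iUnion.2 ⟨k, hk ▸ hx⟩

theorem au_scheme {X : Type*} [MetricSpace X] [CompleteSpace X] [SecondCountableTopology X]
    [Nonempty X]
    (hNLC : ∀ x : X, ¬∃ s ∈ nhds x, IsCompact s)
    {B : Set (Set X)} (hB : IsTopologicalBasis B) (hBc : ∀ s ∈ B, IsClopen s) :
    ∃ A : List ℕ → Set X,
      A [] = univ ∧ (∀ l, IsClopen (A l)) ∧ (∀ l, (A l).Nonempty) ∧
      (∀ l, (⋃ a, A (a :: l)) = A l) ∧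
      (∀ l : List ℕ, Pairwise fun a b => Disjoint (A (a :: l)) (A (b :: l))) ∧
      (∀ (l : List ℕ) (a : ℕ),
        EMetric.diam (A (a :: l)) ≤ ENNReal.ofReal ((1 / 2 : ℝ) ^ (l.length + 1))) := by
  choose D hD1 hD2 hD3 hD4 hD5 using
    fun (U : Set X) (hU : IsClopen U) (hn : U.Nonempty) (n : ℕ) =>
      au_partition hNLC hB hBc U hU hn ((1 / 2 : ℝ) ^ (n + 1)) (by positivity)
  let g : List ℕ → {V : Set X // IsClopen V ∧ V.Nonempty} := fun l =>
    List.rec ⟨univ, isClopen_univ, univ_nonempty⟩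
      (fun a l ih => ⟨D ih.1 ih.2.1 ih.2.2 l.length a,
        hD1 ih.1 ih.2.1 ih.2.2 l.length a, hD2 ih.1 ih.2.1 ih.2.2 l.length a⟩) l
  refine ⟨fun l => (g l).1, rfl, fun l => (g l).2.1, fun l => (g l).2.2, fun l => ?_,
    fun l => ?_, fun l a => ?_⟩
  · exact hD4 (g l).1 (g l).2.1 (g l).2.2 l.length
  · exact hD3 (g l).1 (g l).2.1 (g l).2.2 l.length
  · exact hD5 (g l).1 (g l).2.1 (g l).2.2 l.length a

open Filter in
theorem au_main {X : Type*} [MetricSpace X] [CompleteSpace X] [SecondCountableTopology X]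
    [Nonempty X]
    (hNLC : ∀ x : X, ¬∃ s ∈ nhds x, IsCompact s)
    (hZD : ∃ B : Set (Set X), IsTopologicalBasis B ∧ ∀ s ∈ B, IsClopen s) :
    Nonempty (X ≃ₜ (ℕ → ℕ)) := by
  classical
  obtain ⟨B, hB, hBc⟩ := hZD
  obtain ⟨A, hA0, hAc, hAne, hAun, hAdisj, hAdiam⟩ := au_scheme hNLC hB hBc
  have hAnti : CantorScheme.Antitone A := fun l a => by
    conv_rhs => rw [← hAun l]
    exact subset_iUnion (fun a => A (a :: l)) a
  have hdisj : CantorScheme.Disjoint A := hAdisj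
  have hdiam : CantorScheme.VanishingDiam A := by
    intro x
    have hupper : Tendsto (fun n : ℕ => ENNReal.ofReal ((1 / 2 : ℝ) ^ n)) atTop (nhds 0) := by
      rw [← ENNReal.ofReal_zero]
      exact ENNReal.tendsto_ofReal
        (tendsto_pow_atTop_nhds_zero_of_lt_one (by norm_num) (by norm_num))
    refine tendsto_of_tendsto_of_tendsto_of_le_of_le' tendsto_const_nhds hupper
      (Eventually.of_forall fun n => zero_le) ?_
    filter_upwards [eventually_ge_atTop 1] with n hn
    obtain ⟨m, rfl⟩ : ∃ m, n = m + 1 := ⟨n - 1, by omega⟩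
    rw [PiNat.res_succ]
    have := hAdiam (PiNat.res x m) (x m)
    rwa [PiNat.res_length] at this
  have hdom : (CantorScheme.inducedMap A).1 = univ :=
    CantorScheme.ClosureAntitone.map_of_vanishingDiam hdiam
      (hAnti.closureAntitone fun l => (hAc l).isClosed) hAne
  let f : (ℕ → ℕ) → X := fun x => (CantorScheme.inducedMap A).2 ⟨x, by rw [hdom]; trivial⟩
  have hfmem : ∀ (x : ℕ → ℕ) (n : ℕ), f x ∈ A (PiNat.res x n) := fun x n =>
    CantorScheme.map_mem _ n
  have hfcont : Continuous f :=
    (CantorScheme.VanishingDiam.map_continuous hdiam).comp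
      (Continuous.subtype_mk continuous_id _)
  have hfinj : Function.Injective f := by
    intro x y hxy
    simpa using CantorScheme.Disjoint.map_injective hdisj hxy
  -- the branch map
  let pick : X → List ℕ → ℕ := fun x l => if h : ∃ a, x ∈ A (a :: l) then h.choose else 0
  have hpick : ∀ (x : X) (l : List ℕ), x ∈ A l → x ∈ A (pick x l :: l) := by
    intro x l hx
    have h : ∃ a, x ∈ A (a :: l) := by
      rw [← hAun l] at hx
      exact mem_iUnion.1 hx
    simp only [pick, dif_pos h]
    exact h.choose_spec
  let r : X → ℕ → List ℕ := fun x n => Nat.rec [] (fun _ ih => pick x ih :: ih) n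
  let b : X → ℕ → ℕ := fun x n => pick x (r x n)
  have hres : ∀ (x : X) (n : ℕ), PiNat.res (b x) n = r x n := by
    intro x n
    induction n with
    | zero => rfl
    | succ n ih => rw [PiNat.res_succ, ih]
  have hmemb : ∀ (x : X) (n : ℕ), x ∈ A (r x n) := by
    intro x n
    induction n with
    | zero => rw [show r x 0 = [] from rfl, hA0]; trivial
    | succ n ih => exact hpick x (r x n) ih
  have hmemb' : ∀ (x : X) (n : ℕ), x ∈ A (PiNat.res (b x) n) := fun x n =>
    (hres x n) ▸ hmemb x n
  have hfb : ∀ x : X, f (b x) = x := by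
    intro x
    have hd : ∀ ε > (0 : ℝ), dist (f (b x)) x < ε := by
      intro ε hε
      obtain ⟨n, hn⟩ := hdiam.dist_lt ε hε (b x)
      exact hn _ (hfmem (b x) n) _ (hmemb' x n)
    by_contra hne'
    exact absurd (hd _ (dist_pos.2 fun h => hne' h)) (lt_irrefl _)
  -- distinct nodes at the same depth are disjoint
  have hdisj' : ∀ l₁ l₂ : List ℕ, l₁.length = l₂.length → l₁ ≠ l₂ → Disjoint (A l₁) (A l₂) := by
    intro l₁
    induction l₁ with
    | nil =>
      intro l₂ hlen hne'
      cases l₂ with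
      | nil => exact absurd rfl hne'
      | cons c m => simp at hlen
    | cons a l ih =>
      intro l₂ hlen hne'
      cases l₂ with
      | nil => simp at hlen
      | cons c m =>
        simp only [List.length_cons, Nat.add_right_cancel_iff] at hlen
        by_cases hlm : l = m
        · subst hlm
          have hac : a ≠ c := by
            intro h
            exact hne' (by rw [h])
          exact hAdisj l hac
        · exact (ih m hlen hlm).mono (hAnti l a) (hAnti m c)
  have huniq : ∀ (x : X) (l : List ℕ), x ∈ A l → PiNat.res (b x) l.length = l := by
    intro x l hx
    by_contra hne'
    exact Set.disjoint_left.1 (hdisj' _ _ (PiNat.res_length _ _) hne') (hmemb' x l.length) hx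
  have hbcont : Continuous b := by
    refine continuous_pi fun n => ?_
    rw [continuous_discrete_rng]
    intro a
    have heq : (fun x => b x n) ⁻¹' {a} = ⋃ l : {l : List ℕ // l.length = n}, A (a :: l.1) := by
      ext x
      simp only [mem_preimage, mem_singleton_iff, mem_iUnion]
      constructor
      · intro h
        refine ⟨⟨PiNat.res (b x) n, PiNat.res_length _ _⟩, ?_⟩
        have := hmemb' x (n + 1)
        rwa [PiNat.res_succ, h] at this
      · rintro ⟨⟨l, hl⟩, hx⟩
        have h2 := huniq x (a :: l) hx
        rw [List.length_cons, hl, PiNat.res_succ] at h2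
        exact (List.cons.injEq _ _ _ _ ▸ h2).1
    rw [heq]
    exact isOpen_iUnion fun l => (hAc _).isOpen
  exact ⟨{ toFun := b, invFun := f, left_inv := hfb,
           right_inv := fun y => hfinj (hfb (f y)),
           continuous_toFun := hbcont, continuous_invFun := hfcont }⟩

/-- Alexandrov–Urysohn: a nonempty Polish, nowhere locally compact, zero-dimensional
space is homeomorphic to the Baire space ℕ^ℕ. -/
theorem alexandrov_urysohn (X : Type*) [TopologicalSpace X] [Nonempty X]
    (hPolish : PolishSpace X)
    (hNLC : ∀ x : X, ¬∃ s ∈ nhds x, IsCompact s)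
    (hZD : ∃ B : Set (Set X), TopologicalSpace.IsTopologicalBasis B ∧ ∀ s ∈ B, IsClopen s) :
    Nonempty (X ≃ₜ (ℕ → ℕ)) := by
  letI := hPolish
  letI := upgradeIsCompletelyMetrizable X
  exact au_main hNLC hZD
end

section
/- The product of a Menger space with a σ-compact space is Menger. -/
theorem menger_prod_sigmaCompact {X Y : Type*} [TopologicalSpace X] [TopologicalSpace Y]
    (hX : MengerSpace X) [SigmaCompactSpace Y] : MengerSpace (X × Y) := by
  classical
  intro U hU
  set K : ℕ → Set Y := compactCovering Y with hK
  -- pairing of ℕ with ℕ × ℕ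
  let c : ℕ × ℕ ≃ ℕ := (Denumerable.eqv (ℕ × ℕ))
  -- auxiliary covers of X
  set W : ℕ → ℕ → Set (Set X) := fun m j =>
    {O | IsOpen O ∧ ∃ F : Set (Set (X × Y)), F ⊆ U (c (m, j)) ∧ F.Finite ∧
      O ×ˢ K m ⊆ ⋃₀ F} with hW
  -- each W m j is an open cover of X
  have hWcover : ∀ m j, (∀ u ∈ W m j, IsOpen u) ∧ ⋃₀ W m j = Set.univ := by
    intro m j
    refine ⟨fun u hu => hu.1, ?_⟩
    apply Set.eq_univ_of_forall
    intro x
    -- {x} ×ˢ K m is compact, contained in ⋃₀ U (c (m,j))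
    have hcomp : IsCompact (({x} : Set X) ×ˢ K m) :=
      isCompact_singleton.prod (isCompact_compactCovering Y m)
    have hsub : ({x} : Set X) ×ˢ K m ⊆ ⋃ u : U (c (m, j)), (u : Set (X × Y)) := by
      rw [← Set.sUnion_eq_iUnion, (hU (c (m, j))).2]; exact Set.subset_univ _
    obtain ⟨t, ht⟩ := hcomp.elim_finite_subcover (fun u : U (c (m, j)) => (u : Set (X × Y)))
      (fun u => (hU _).1 u u.2) hsub
    set F : Set (Set (X × Y)) := (fun u : U (c (m, j)) => (u : Set (X × Y))) '' ↑t with hF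
    have hFU : F ⊆ U (c (m, j)) := by rintro f ⟨u, -, rfl⟩; exact u.2
    have hFfin : F.Finite := t.finite_toSet.image _
    have hFopen : IsOpen (⋃₀ F) :=
      isOpen_sUnion fun f hf => (hU _).1 f (hFU hf)
    have hsub' : ({x} : Set X) ×ˢ K m ⊆ ⋃₀ F := by
      refine ht.trans ?_
      intro z hz
      simp only [Set.mem_iUnion] at hz
      obtain ⟨u, hu, hz⟩ := hz
      exact ⟨u, ⟨u, hu, rfl⟩, hz⟩
    obtain ⟨u, v, huo, hvo, hxu, hKv, huv⟩ :=
      generalized_tube_lemma isCompact_singleton (isCompact_compactCovering Y m) hFopen hsub'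
    refine ⟨u, ⟨huo, F, hFU, hFfin, ?_⟩, hxu rfl⟩
    exact (Set.prod_mono le_rfl hKv).trans huv
  -- apply Menger of X for each m
  have hG : ∀ m, ∃ G : ℕ → Set (Set X), (∀ j, G j ⊆ W m j ∧ (G j).Finite) ∧
      (⋃ j, ⋃₀ G j) = Set.univ := fun m => hX (W m) (hWcover m)
  choose G hGsub hGcover using hG
  -- choose finite families for each chosen open set
  have pick : ∀ m j (O : Set X), O ∈ W m j → ∃ F : Set (Set (X × Y)),
      F ⊆ U (c (m, j)) ∧ F.Finite ∧ O ×ˢ K m ⊆ ⋃₀ F := fun m j O hO => hO.2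
  let F : ℕ → ℕ → Set X → Set (Set (X × Y)) := fun m j O =>
    if h : O ∈ W m j then (pick m j O h).choose else ∅
  have hFspec : ∀ m j O (h : O ∈ W m j),
      F m j O ⊆ U (c (m, j)) ∧ (F m j O).Finite ∧ O ×ˢ K m ⊆ ⋃₀ F m j O := by
    intro m j O h
    simp only [F, dif_pos h]
    exact (pick m j O h).choose_spec
  refine ⟨fun n => ⋃ O ∈ G (c.symm n).1 (c.symm n).2, F (c.symm n).1 (c.symm n).2 O, ?_, ?_⟩
  · intro n
    constructor
    · intro f hf
      simp only [Set.mem_iUnion] at hf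
      obtain ⟨O, hO, hf⟩ := hf
      have hOW := (hGsub (c.symm n).1 (c.symm n).2).1 hO
      have := (hFspec _ _ O hOW).1 hf
      rwa [Equiv.apply_symm_apply] at this
    · refine Set.Finite.biUnion ((hGsub (c.symm n).1 (c.symm n).2).2) ?_
      intro O hO
      exact (hFspec _ _ O ((hGsub (c.symm n).1 (c.symm n).2).1 hO)).2.1
  · apply Set.eq_univ_of_forall
    rintro ⟨x, y⟩
    obtain ⟨m, hym⟩ : ∃ m, y ∈ K m := by
      have := iUnion_compactCovering Y
      have : y ∈ ⋃ m, compactCovering Y m := this ▸ Set.mem_univ y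
      simpa using this
    have hx : x ∈ ⋃ j, ⋃₀ G m j := (hGcover m) ▸ Set.mem_univ x
    simp only [Set.mem_iUnion, Set.mem_sUnion] at hx
    obtain ⟨j, O, hOG, hxO⟩ := hx
    have hOW := (hGsub m j).1 hOG
    have hxy : (x, y) ∈ ⋃₀ F m j O := (hFspec m j O hOW).2.2 ⟨hxO, hym⟩
    obtain ⟨f, hfF, hxyf⟩ := hxy
    refine Set.mem_iUnion.2 ⟨c (m, j), ?_⟩
    refine ⟨f, ?_, hxyf⟩
    simp only [Set.mem_iUnion]
    exact ⟨O, by simpa [Equiv.symm_apply_apply] using hOG, by simpa [Equiv.symm_apply_apply] using hfF⟩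
end

section
/- If X is a Menger subset of the Cantor space 2^ℕ, then (2^ℕ ∖ X)^ℕ (with the product topology) is completely Baire. -/
/-- Ambient version of the Menger property for a subset of a topological space. -/
def MengerSet {P : Type*} [TopologicalSpace P] (S : Set P) : Prop :=
  ∀ U : ℕ → Set (Set P),
    (∀ n, (∀ u ∈ U n, IsOpen u) ∧ S ⊆ ⋃₀ U n) →
    ∃ V : ℕ → Set (Set P), (∀ n, V n ⊆ U n ∧ (V n).Finite) ∧ S ⊆ ⋃ n, ⋃₀ V n

variable {P : Type*} [TopologicalSpace P]

theorem MengerSpace.mengerSet {S : Set P} (h : MengerSpace ↥S) : MengerSet S := by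
  intro U hU
  set U' : ℕ → Set (Set ↥S) := fun n => (fun u => (Subtype.val : ↥S → P) ⁻¹' u) '' U n with hU'
  obtain ⟨V', hV'sub, hV'cov⟩ := h U' (by
    intro n
    constructor
    · rintro u ⟨u', hu', rfl⟩
      exact ((hU n).1 u' hu').preimage continuous_subtype_val
    · ext x
      simp only [Set.mem_univ, iff_true, Set.mem_sUnion]
      obtain ⟨u, hu, hxu⟩ := (hU n).2 x.2
      exact ⟨_, ⟨u, hu, rfl⟩, hxu⟩)
  have hch : ∀ (n : ℕ) (v : Set ↥S), ∃ u, v ∈ V' n → (u ∈ U n ∧ (Subtype.val : ↥S → P) ⁻¹' u = v) := by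
    intro n v
    by_cases hv : v ∈ V' n
    · obtain ⟨u, hu, hpre⟩ := (hV'sub n).1 hv
      exact ⟨u, fun _ => ⟨hu, hpre⟩⟩
    · exact ⟨∅, fun h => absurd h hv⟩
  choose g hg using hch
  refine ⟨fun n => g n '' V' n, ?_, ?_⟩
  · intro n
    constructor
    · rintro u ⟨v, hv, rfl⟩
      exact (hg n v hv).1
    · exact ((hV'sub n).2).image _
  · intro x hx
    have : (⟨x, hx⟩ : ↥S) ∈ ⋃ n, ⋃₀ V' n := hV'cov ▸ Set.mem_univ _
    obtain ⟨_, ⟨n, rfl⟩, v, hv, hxv⟩ := this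
    refine Set.mem_iUnion.2 ⟨n, Set.mem_sUnion.2 ⟨g n v, ⟨v, hv, rfl⟩, ?_⟩⟩
    have := (hg n v hv).2
    rw [← this] at hxv
    exact hxv

theorem IsCompact.mengerSet {S : Set P} (h : IsCompact S) : MengerSet S := by
  intro U hU
  obtain ⟨t, htU, htfin, htcov⟩ := h.elim_finite_subcover_image (fun u hu => (hU 0).1 u hu)
    (by rw [← Set.sUnion_eq_biUnion]; exact (hU 0).2)
  refine ⟨fun n => if n = 0 then t else ∅, ?_, ?_⟩
  · intro n
    by_cases hn : n = 0 <;> simp [hn, htU, htfin]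
  · intro x hx
    refine Set.mem_iUnion.2 ⟨0, ?_⟩
    simpa using htcov hx

/-- A relatively closed subset of a Menger set is Menger. -/
theorem MengerSet.inter_closed {S : Set P} (h : MengerSet S) {F : Set P} (hF : IsClosed F) :
    MengerSet (S ∩ F) := by
  intro U hU
  obtain ⟨V, hVsub, hVcov⟩ := h (fun n => insert Fᶜ (U n)) (by
    intro n
    refine ⟨?_, ?_⟩
    · rintro u (rfl | hu)
      · exact hF.isOpen_compl
      · exact (hU n).1 u hu
    · intro x hx
      by_cases hxF : x ∈ F
      · obtain ⟨u, hu, hxu⟩ := (hU n).2 ⟨hx, hxF⟩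
        exact ⟨u, Set.mem_insert_of_mem _ hu, hxu⟩
      · exact ⟨Fᶜ, Set.mem_insert _ _, hxF⟩)
  refine ⟨fun n => V n \ {Fᶜ}, fun n => ⟨?_, (hVsub n).2.diff⟩, ?_⟩
  · intro u ⟨hu, hune⟩
    rcases (hVsub n).1 hu with rfl | h'
    · exact absurd rfl hune
    · exact h'
  · rintro x ⟨hxS, hxF⟩
    obtain ⟨_, ⟨n, rfl⟩, v, hv, hxv⟩ := hVcov hxS
    refine Set.mem_iUnion.2 ⟨n, ⟨v, ⟨hv, ?_⟩, hxv⟩⟩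
    rintro rfl
    exact hxv hxF

/-- Countable unions of Menger sets are Menger. -/
theorem MengerSet.iUnion {S : ℕ → Set P} (h : ∀ m, MengerSet (S m)) :
    MengerSet (⋃ m, S m) := by
  intro U hU
  have h' : ∀ m, ∃ V : ℕ → Set (Set P),
      (∀ k, V k ⊆ U (Nat.pair m k) ∧ (V k).Finite) ∧ S m ⊆ ⋃ k, ⋃₀ V k := by
    intro m
    exact h m (fun k => U (Nat.pair m k)) (fun k =>
      ⟨(hU (Nat.pair m k)).1, (Set.subset_iUnion S m).trans (hU (Nat.pair m k)).2⟩)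
  choose V hVsub hVcov using h'
  refine ⟨fun j => V j.unpair.1 j.unpair.2, ?_, ?_⟩
  · intro j
    have := hVsub j.unpair.1 j.unpair.2
    rwa [Nat.pair_unpair] at this
  · intro x hx
    obtain ⟨m, hm⟩ := Set.mem_iUnion.1 hx
    obtain ⟨_, ⟨k, rfl⟩, hk⟩ := hVcov m hm
    refine Set.mem_iUnion.2 ⟨Nat.pair m k, ?_⟩
    simpa [Nat.unpair_pair] using hk

theorem MengerSet.union {S T : Set P} (hS : MengerSet S) (hT : MengerSet T) :
    MengerSet (S ∪ T) := by
  have : S ∪ T = ⋃ m : ℕ, (if m = 0 then S else T) := by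
    ext x
    simp only [Set.mem_union, Set.mem_iUnion]
    constructor
    · rintro (h | h)
      exacts [⟨0, by simpa using h⟩, ⟨1, by simpa using h⟩]
    · rintro ⟨m, hm⟩
      by_cases h0 : m = 0
      · left; simpa [h0] using hm
      · right; simpa [h0] using hm
  rw [this]
  exact MengerSet.iUnion (fun m => by by_cases h0 : m = 0 <;> simp [h0, hS, hT])


/-- The preimage of a Menger set under a continuous map from a compact space is Menger. -/
theorem MengerSet.preimage {P Q : Type*} [TopologicalSpace P] [TopologicalSpace Q]
    [CompactSpace P] [T2Space Q] {f : P → Q} (hf : Continuous f) {T : Set Q}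
    (hT : MengerSet T) : MengerSet (f ⁻¹' T) := by
  intro U hU
  have key : ∀ (n : ℕ) (q : Q), ∃ (Fq : Set (Set P)) (Oq : Set Q),
      q ∈ T → (Fq ⊆ U n ∧ Fq.Finite ∧ IsOpen Oq ∧ q ∈ Oq ∧ f ⁻¹' Oq ⊆ ⋃₀ Fq) := by
    intro n q
    by_cases hq : q ∈ T
    · have hfib : IsCompact (f ⁻¹' {q}) :=
        (isClosed_singleton.preimage hf).isCompact
      have hsub : f ⁻¹' {q} ⊆ ⋃₀ U n := by
        intro p hp
        exact (hU n).2 (by simpa [Set.mem_preimage, hp.symm ▸ hq] using hq : p ∈ f ⁻¹' T)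
      obtain ⟨Fq, hFU, hFfin, hFcov⟩ := hfib.elim_finite_subcover_image
        (fun u hu => (hU n).1 u hu) (by rwa [← Set.sUnion_eq_biUnion])
      refine ⟨Fq, (f '' (⋃₀ Fq)ᶜ)ᶜ, fun _ => ⟨hFU, hFfin, ?_, ?_, ?_⟩⟩
      · have : IsCompact (f '' (⋃₀ Fq)ᶜ) := by
          refine (IsClosed.isCompact ?_).image hf
          exact (isOpen_sUnion (fun u hu => (hU n).1 u (hFU hu))).isClosed_compl
        exact this.isClosed.isOpen_compl
      · intro hmem
        obtain ⟨p, hp, hpq⟩ := hmem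
        exact hp (by rw [← Set.sUnion_eq_biUnion] at hFcov; exact hFcov (by simp [hpq]))
      · intro p hp
        by_contra hpU
        exact hp (Set.mem_image_of_mem f hpU)
    · exact ⟨∅, ∅, fun h => absurd h hq⟩
  choose Fq Oq hkey using key
  obtain ⟨V', hV'sub, hV'cov⟩ := hT (fun n => (fun q => Oq n q) '' T) (by
    intro n
    constructor
    · rintro u ⟨q, hq, rfl⟩
      exact (hkey n q hq).2.2.1
    · intro q hq
      exact ⟨Oq n q, ⟨q, hq, rfl⟩, (hkey n q hq).2.2.2.1⟩)
  have hch : ∀ (n : ℕ) (w : Set Q), w ∈ V' n → ∃ q, q ∈ T ∧ Oq n q = w := by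
    intro n w hw
    obtain ⟨q, hq, rfl⟩ := (hV'sub n).1 hw
    exact ⟨q, hq, rfl⟩
  choose qsel hqsel1 hqsel2 using hch
  refine ⟨fun n => ⋃ (w : Set Q) (hw : w ∈ V' n), Fq n (qsel n w hw), ?_, ?_⟩
  · intro n
    constructor
    · intro u hu
      simp only [Set.mem_iUnion] at hu
      obtain ⟨w, hw, hu⟩ := hu
      exact (hkey n _ (hqsel1 n w hw)).1 hu
    · have : (⋃ (w : Set Q) (hw : w ∈ V' n), Fq n (qsel n w hw))
          = ⋃ (w : ↥(V' n)), Fq n (qsel n w.1 w.2) := by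
        ext u; simp [Set.mem_iUnion]
      show (⋃ (w : Set Q) (hw : w ∈ V' n), Fq n (qsel n w hw)).Finite
      rw [this]
      have : Finite ↥(V' n) := (hV'sub n).2
      exact Set.finite_iUnion (fun w => (hkey n _ (hqsel1 n w.1 w.2)).2.1)
  · intro x hx
    obtain ⟨_, ⟨n, rfl⟩, w, hw, hxw⟩ := hV'cov hx
    have h2 := hkey n (qsel n w hw) (hqsel1 n w hw)
    have : x ∈ f ⁻¹' Oq n (qsel n w hw) := by rw [hqsel2 n w hw]; exact hxw
    obtain ⟨u, hu, hxu⟩ := h2.2.2.2.2 this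
    refine Set.mem_iUnion.2 ⟨n, ⟨u, ?_, hxu⟩⟩
    simp only [Set.mem_iUnion]
    exact ⟨w, hw, hu⟩


open Metric

lemma step_exists {P : Type*} [MetricSpace P] {L O : Set P} {Bn : Set P}
    (hOd : L ⊆ closure O) (hOL : O ⊆ L) (hBncl : IsClosed Bn)
    (hnwd : ∀ V : Set P, IsOpen V → (V ∩ L).Nonempty → ¬(V ∩ L ⊆ Bn))
    (hiso : ∀ q ∈ O, ∀ ε > (0:ℝ), ∃ y ∈ L, y ≠ q ∧ dist y q < ε)
    (bound : ℝ) (hbound : 0 < bound)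
    (c : P) (r : ℝ) (hc : c ∈ L) (hr : 0 < r) :
    ∃ (q : P) (z : ℕ → P) (r' : ℕ → ℝ) (ρ : ℕ → ℝ),
      q ∈ O ∧ (∀ j, z j ∈ L) ∧ (∀ j, 0 < r' j) ∧ (∀ j, r' j ≤ bound) ∧
      (∀ j, Metric.ball (z j) (2 * r' j) ⊆
        (Metric.ball q (ρ j) \ Metric.closedBall q (ρ (j+1))) \ Bn) ∧
      (∀ j k, j ≤ k → ρ k ≤ ρ j) ∧
      (∀ j, Metric.ball q (ρ j) ⊆ Metric.ball c r) ∧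
      (∀ ε, 0 < ε → ∃ J, ρ J < ε) := by
  obtain ⟨q, hqO, hqd⟩ := Metric.mem_closure_iff.1 (hOd hc) r hr
  have hpick : ∀ ρ' : ℝ, 0 < ρ' → ∃ y, y ∈ L ∧ y ≠ q ∧ dist y q < ρ' := by
    intro ρ' hρ'
    obtain ⟨y, hyL, hyne, hyd⟩ := hiso q hqO ρ' hρ'
    exact ⟨y, hyL, hyne, hyd⟩
  choose pick hpickL hpickne hpickd using hpick
  set ρ₀ : ℝ := (r - dist c q) / 2 with hρ₀
  have hρ₀pos : 0 < ρ₀ := by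
    have : dist c q < r := hqd
    simp only [hρ₀]
    linarith
  let rho : ℕ → {x : ℝ // 0 < x} := fun j => Nat.rec ⟨ρ₀, hρ₀pos⟩
    (fun _ prev => ⟨dist (pick prev.1 prev.2) q / 2, by
      have := hpickne prev.1 prev.2
      have := dist_pos.2 this
      linarith⟩) j
  set ρ : ℕ → ℝ := fun j => (rho j).1 with hρ
  have hρpos : ∀ j, 0 < ρ j := fun j => (rho j).2
  have hρsucc : ∀ j, ρ (j+1) = dist (pick (ρ j) (hρpos j)) q / 2 := fun j => rfl
  have hρhalf : ∀ j, ρ (j+1) < ρ j / 2 := by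
    intro j
    rw [hρsucc j]
    have := hpickd (ρ j) (hρpos j)
    linarith
  have hρanti : ∀ j k, j ≤ k → ρ k ≤ ρ j := by
    intro j k hjk
    induction k, hjk using Nat.le_induction with
    | base => exact le_refl _
    | succ k hjk ih =>
      have h1 := hρhalf k
      have h2 := hρpos k
      linarith
  have hρgeom : ∀ j, ρ j ≤ ρ₀ * (2⁻¹:ℝ) ^ j := by
    intro j
    induction j with
    | zero => show (ρ₀:ℝ) ≤ ρ₀ * (2⁻¹:ℝ)^0; simp
    | succ j ih =>
      have h1 := hρhalf j
      have : ρ (j+1) ≤ ρ j / 2 := le_of_lt h1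
      calc ρ (j+1) ≤ ρ j / 2 := this
        _ ≤ (ρ₀ * (2⁻¹:ℝ) ^ j) / 2 := by linarith
        _ = ρ₀ * (2⁻¹:ℝ) ^ (j+1) := by ring
  have hρtend : ∀ ε, 0 < ε → ∃ J, ρ J < ε := by
    intro ε hε
    obtain ⟨J, hJ⟩ := exists_pow_lt_of_lt_one (div_pos hε hρ₀pos) (by norm_num : (2⁻¹:ℝ) < 1)
    refine ⟨J, lt_of_le_of_lt (hρgeom J) ?_⟩
    calc ρ₀ * (2⁻¹:ℝ) ^ J < ρ₀ * (ε / ρ₀) := by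
          exact mul_lt_mul_of_pos_left hJ hρ₀pos
      _ = ε := by field_simp
  have hballsub : ∀ j, Metric.ball q (ρ j) ⊆ Metric.ball c r := by
    intro j x hx
    have h1 : dist x q < ρ j := mem_ball.1 hx
    have h2 : ρ j ≤ ρ₀ := hρanti 0 j (Nat.zero_le j)
    have h3 : dist c q < r := hqd
    rw [mem_ball]
    calc dist x c ≤ dist x q + dist q c := dist_triangle x q c
      _ < ρ₀ + dist q c := by
          have := lt_of_lt_of_le h1 h2
          linarith
      _ = (r - dist c q)/2 + dist c q := by rw [dist_comm q c]
      _ < r := by linarith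
  have hU : ∀ j, ∃ z ε, z ∈ L ∧ 0 < ε ∧ Metric.ball z ε ⊆
      (Metric.ball q (ρ j) \ Metric.closedBall q (ρ (j+1))) \ Bn := by
    intro j
    set Uj : Set P := Metric.ball q (ρ j) \ Metric.closedBall q (ρ (j+1)) with hUj
    have hUopen : IsOpen Uj := Metric.isOpen_ball.sdiff Metric.isClosed_closedBall
    set y := pick (ρ j) (hρpos j) with hy
    have hydist : dist y q = 2 * ρ (j+1) := by rw [hρsucc j]; ring
    have hyU : y ∈ Uj := by
      constructor
      · exact mem_ball.2 (hpickd (ρ j) (hρpos j))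
      · intro hmem
        have := mem_closedBall.1 hmem
        rw [hydist] at this
        have := hρpos (j+1)
        linarith
    have hne : (Uj ∩ L).Nonempty := ⟨y, hyU, hpickL (ρ j) (hρpos j)⟩
    obtain ⟨z, ⟨hzU, hzL⟩, hzB⟩ := Set.not_subset.1 (hnwd Uj hUopen hne)
    have hWopen : IsOpen (Uj \ Bn) := hUopen.sdiff hBncl
    obtain ⟨ε, hε, hball⟩ := Metric.isOpen_iff.1 hWopen z ⟨hzU, hzB⟩
    exact ⟨z, ε, hzL, hε, hball⟩
  choose z ε hzL hεpos hεball using hU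
  refine ⟨q, z, fun j => min (ε j / 2) bound, ρ, hqO, hzL, ?_, ?_, ?_, hρanti, hballsub, hρtend⟩
  · intro j
    exact lt_min (by linarith [hεpos j]) hbound
  · intro j
    exact min_le_right _ _
  · intro j x hx
    apply hεball j
    rw [mem_ball] at hx ⊢
    have : 2 * min (ε j / 2) bound ≤ ε j := by
      have := min_le_left (ε j / 2) bound
      linarith
    linarith


open Metric

theorem lemmaB {P : Type*} [MetricSpace P] [CompleteSpace P] {L O : Set P} {B : ℕ → Set P}
    (hLcl : IsClosed L) (hOL : O ⊆ L) (hOd : L ⊆ closure O) (hOne : O.Nonempty)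
    (hBcl : ∀ n, IsClosed (B n))
    (hBnwd : ∀ n (V : Set P), IsOpen V → (V ∩ L).Nonempty → ¬(V ∩ L ⊆ B n))
    (hOB : O ⊆ ⋃ n, B n)
    (hZ : MengerSet (L \ O)) : False := by
  classical
  -- no point of O is isolated in L
  have hiso : ∀ q ∈ O, ∀ ε > (0:ℝ), ∃ y ∈ L, y ≠ q ∧ dist y q < ε := by
    intro q hq ε hε
    obtain ⟨m, hm⟩ : ∃ m, q ∈ B m := Set.mem_iUnion.1 (hOB hq)
    by_contra hcon
    push_neg at hcon
    apply hBnwd m (Metric.ball q ε) Metric.isOpen_ball ⟨q, Metric.mem_ball_self hε, hOL hq⟩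
    rintro y ⟨hyb, hyL⟩
    rcases eq_or_ne y q with rfl | hne
    · exact hm
    · exact absurd (Metric.mem_ball.1 hyb) (not_lt.2 (hcon y hyL hne))
  -- the step function
  have hstep : ∀ (n : ℕ) (c : P) (r : ℝ), c ∈ L → 0 < r →
      ∃ (q : P) (z : ℕ → P) (r' : ℕ → ℝ) (ρ : ℕ → ℝ),
      q ∈ O ∧ (∀ j, z j ∈ L) ∧ (∀ j, 0 < r' j) ∧ (∀ j, r' j ≤ (2⁻¹:ℝ) ^ (n+1)) ∧
      (∀ j, Metric.ball (z j) (2 * r' j) ⊆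
        (Metric.ball q (ρ j) \ Metric.closedBall q (ρ (j+1))) \ B n) ∧
      (∀ j k, j ≤ k → ρ k ≤ ρ j) ∧
      (∀ j, Metric.ball q (ρ j) ⊆ Metric.ball c r) ∧
      (∀ ε, 0 < ε → ∃ J, ρ J < ε) :=
    fun n c r hc hr => step_exists hOd hOL (hBcl n) (hBnwd n) hiso
      ((2⁻¹:ℝ) ^ (n+1)) (by positivity) c r hc hr
  choose Qf Zf Rf Pf hqO hzL hrpos hrbd hball hanti hsubball htend using hstep
  -- the tree of nodes
  obtain ⟨x₁, hx₁O⟩ := hOne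
  let node : List ℕ → {x : P × ℝ // x.1 ∈ L ∧ 0 < x.2} := fun s =>
    List.rec ⟨(x₁, 1), hOL hx₁O, one_pos⟩
      (fun j s ih => ⟨(Zf s.length ih.1.1 ih.1.2 ih.2.1 ih.2.2 j,
                       Rf s.length ih.1.1 ih.1.2 ih.2.1 ih.2.2 j),
        hzL s.length ih.1.1 ih.1.2 ih.2.1 ih.2.2 j,
        hrpos s.length ih.1.1 ih.1.2 ih.2.1 ih.2.2 j⟩) s
  let nc : List ℕ → P := fun s => (node s).1.1
  let nr : List ℕ → ℝ := fun s => (node s).1.2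
  have hncL : ∀ s, nc s ∈ L := fun s => (node s).2.1
  have hnrpos : ∀ s, 0 < nr s := fun s => (node s).2.2
  let qq : List ℕ → P := fun s => Qf s.length (nc s) (nr s) (hncL s) (hnrpos s)
  let rr : List ℕ → ℕ → ℝ := fun s => Pf s.length (nc s) (nr s) (hncL s) (hnrpos s)
  have hqqO : ∀ s, qq s ∈ O := fun s => hqO s.length (nc s) (nr s) (hncL s) (hnrpos s)
  have hnc : ∀ (j : ℕ) (s : List ℕ),
      nc (j :: s) = Zf s.length (nc s) (nr s) (hncL s) (hnrpos s) j := fun _ _ => rfl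
  have hnr : ∀ (j : ℕ) (s : List ℕ),
      nr (j :: s) = Rf s.length (nc s) (nr s) (hncL s) (hnrpos s) j := fun _ _ => rfl
  let D : List ℕ → Set P := fun s => L ∩ Metric.closedBall (nc s) (nr s)
  let FB : List ℕ → Set P := fun s => Metric.ball (nc s) (2 * nr s)
  have hDcl : ∀ s, IsClosed (D s) := fun s => hLcl.inter Metric.isClosed_closedBall
  have f1 : ∀ s, nr s ≤ (2⁻¹:ℝ) ^ s.length := by
    intro s
    cases s with
    | nil => show (1:ℝ) ≤ _; simp
    | cons j s =>
      rw [hnr]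
      exact hrbd s.length (nc s) (nr s) (hncL s) (hnrpos s) j
  have fFB : ∀ (j : ℕ) (s : List ℕ), FB (j :: s) ⊆
      (Metric.ball (qq s) (rr s j) \ Metric.closedBall (qq s) (rr s (j+1))) \ B s.length := by
    intro j s
    have := hball s.length (nc s) (nr s) (hncL s) (hnrpos s) j
    rw [← hnc j s, ← hnr j s] at this
    exact this
  have fsub : ∀ (j : ℕ) (s : List ℕ), FB (j :: s) ⊆ Metric.ball (nc s) (nr s) := by
    intro j s x hx
    have h1 := fFB j s hx
    exact hsubball s.length (nc s) (nr s) (hncL s) (hnrpos s) j h1.1.1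
  have fFBmono : ∀ (j : ℕ) (s : List ℕ), FB (j :: s) ⊆ FB s := fun j s =>
    (fsub j s).trans (Metric.ball_subset_ball (by linarith [hnrpos s]))
  have fDsub : ∀ s, D s ⊆ FB s := fun s =>
    (Set.inter_subset_right).trans (Metric.closedBall_subset_ball (by linarith [hnrpos s]))
  have fDD : ∀ (j : ℕ) (s : List ℕ), D (j :: s) ⊆ D s := by
    intro j s x hx
    exact ⟨hx.1, Metric.ball_subset_closedBall (fsub j s (fDsub (j :: s) hx))⟩
  have fDB : ∀ (j : ℕ) (s : List ℕ), D (j :: s) ∩ B s.length = ∅ := by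
    intro j s
    ext x
    simp only [Set.mem_inter_iff, Set.mem_empty_iff_false, iff_false, not_and]
    intro hx
    exact (fFB j s (fDsub (j :: s) hx)).2
  have fdisj : ∀ s t : List ℕ, s.length = t.length → (FB s ∩ FB t).Nonempty → s = t := by
    intro s
    induction s with
    | nil =>
      intro t ht _
      exact (List.length_eq_zero_iff.1 ht.symm).symm
    | cons j s ih =>
      intro t ht hne
      cases t with
      | nil => simp at ht
      | cons k t' =>
        have hlen : s.length = t'.length := by simpa using ht
        have hst : s = t' := ih t' hlen (hne.mono (fun x hx => ⟨fFBmono j s hx.1, fFBmono k t' hx.2⟩))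
        subst hst
        rcases lt_trichotomy j k with hjk | hjk | hjk
        · exfalso
          obtain ⟨x, hx1, hx2⟩ := hne
          have h1 := fFB j s hx1
          have h2 := fFB k s hx2
          apply h1.1.2
          have : rr s k ≤ rr s (j+1) := hanti s.length (nc s) (nr s) (hncL s) (hnrpos s) (j+1) k hjk
          exact Metric.mem_closedBall.2 (le_trans (le_of_lt (Metric.mem_ball.1 h2.1.1)) this)
        · rw [hjk]
        · exfalso
          obtain ⟨x, hx1, hx2⟩ := hne
          have h1 := fFB j s hx1
          have h2 := fFB k s hx2
          apply h2.1.2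
          have : rr s j ≤ rr s (k+1) := hanti s.length (nc s) (nr s) (hncL s) (hnrpos s) (k+1) j hjk
          exact Metric.mem_closedBall.2 (le_trans (le_of_lt (Metric.mem_ball.1 h1.1.1)) this)
  -- branches
  let T : (ℕ → ℕ) → ℕ → List ℕ := fun f n => Nat.rec [] (fun m tl => f m :: tl) n
  have hTsucc : ∀ f n, T f (n+1) = f n :: T f n := fun _ _ => rfl
  have hTlen : ∀ f n, (T f n).length = n := by
    intro f n
    induction n with
    | zero => rfl
    | succ n ih => rw [hTsucc]; simp [ih]
  have hself : ∀ s, nc s ∈ D s := fun s => ⟨hncL s, Metric.mem_closedBall_self (le_of_lt (hnrpos s))⟩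
  have hDchain : ∀ f n m, n ≤ m → D (T f m) ⊆ D (T f n) := by
    intro f n m hnm
    induction m, hnm using Nat.le_induction with
    | base => exact subset_rfl
    | succ m hnm ih =>
      rw [hTsucc]
      exact (fDD (f m) (T f m)).trans ih
  have hcauchy : ∀ f, CauchySeq (fun n => nc (T f n)) := by
    intro f
    apply cauchySeq_of_le_geometric (2⁻¹:ℝ) 1 (by norm_num)
    intro n
    have h1 : nc (T f (n+1)) ∈ D (T f n) := hDchain f n (n+1) (Nat.le_succ n) (hself (T f (n+1)))
    have h2 : dist (nc (T f (n+1))) (nc (T f n)) ≤ nr (T f n) := Metric.mem_closedBall.1 h1.2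
    have h3 : nr (T f n) ≤ (2⁻¹:ℝ) ^ n := by
      have := f1 (T f n); rwa [hTlen] at this
    rw [dist_comm, one_mul]
    exact le_trans h2 h3
  have hlim : ∀ f : ℕ → ℕ, ∃ x, Filter.Tendsto (fun n => nc (T f n)) Filter.atTop (nhds x) :=
    fun f => cauchySeq_tendsto_of_complete (hcauchy f)
  choose xf hxf using hlim
  have hxfD : ∀ f n, xf f ∈ D (T f n) := by
    intro f n
    apply (hDcl (T f n)).mem_of_tendsto (hxf f)
    filter_upwards [Filter.eventually_ge_atTop n] with m hm
    exact hDchain f n m hm (hself (T f m))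
  have hxfZ : ∀ f, xf f ∈ L \ O := by
    intro f
    refine ⟨(hxfD f 0).1, fun hO => ?_⟩
    obtain ⟨n, hn⟩ := Set.mem_iUnion.1 (hOB hO)
    have h1 : xf f ∈ D (T f (n+1)) := hxfD f (n+1)
    rw [hTsucc] at h1
    have := fDB (f n) (T f n)
    rw [hTlen] at this
    exact Set.eq_empty_iff_forall_notMem.1 this (xf f) ⟨h1, hn⟩
  -- the scheme sets
  let Ns : List ℕ → Set P := fun s => xf '' {f | T f s.length = s}
  have hND : ∀ s, Ns s ⊆ D s := by
    rintro s _ ⟨f, hf, rfl⟩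
    have := hxfD f s.length
    rwa [hf] at this
  have hNdown : ∀ (j : ℕ) (s : List ℕ), Ns (j :: s) ⊆ Ns s := by
    rintro j s _ ⟨f, hf, rfl⟩
    refine ⟨f, ?_, rfl⟩
    have hf' : T f (s.length + 1) = j :: s := hf
    rw [hTsucc, List.cons.injEq] at hf'
    exact hf'.2
  have hNsplit : ∀ s, Ns s ⊆ ⋃ j, Ns (j :: s) := by
    rintro s _ ⟨f, hf, rfl⟩
    refine Set.mem_iUnion.2 ⟨f s.length, f, ?_, rfl⟩
    show T f (s.length + 1) = f s.length :: s
    rw [hTsucc, hf]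
  have hclN : ∀ s, closure (Ns s) ⊆ D s := fun s =>
    (hDcl s).closure_subset_iff.2 (hND s)
  -- closure dichotomy
  have hdich : ∀ p, p ∈ closure (Ns []) → p ∈ Ns [] ∨ p ∈ O := by
    intro p hp
    have huniq : ∀ s t : List ℕ, s.length = t.length →
        p ∈ closure (Ns s) → p ∈ closure (Ns t) → s = t := by
      intro s t hlen hs ht
      exact fdisj s t hlen ⟨p, fDsub s (hclN s hs), fDsub t (hclN t ht)⟩
    by_cases hA : ∀ n, ∃ s : List ℕ, s.length = n ∧ p ∈ closure (Ns s)
    · left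
      choose S hSlen hScl using hA
      let f : ℕ → ℕ := fun n => (S (n+1)).headI
      have hcons : ∀ n, S (n+1) = f n :: S n := by
        intro n
        have h1 := hSlen (n+1)
        rcases hS : S (n+1) with _ | ⟨a, s'⟩
        · rw [hS] at h1; simp at h1
        · have hlen' : s'.length = n := by rw [hS] at h1; simpa using h1
          have hps' : p ∈ closure (Ns s') := by
            have := hScl (n+1)
            rw [hS] at this
            exact closure_mono (hNdown a s') this
          have : s' = S n := huniq s' (S n) (by rw [hlen', hSlen n]) hps' (hScl n)
          rw [this]
          have hfa : f n = a := by
            show (S (n+1)).headI = a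
            rw [hS]
            rfl
          rw [hfa]
      have hTS : ∀ n, T f n = S n := by
        intro n
        induction n with
        | zero =>
          have := hSlen 0
          rw [List.length_eq_zero_iff] at this
          rw [this]
          rfl
        | succ n ih => rw [hTsucc, ih, ← hcons]
      have hdistn : ∀ n, dist p (xf f) ≤ 2 * (2⁻¹:ℝ) ^ n := by
        intro n
        have hpD : p ∈ D (S n) := hclN (S n) (hScl n)
        have hxD : xf f ∈ D (S n) := by
          have := hxfD f n
          rwa [hTS] at this
        have hb : nr (S n) ≤ (2⁻¹:ℝ) ^ n := by
          have := f1 (S n); rwa [hSlen] at this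
        calc dist p (xf f) ≤ dist p (nc (S n)) + dist (nc (S n)) (xf f) := dist_triangle _ _ _
          _ ≤ nr (S n) + nr (S n) := by
              have h1 := Metric.mem_closedBall.1 hpD.2
              have h2 := Metric.mem_closedBall.1 hxD.2
              rw [dist_comm (nc (S n)) (xf f)]
              linarith
          _ ≤ 2 * (2⁻¹:ℝ) ^ n := by linarith
      have hpeq : p = xf f := by
        rw [← dist_le_zero]
        by_contra hcon
        push_neg at hcon
        have hpos : 0 < dist p (xf f) := hcon
        obtain ⟨n, hn⟩ := exists_pow_lt_of_lt_one (by linarith : (0:ℝ) < dist p (xf f) / 2)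
          (by norm_num : (2⁻¹:ℝ) < 1)
        have := hdistn n
        linarith
      rw [hpeq]
      exact ⟨f, rfl, rfl⟩
    · right
      push_neg at hA
      obtain ⟨n₀, hn₀⟩ := hA
      have hmax : ∃ s, p ∈ closure (Ns s) ∧ ∀ j, p ∉ closure (Ns (j :: s)) := by
        by_contra hno
        push_neg at hno
        have hstep' : ∀ n, ∃ s : List ℕ, s.length = n ∧ p ∈ closure (Ns s) := by
          intro n
          induction n with
          | zero => exact ⟨[], rfl, hp⟩
          | succ n ih =>
            obtain ⟨s, hslen, hscl⟩ := ih
            obtain ⟨j, hj⟩ := hno s hscl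
            exact ⟨j :: s, by simp [hslen], hj⟩
        obtain ⟨s, hslen, hscl⟩ := hstep' n₀
        exact hn₀ s hslen hscl
      obtain ⟨s, hscl, hsmax⟩ := hmax
      have hpq : p = qq s := by
        by_contra hpq
        have hε : 0 < dist p (qq s) := dist_pos.2 hpq
        obtain ⟨J, hJ⟩ := htend s.length (nc s) (nr s) (hncL s) (hnrpos s) (dist p (qq s)) hε
        have hW : ∀ j, ∃ W : Set P, IsOpen W ∧ p ∈ W ∧ W ∩ Ns (j :: s) = ∅ := by
          intro j
          have := hsmax j
          rw [_root_.mem_closure_iff] at this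
          push_neg at this
          obtain ⟨W, hWo, hWp, hWe⟩ := this
          exact ⟨W, hWo, hWp, hWe⟩
        choose W hWo hWp hWd using hW
        set V : Set P := (Metric.closedBall (qq s) (rr s J))ᶜ ∩ ⋂ j ∈ Finset.range J, W j
          with hV
        have hVo : IsOpen V := (Metric.isClosed_closedBall.isOpen_compl).inter
          (isOpen_biInter_finset (fun j _ => hWo j))
        have hpV : p ∈ V := by
          constructor
          · intro hmem
            have := Metric.mem_closedBall.1 hmem
            linarith
          · exact Set.mem_biInter (fun j _ => hWp j)
        obtain ⟨y, hyV, hyN⟩ := _root_.mem_closure_iff.1 hscl V hVo hpV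
        obtain ⟨j, hyNj⟩ := Set.mem_iUnion.1 (hNsplit s hyN)
        rcases lt_or_ge j J with hjJ | hjJ
        · have : y ∈ W j := by
            have := hyV.2
            exact Set.mem_iInter₂.1 this j (Finset.mem_range.2 hjJ)
          exact Set.eq_empty_iff_forall_notMem.1 (hWd j) y ⟨this, hyNj⟩
        · apply hyV.1
          have h1 : y ∈ FB (j :: s) := fDsub (j :: s) (hND (j :: s) hyNj)
          have h2 : dist y (qq s) < rr s j := Metric.mem_ball.1 (fFB j s h1).1.1
          have h3 : rr s j ≤ rr s J := hanti s.length (nc s) (nr s) (hncL s) (hnrpos s) J j hjJ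
          exact Metric.mem_closedBall.2 (by linarith)
      rw [hpq]
      exact hqqO s
  -- the branch set is relatively closed in L \ O, hence Menger
  have hNchar : Ns [] = (L \ O) ∩ closure (Ns []) := by
    apply Set.Subset.antisymm
    · intro x hx
      refine ⟨?_, subset_closure hx⟩
      obtain ⟨f, _, rfl⟩ := hx
      exact hxfZ f
    · rintro x ⟨hxZ, hxcl⟩
      rcases hdich x hxcl with h | h
      · exact h
      · exact absurd h hxZ.2
  have hMN : MengerSet (Ns []) := by
    rw [hNchar]
    exact hZ.inter_closed isClosed_closure
  -- the defeating covers
  let Gk : ℕ → ℕ → Set P := fun n k =>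
    ⋃ (s : List ℕ) (_ : s.length = n) (j : ℕ) (_ : j ≤ k), FB (j :: s)
  have hGopen : ∀ n k, IsOpen (Gk n k) := fun n k =>
    isOpen_iUnion (fun s => isOpen_iUnion (fun _ => isOpen_iUnion (fun j =>
      isOpen_iUnion (fun _ => Metric.isOpen_ball))))
  have hGkmem : ∀ n k x, x ∈ Gk n k ↔ ∃ s : List ℕ, s.length = n ∧ ∃ j, j ≤ k ∧ x ∈ FB (j :: s) := by
    intro n k x
    show x ∈ ⋃ (s : List ℕ) (_ : s.length = n) (j : ℕ) (_ : j ≤ k), FB (j :: s) ↔ _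
    simp only [Set.mem_iUnion]
    constructor
    · rintro ⟨s, hs, j, hj, h⟩
      exact ⟨s, hs, j, hj, h⟩
    · rintro ⟨s, hs, j, hj, h⟩
      exact ⟨s, hs, j, hj, h⟩
  have hGmono : ∀ n k k', k ≤ k' → Gk n k ⊆ Gk n k' := by
    intro n k k' hkk' x hx
    rw [hGkmem] at hx ⊢
    obtain ⟨s, hs, j, hj, hx⟩ := hx
    exact ⟨s, hs, j, le_trans hj hkk', hx⟩
  have hGmem : ∀ (f : ℕ → ℕ) (n : ℕ), xf f ∈ Gk n (f n) := by
    intro f n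
    have h1 : xf f ∈ FB (T f (n+1)) := fDsub (T f (n+1)) (hxfD f (n+1))
    rw [hTsucc] at h1
    rw [hGkmem]
    exact ⟨T f n, hTlen f n, f n, le_refl _, h1⟩
  obtain ⟨V, hVsub, hVcov⟩ := hMN (fun n => Set.range (Gk n)) (by
    intro n
    constructor
    · rintro u ⟨k, rfl⟩
      exact hGopen n k
    · rintro x ⟨f, _, rfl⟩
      exact ⟨Gk n (f n), ⟨f n, rfl⟩, hGmem f n⟩)
  have hKex : ∀ n, ∃ K, ⋃₀ V n ⊆ Gk n K := by
    intro n
    have hch : ∀ v : Set P, ∃ k, v ∈ V n → v ⊆ Gk n k := by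
      intro v
      by_cases hv : v ∈ V n
      · obtain ⟨k, hk⟩ := (hVsub n).1 hv
        exact ⟨k, fun _ => hk ▸ subset_rfl⟩
      · exact ⟨0, fun h => absurd h hv⟩
    choose g hg using hch
    refine ⟨(hVsub n).2.toFinset.sup g, ?_⟩
    rintro x ⟨v, hv, hxv⟩
    exact hGmono n (g v) _ (Finset.le_sup ((hVsub n).2.mem_toFinset.2 hv)) (hg v hv hxv)
  choose K hK using hKex
  set ff : ℕ → ℕ := fun n => K n + 1 with hff
  have hyN : xf ff ∈ Ns [] := ⟨ff, rfl, rfl⟩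
  obtain ⟨n, hy⟩ := Set.mem_iUnion.1 (hVcov hyN)
  have hy2 : xf ff ∈ Gk n (K n) := hK n hy
  rw [hGkmem] at hy2
  obtain ⟨s, hs, j, hj, hyFB⟩ := hy2
  have h1 : xf ff ∈ FB (T ff (n+1)) := fDsub (T ff (n+1)) (hxfD ff (n+1))
  have hlen2 : (T ff (n+1)).length = n + 1 := hTlen ff (n+1)
  have heq : (j :: s) = T ff (n+1) :=
    fdisj _ _ (by rw [List.length_cons, hs, hlen2]) ⟨xf ff, hyFB, h1⟩
  rw [hTsucc, List.cons.injEq] at heq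
  have : j = K n + 1 := heq.1
  omega


/-- The core lemma: in a compact metric space, a set whose "boundary part of the closure"
is contained in a Menger set disjoint from it is a Baire space. -/
theorem core_baire {P : Type*} [MetricSpace P] [CompactSpace P] {C' M : Set P}
    (hCM : closure C' \ C' ⊆ M) (hd : C' ∩ M = ∅) (hM : MengerSet M) :
    BaireSpace ↥C' := by
  constructor
  intro g hgo hgd
  by_contra hnd
  have hgo' : ∀ n, ∃ G : Set P, IsOpen G ∧ g n = Subtype.val ⁻¹' G := by
    intro n
    obtain ⟨G, hG, hGg⟩ := isOpen_induced_iff.1 (hgo n)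
    exact ⟨G, hG, hGg.symm⟩
  choose G hGo hGg using hgo'
  obtain ⟨z, hz⟩ := not_forall.1 hnd
  have hz2 : ¬ ∀ (o : Set ↥C'), IsOpen o → z ∈ o → (o ∩ ⋂ n, g n).Nonempty := by
    rw [← _root_.mem_closure_iff]
    exact hz
  push_neg at hz2
  obtain ⟨o, hoo, hzo, hoe⟩ := hz2
  obtain ⟨W, hWo, hWg⟩ := isOpen_induced_iff.1 hoo
  set x₀ : P := (z : P) with hx₀
  have hx₀C : x₀ ∈ C' := z.2
  have hx₀W : x₀ ∈ W := by
    have : z ∈ Subtype.val ⁻¹' W := by rw [hWg]; exact hzo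
    exact this
  set O : Set P := W ∩ C' with hO
  set L : Set P := closure O with hL
  set B : ℕ → Set P := fun n => closure (C' \ G n) with hB
  have hOC : O ⊆ C' := Set.inter_subset_right
  have hLC : L ⊆ closure C' := closure_mono hOC
  refine lemmaB (L := L) (O := O) (B := B) (isClosed_closure) (subset_closure) (subset_rfl) ⟨x₀, hx₀W, hx₀C⟩
    (fun n => isClosed_closure) ?_ ?_ ?_
  · -- nowhere density
    intro n V hV ⟨y, hyV, hyL⟩ hsub
    obtain ⟨u, huV, huW, huC⟩ := _root_.mem_closure_iff.1 hyL V hV hyV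
    have hu : (⟨u, huC⟩ : ↥C') ∈ closure (g n) := hgd n _
    obtain ⟨v', hvVW, hvg⟩ := _root_.mem_closure_iff.1 hu (Subtype.val ⁻¹' (V ∩ W))
      ((hV.inter hWo).preimage continuous_subtype_val) ⟨huV, huW⟩
    obtain ⟨v, hvC⟩ := v'
    have hvL : v ∈ L := subset_closure ⟨hvVW.2, hvC⟩
    have hvB : v ∈ closure (C' \ G n) := hsub ⟨hvVW.1, hvL⟩
    have hvGn : v ∈ G n := by
      have : (⟨v, hvC⟩ : ↥C') ∈ Subtype.val ⁻¹' (G n) := by rw [← hGg]; exact hvg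
      exact this
    obtain ⟨w, hwG, hwD⟩ := _root_.mem_closure_iff.1 hvB (G n) (hGo n) hvGn
    exact hwD.2 hwG
  · -- O is covered by the B n
    rintro x ⟨hxW, hxC⟩
    have : ¬ ∀ n, (⟨x, hxC⟩ : ↥C') ∈ g n := by
      intro hall
      have hxo : (⟨x, hxC⟩ : ↥C') ∈ o := by
        rw [← hWg]
        exact hxW
      have : (⟨x, hxC⟩ : ↥C') ∈ o ∩ ⋂ n, g n := ⟨hxo, Set.mem_iInter.2 hall⟩
      rw [hoe] at this
      exact this
    push_neg at this
    obtain ⟨n, hn⟩ := this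
    have : x ∈ C' \ G n := by
      refine ⟨hxC, fun hxG => hn ?_⟩
      rw [hGg]
      exact hxG
    exact Set.mem_iUnion.2 ⟨n, subset_closure this⟩
  · -- L \ O is Menger
    have heq : L \ O = (L \ W) ∪ (L ∩ M) := by
      have hLCM : L \ C' = L ∩ M := by
        apply Set.Subset.antisymm
        · rintro x ⟨hxL, hxC⟩
          exact ⟨hxL, hCM ⟨hLC hxL, hxC⟩⟩
        · rintro x ⟨hxL, hxM⟩
          refine ⟨hxL, fun hxC => ?_⟩
          have : x ∈ C' ∩ M := ⟨hxC, hxM⟩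
          rw [hd] at this
          exact this
      rw [← hLCM]
      ext x
      simp only [hO, Set.mem_diff, Set.mem_union, Set.mem_inter_iff]
      tauto
    rw [heq]
    refine MengerSet.union ?_ ?_
    · have hcl : IsClosed (L \ W) := isClosed_closure.inter hWo.isClosed_compl
      exact hcl.isCompact.mengerSet
    · have := hM.inter_closed (isClosed_closure : IsClosed L)
      rwa [Set.inter_comm] at this


theorem BaireSpace.of_homeomorph {A B : Type*} [TopologicalSpace A] [TopologicalSpace B]
    (h : A ≃ₜ B) (hb : BaireSpace B) : BaireSpace A := by
  constructor
  intro f ho hd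
  have h1 : ∀ n, IsOpen (h.symm ⁻¹' (f n)) := fun n => (ho n).preimage h.symm.continuous
  have himg : ∀ s : Set A, h '' s = h.symm ⁻¹' s := fun s => h.toEquiv.image_eq_preimage_symm s
  have h2 : ∀ n, Dense (h.symm ⁻¹' (f n)) := by
    intro n
    rw [← himg]
    exact h.isDenseEmbedding.dense_image.2 (hd n)
  have h3 := hb.baire_property _ h1 h2
  rw [← Set.preimage_iInter, ← himg] at h3
  exact h.isDenseEmbedding.dense_image.1 h3

theorem power_of_complement_completelyBaire (X : Set (ℕ → Bool)) (hX : MengerSpace ↥X) :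
    CompletelyBaire (ℕ → ↥(Xᶜ)) := by
  intro C hC
  letI : MetricSpace (ℕ → ℕ → Bool) := TopologicalSpace.metrizableSpaceMetric _
  set ι : (ℕ → ↥(Xᶜ)) → (ℕ → ℕ → Bool) := fun y n => (y n : ℕ → Bool) with hι
  have hι_cont : Continuous ι :=
    continuous_pi (fun n => continuous_subtype_val.comp (continuous_apply n))
  have hι_inj : Function.Injective ι := by
    intro y₁ y₂ hy
    funext n
    exact Subtype.ext (congrFun hy n)
  have hι_ind : Topology.IsInducing ι := by
    constructor
    show (⨅ n, TopologicalSpace.induced (fun f : (ℕ → ↥(Xᶜ)) => f n) instTopologicalSpaceSubtype)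
      = TopologicalSpace.induced ι (⨅ n, TopologicalSpace.induced
          (fun p : ℕ → ℕ → Bool => p n) inferInstance)
    rw [induced_iInf]
    refine iInf_congr (fun n => ?_)
    rw [induced_compose]
    show TopologicalSpace.induced (fun f : (ℕ → ↥(Xᶜ)) => f n)
        (TopologicalSpace.induced (Subtype.val) inferInstance) = _
    rw [induced_compose]
    rfl
  have hι_emb : Topology.IsEmbedding ι := ⟨hι_ind, hι_inj⟩
  set M : Set (ℕ → ℕ → Bool) := ⋃ n, (fun p : ℕ → ℕ → Bool => p n) ⁻¹' X with hM
  have hMmenger : MengerSet M :=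
    MengerSet.iUnion (fun n => (hX.mengerSet).preimage (continuous_apply n))
  set C' : Set (ℕ → ℕ → Bool) := ι '' C with hC'
  have hdisj : C' ∩ M = ∅ := by
    ext p
    simp only [Set.mem_inter_iff, Set.mem_empty_iff_false, iff_false, not_and]
    rintro ⟨y, _, rfl⟩ hpM
    obtain ⟨n, hn⟩ := Set.mem_iUnion.1 hpM
    exact (y n).2 hn
  have hclosure : closure C' \ C' ⊆ M := by
    rintro p ⟨hpcl, hpC⟩
    by_contra hpM
    have hco : ∀ n, (p n) ∈ Xᶜ := by
      intro n
      intro hmem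
      exact hpM (Set.mem_iUnion.2 ⟨n, hmem⟩)
    set y : ℕ → ↥(Xᶜ) := fun n => ⟨p n, hco n⟩ with hy
    have hpy : ι y = p := rfl
    have hycl : y ∈ closure C := by
      rw [hι_ind.closure_eq_preimage_closure_image C]
      show ι y ∈ closure C'
      rw [hpy]
      exact hpcl
    rw [hC.closure_eq] at hycl
    exact hpC ⟨y, hycl, hpy⟩
  have hbaire : BaireSpace ↥C' := core_baire hclosure hdisj hMmenger
  -- transfer along the homeomorphism C ≃ₜ C'
  have hemb2 : Topology.IsEmbedding (ι ∘ (Subtype.val : ↥C → (ℕ → ↥(Xᶜ)))) :=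
    hι_emb.comp Topology.IsEmbedding.subtypeVal
  have hrange : Set.range (ι ∘ (Subtype.val : ↥C → (ℕ → ↥(Xᶜ)))) = C' := by
    rw [Set.range_comp, Subtype.range_coe]
  exact BaireSpace.of_homeomorph
    ((Topology.IsEmbedding.toHomeomorph hemb2).trans (Homeomorph.setCongr hrange)) hbaire
end

section
/- Let X ⊆ 2^ℕ be closed under finite modifications (e.g., a filter extending the Fréchet filter) and non-meager in 2^ℕ, and let Y = 2^ℕ ∖ X. If Z ⊆ Y is dense in Y, has the Baire property in 2^ℕ, and is non-meager in Y, then there is a contradiction; hence every dense subset of Y with the Baire property is meager in Y. -/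
open Topology Filter Set

/-- `X` is closed under finite modifications. -/
def ClosedUnderFiniteMod (X : Set (ℕ → Bool)) : Prop :=
  ∀ x ∈ X, ∀ y : ℕ → Bool, {n | x n ≠ y n}.Finite → y ∈ X

/-- Coordinatewise xor with `t` as a homeomorphism of Cantor space. -/
def flipH (t : ℕ → Bool) : (ℕ → Bool) ≃ₜ (ℕ → Bool) where
  toFun x := fun n => xor (x n) (t n)
  invFun x := fun n => xor (x n) (t n)
  left_inv x := by funext n; simp [Bool.xor_assoc]
  right_inv x := by funext n; simp [Bool.xor_assoc]
  continuous_toFun := continuous_pi fun n =>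
    (continuous_of_discreteTopology (f := fun b => xor b (t n))).comp (continuous_apply n)
  continuous_invFun := continuous_pi fun n =>
    (continuous_of_discreteTopology (f := fun b => xor b (t n))).comp (continuous_apply n)

/-- A finite-mod-closed set containing a nonempty open set is everything. -/
lemma eq_univ_of_open_subset {X : Set (ℕ → Bool)} (hmod : ClosedUnderFiniteMod X)
    {V : Set (ℕ → Bool)} (hV : IsOpen V) {x₀ : ℕ → Bool} (hx : x₀ ∈ V) (hVX : V ⊆ X) :
    X = univ := by
  obtain ⟨I, u, hu, hsub⟩ := isOpen_pi_iff.mp hV x₀ hx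
  refine eq_univ_of_forall fun y => ?_
  set y' : ℕ → Bool := fun n => if n ∈ I then x₀ n else y n with hy'
  have hy'X : y' ∈ X := hVX (hsub fun i hi => by
    have hi' : i ∈ I := Finset.mem_coe.mp hi
    simp only [y', if_pos hi']; exact (hu i hi').2)
  refine hmod y' hy'X y (Set.Finite.subset I.finite_toSet fun n hn => ?_)
  by_contra h
  have h' : n ∉ I := fun hh => h (Finset.mem_coe.mpr hh)
  simp only [mem_setOf_eq, y', if_neg h', ne_eq, not_true_eq_false] at hn

/-- A closed nowhere dense set restricts to a nowhere dense set of a dense subspace. -/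
lemma nwd_restrict {α : Type*} [TopologicalSpace α] {D : Set α} (hD : Dense D)
    {N : Set α} (hNc : IsClosed N) (hN : IsNowhereDense N) :
    IsNowhereDense ((↑) ⁻¹' N : Set ↥D) := by
  have hclosed : IsClosed ((↑) ⁻¹' N : Set ↥D) := hNc.preimage continuous_subtype_val
  rw [IsNowhereDense, hclosed.closure_eq]
  rw [eq_empty_iff_forall_notMem]
  intro x hx
  obtain ⟨s, hssub, hso, hsx⟩ := mem_interior.mp hx
  obtain ⟨V, hVo, rfl⟩ := isOpen_induced_iff.mp hso
  -- V ∩ D ⊆ N, and ↑x ∈ V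
  have hVN : ∀ z ∈ V ∩ D, z ∈ N := fun z hz => hssub (show (⟨z, hz.2⟩ : ↥D) ∈ _ from hz.1)
  have hVne : (V \ N).Nonempty := by
    rcases (V \ N).eq_empty_or_nonempty with h | h
    · exfalso
      have hVsubN : V ⊆ N := fun z hz => by
        by_contra hzN; exact absurd (mem_diff z |>.mpr ⟨hz, hzN⟩) (by simp [h])
      have : V ⊆ interior (closure N) :=
        fun z hz => mem_interior.mpr ⟨V, fun w hw => subset_closure (hVsubN hw), hVo, hz⟩
      rw [hN] at this
      exact this hsx
    · exact h
  obtain ⟨z, hz⟩ := hD.inter_open_nonempty _ (hVo.sdiff hNc) hVne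
  exact hz.1.2 (hVN z ⟨hz.1.1, hz.2⟩)

theorem dense_baireProperty_subset_meager (X : Set (ℕ → Bool))
    (hmod : ClosedUnderFiniteMod X) (hnm : ¬ IsMeagre X)
    (Z : Set (ℕ → Bool)) (hZY : Z ⊆ Xᶜ)
    (hdense : Xᶜ ⊆ closure Z) (hBP : BaireMeasurableSet Z) :
    IsMeagre ((↑) ⁻¹' Z : Set ↥(Xᶜ)) := by
  -- Step 1: Z is meager in the ambient space.
  have hZmeager : IsMeagre Z := by
    by_contra hZ
    obtain ⟨U, hUo, hZU⟩ := hBP.residualEq_isOpen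
    have hWmem : {x | (x ∈ Z) = (x ∈ U)} ∈ residual (ℕ → Bool) := hZU
    obtain ⟨x₀, hx₀⟩ : U.Nonempty := by
      rcases U.eq_empty_or_nonempty with h | h
      · exfalso; apply hZ
        refine Filter.mem_of_superset hWmem fun x hx => ?_
        simp only [mem_setOf_eq, h] at hx
        simp only [mem_compl_iff]
        intro hxZ
        rw [eq_iff_iff] at hx
        exact (hx.mp hxZ).elim
      · exact h
    obtain ⟨I, u, hu, hsub⟩ := isOpen_pi_iff.mp hUo x₀ hx₀
    -- extension of s : I → Bool by false
    let ext : (I → Bool) → (ℕ → Bool) := fun s n => if h : n ∈ I then s ⟨n, h⟩ else false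
    let W' : Set (ℕ → Bool) := ⋂ (s : I → Bool), (flipH (ext s)) ⁻¹' {x | (x ∈ Z) = (x ∈ U)}
    have hW' : W' ∈ residual (ℕ → Bool) := by
      refine (countable_iInter_mem).mpr fun s => ?_
      exact tendsto_residual_of_isOpenMap (flipH (ext s)).continuous (flipH (ext s)).isOpenMap hWmem
    apply hnm
    show Xᶜ ∈ residual (ℕ → Bool)
    refine Filter.mem_of_superset hW' fun y hy => ?_
    -- choose the flip sending y into the cylinder around x₀
    let s : I → Bool := fun i => xor (y i) (x₀ i)
    have hyW : flipH (ext s) y ∈ {x | (x ∈ Z) = (x ∈ U)} := by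
      have := mem_iInter.mp hy s; exact this
    have hzU : flipH (ext s) y ∈ U := by
      refine hsub fun i hi => ?_
      have hi' : i ∈ I := Finset.mem_coe.mp hi
      have : (flipH (ext s) y) i = x₀ i := by
        show xor (y i) (ext s i) = x₀ i
        simp only [ext, dif_pos hi', s]
        cases y i <;> cases x₀ i <;> rfl
      rw [this]; exact (hu i hi').2
    have hzZ : flipH (ext s) y ∈ Z := by
      rw [mem_setOf_eq, eq_iff_iff] at hyW
      exact hyW.mpr hzU
    have hzX : flipH (ext s) y ∈ Xᶜ := hZY hzZ
    -- y differs from the flipped point only on I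
    intro hyX
    apply hzX
    refine hmod y hyX _ (Set.Finite.subset I.finite_toSet fun n hn => ?_)
    by_contra h
    have h' : n ∉ I := fun hh => h (Finset.mem_coe.mpr hh)
    simp only [mem_setOf_eq, ne_eq] at hn
    apply hn
    show y n = xor (y n) (ext s n)
    simp [ext, dif_neg h']
  -- Step 2: deal with the case X = univ, otherwise Xᶜ is dense.
  by_cases hXuniv : X = univ
  · have : ((↑) ⁻¹' Z : Set ↥(Xᶜ)) = ∅ := by
      rw [eq_empty_iff_forall_notMem]
      intro x hx
      exact absurd (hZY hx) (by simp [hXuniv])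
    rw [this]
    simp only [IsMeagre, compl_empty]
    exact univ_mem
  · have hDdense : Dense (Xᶜ) := by
      rw [dense_iff_inter_open]
      intro V hVo ⟨v, hv⟩
      by_contra h
      rw [not_nonempty_iff_eq_empty] at h
      have hVX : V ⊆ X := fun z hz => by
        by_contra hzX
        exact absurd (show z ∈ V ∩ Xᶜ from ⟨hz, hzX⟩) (by simp [h])
      exact hXuniv (eq_univ_of_open_subset hmod hVo hv hVX)
    obtain ⟨S, hSnwd, hScount, hZsub⟩ := isMeagre_iff_countable_union_isNowhereDense.mp hZmeager
    rw [isMeagre_iff_countable_union_isNowhereDense]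
    refine ⟨(fun t => ((↑) ⁻¹' (closure t) : Set ↥(Xᶜ))) '' S, ?_, hScount.image _, ?_⟩
    · rintro _ ⟨t, htS, rfl⟩
      exact nwd_restrict hDdense isClosed_closure (hSnwd t htS).closure
    · intro x hx
      obtain ⟨t, htS, hxt⟩ := hZsub hx
      exact ⟨_, ⟨t, htS, rfl⟩, subset_closure hxt⟩
end

section
/- A Bernstein subset of the Baire space ℕ^ℕ is not Menger. -/
/-- `B` is a Bernstein subset: both `B` and its complement meet every nonempty
perfect subset. -/
def IsBernstein {X : Type*} [TopologicalSpace X] (B : Set X) : Prop :=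
  ∀ C : Set X, Perfect C → C.Nonempty → (B ∩ C).Nonempty ∧ (Bᶜ ∩ C).Nonempty


theorem perfect_ge (g : ℕ → ℕ) : Perfect {f : ℕ → ℕ | ∀ n, g n ≤ f n} := by
  constructor
  · have : {f : ℕ → ℕ | ∀ n, g n ≤ f n} = ⋂ n, (fun f : ℕ → ℕ => f n) ⁻¹' {k | g n ≤ k} := by
      ext f; simp [Set.mem_iInter]
    rw [this]
    exact isClosed_iInter fun n => (isClosed_discrete _).preimage (continuous_apply n)
  · intro f hf
    rw [accPt_iff_nhds]
    intro U hU
    set h : ℕ → (ℕ → ℕ) := fun k => Function.update f k (f k + 1) with hh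
    have htend : Filter.Tendsto h Filter.atTop (nhds f) := by
      rw [tendsto_pi_nhds]
      intro n
      apply Filter.Tendsto.congr' (f₁ := fun _ => f n)
      · filter_upwards [Filter.eventually_ge_atTop (n+1)] with k hk
        simp [hh, Function.update_of_ne (by omega : n ≠ k)]
      · exact tendsto_const_nhds
    obtain ⟨k, hk⟩ := (htend.eventually_mem hU).exists
    refine ⟨h k, ⟨hk, ?_⟩, ?_⟩
    · intro n
      by_cases hnk : n = k
      · subst hnk; simp [hh]; exact (hf n).trans (Nat.le_succ _)
      · simpa [hh, Function.update_of_ne hnk] using hf n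
    · intro he
      have := congrFun he k
      simp [hh] at this

theorem bernstein_in_baireSpace_not_menger (B : Set (ℕ → ℕ)) (hB : IsBernstein B) :
    ¬ MengerSpace ↥B := by
  intro hM
  set O : ℕ → ℕ → Set ↥B := fun n m => {x | (x : ℕ → ℕ) n < m} with hO
  have hcover : ∀ n, (∀ u ∈ Set.range (O n), IsOpen u) ∧ ⋃₀ Set.range (O n) = Set.univ := by
    intro n
    constructor
    · rintro u ⟨m, rfl⟩
      have hrw : O n m = (fun x : ↥B => (x : ℕ → ℕ) n) ⁻¹' Set.Iio m := rfl
      rw [hrw]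
      exact (isOpen_discrete (Set.Iio m)).preimage
        (Continuous.comp (continuous_apply n) continuous_subtype_val)
    · ext x
      simp only [Set.mem_sUnion, Set.mem_univ, iff_true]
      exact ⟨O n ((x : ℕ → ℕ) n + 1), ⟨_, rfl⟩, Nat.lt_succ_self _⟩
  obtain ⟨V, hV, hcov⟩ := hM (fun n => Set.range (O n)) hcover
  · have key : ∀ n, ∃ N, ⋃₀ V n ⊆ O n N := by
      intro n
      obtain ⟨hsub, hfin⟩ := hV n
      have hch : ∀ v : V n, ∃ m, (v : Set ↥B) ⊆ O n m := by
        rintro ⟨v, hv⟩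
        obtain ⟨m, hm⟩ := hsub hv
        exact ⟨m, hm.symm.subset⟩
      choose m hm using hch
      haveI : Finite (V n) := hfin
      rcases isEmpty_or_nonempty (V n) with he | hne
      · exact ⟨0, by rintro x ⟨v, hv, hx⟩; exact (he.elim ⟨v, hv⟩)⟩
      obtain ⟨N, hN⟩ := Finite.exists_le m
      refine ⟨N, ?_⟩
      rintro x ⟨v, hv, hx⟩
      exact lt_of_lt_of_le (hm ⟨v, hv⟩ hx) (hN ⟨v, hv⟩)
    choose g hg using key
    obtain ⟨⟨x, hxB, hxC⟩, -⟩ := hB {f | ∀ n, g n ≤ f n} (perfect_ge g) ⟨g, fun n => le_rfl⟩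
    have : (⟨x, hxB⟩ : ↥B) ∈ ⋃ n, ⋃₀ V n := hcov ▸ Set.mem_univ _
    obtain ⟨s, ⟨n, rfl⟩, hmem⟩ := this
    have hlt : x n < g n := hg n hmem
    exact absurd (hxC n) (by omega)
end

section
/- A Bernstein subset of ℝ is completely Baire but not Menger. -/
/-- `B ⊆ ℝ` is Bernstein: both `B` and `ℝ ∖ B` meet every uncountable closed set. -/
def IsBernsteinReal (B : Set ℝ) : Prop :=
  ∀ C : Set ℝ, IsClosed C → ¬ C.Countable → (B ∩ C).Nonempty ∧ (Bᶜ ∩ C).Nonempty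
set_option linter.unusedSectionVars false
open scoped Classical
open Set

noncomputable section BernsteinProof

/-! ### Preliminaries -/

lemma bp_notCountable_of_inj (S : Set ℝ) (F : (ℕ → Bool) → ℝ)
    (hF : Function.Injective F) (hFS : ∀ b, F b ∈ S) : ¬ S.Countable := by
  intro hc
  have h1 : Cardinal.mk (ℕ → Bool) ≤ Cardinal.mk S := Cardinal.mk_le_of_injective
    (f := fun b => (⟨F b, hFS b⟩ : S)) (fun a b h => hF (by simpa using congrArg Subtype.val h))
  have h2 : Cardinal.mk (ℕ → Bool) = Cardinal.continuum := by
    rw [← Cardinal.power_def, Cardinal.mk_bool, Cardinal.mk_nat, Cardinal.two_power_aleph0]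
  rw [h2] at h1
  exact absurd (h1.trans hc.le_aleph0) (by simpa using Cardinal.aleph0_lt_continuum)

lemma bp_notCountable_Icc {a b : ℝ} (h : a < b) : ¬ (Set.Icc a b).Countable := by
  intro hc
  have h1 := Cardinal.mk_Icc_real h
  have h2 := hc.le_aleph0
  rw [h1] at h2
  exact absurd h2 (by simpa using Cardinal.aleph0_lt_continuum)

/-- prefixes of a branch, most recent choice first -/
def bpPre (f : ℕ → ℕ) : ℕ → List ℕ
  | 0 => []
  | n+1 => f n :: bpPre f n

lemma bpPre_length (f : ℕ → ℕ) (n : ℕ) : (bpPre f n).length = n := by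
  induction n with
  | zero => rfl
  | succ n ih => simp [bpPre, ih]

lemma bpPre_eq_of_agree {f g : ℕ → ℕ} {n : ℕ} (h : ∀ m < n, f m = g m) :
    bpPre f n = bpPre g n := by
  induction n with
  | zero => rfl
  | succ n ih =>
      simp only [bpPre]
      rw [h n (Nat.lt_succ_self n), ih fun m hm => h m (hm.trans (Nat.lt_succ_self n))]


lemma bp_div_pow_small (c : ℝ) {ε : ℝ} (hε : 0 < ε) : ∃ n : ℕ, c / 2^n < ε := by
  rcases le_or_gt c 0 with h | h
  · exact ⟨0, by simpa using lt_of_le_of_lt (by linarith : c ≤ 0) hε⟩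
  · obtain ⟨n, hn⟩ := pow_unbounded_of_one_lt (c / ε) (one_lt_two (α := ℝ))
    refine ⟨n, ?_⟩
    rw [div_lt_iff₀ (by positivity)]
    rw [div_lt_iff₀ hε] at hn
    calc c < 2 ^ n * ε := hn
      _ = ε * 2 ^ n := by ring

section Scheme

variable (node : List ℕ → ℝ × ℝ)

/-- The closed interval attached to a node of the scheme. -/
def bpI (s : List ℕ) : Set ℝ := Set.Icc (node s).1 (node s).2

variable
  (hlt : ∀ s, (node s).1 < (node s).2)
  (hsub : ∀ k s, Set.Icc (node (k::s)).1 (node (k::s)).2 ⊆ Set.Ioo (node s).1 (node s).2)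
  (hord : ∀ s k k', k < k' → (node (k::s)).2 < (node (k'::s)).1)
  (hdiam : ∀ k s, (node (k::s)).2 - (node (k::s)).1 ≤ ((node s).2 - (node s).1)/2)

section
include hlt hsub hord hdiam

lemma bpI_cons_subset (k : ℕ) (s : List ℕ) : bpI node (k::s) ⊆ bpI node s := by
  intro x hx
  exact Set.Ioo_subset_Icc_self (hsub k s hx)

lemma bpI_pre_antitone (f : ℕ → ℕ) {m n : ℕ} (h : m ≤ n) :
    bpI node (bpPre f n) ⊆ bpI node (bpPre f m) := by
  induction n with
  | zero => simp_all
  | succ n ih =>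
      rcases Nat.eq_or_lt_of_le h with rfl | h'
      · exact subset_rfl
      · exact (bpI_cons_subset node hlt hsub hord hdiam (f n) (bpPre f n)).trans
          (ih (Nat.lt_succ_iff.mp h'))

lemma bpI_diam_pre (f : ℕ → ℕ) (n : ℕ) :
    (node (bpPre f n)).2 - (node (bpPre f n)).1 ≤ ((node []).2 - (node []).1) / 2^n := by
  induction n with
  | zero => simp [bpPre]
  | succ n ih =>
      calc (node (bpPre f (n+1))).2 - (node (bpPre f (n+1))).1
          ≤ ((node (bpPre f n)).2 - (node (bpPre f n)).1)/2 := hdiam (f n) (bpPre f n)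
        _ ≤ (((node []).2 - (node []).1) / 2^n)/2 := by linarith
        _ = ((node []).2 - (node []).1) / 2^(n+1) := by ring

lemma bpI_disjoint : ∀ (s t : List ℕ), s.length = t.length → s ≠ t →
    ∀ x, x ∈ bpI node s → x ∈ bpI node t → False := by
  intro s
  induction s with
  | nil => intro t hl hne; cases t <;> simp_all
  | cons k s ih =>
      intro t hl hne x hxs hxt
      cases t with
      | nil => simp_all
      | cons k' t =>
          simp only [List.length_cons, Nat.add_right_cancel_iff] at hl
          by_cases hst : s = t
          · subst hst
            have hkk : k ≠ k' := by simpa using hne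
            rcases Nat.lt_or_ge k k' with h | h
            · have h1 := hord s k k' h
              have := hxs.2
              have := hxt.1
              linarith
            · rcases Nat.lt_or_ge k' k with h' | h'
              · have h1 := hord s k' k h'
                have := hxs.1
                have := hxt.2
                linarith
              · exact hkk (le_antisymm h' h)
          · exact ih t hl hst x (bpI_cons_subset node hlt hsub hord hdiam k s hxs)
              (bpI_cons_subset node hlt hsub hord hdiam k' t hxt)

end

section
include hlt hsub hord hdiam

/-- left endpoints along a branch are monotone -/
lemma bp_left_mono (f : ℕ → ℕ) {m n : ℕ} (h : m ≤ n) :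
    (node (bpPre f m)).1 ≤ (node (bpPre f n)).1 := by
  have : (node (bpPre f n)).1 ∈ bpI node (bpPre f m) :=
    bpI_pre_antitone node hlt hsub hord hdiam f h ⟨le_refl _, (hlt _).le⟩
  exact this.1

lemma bp_left_mem (f : ℕ → ℕ) {m n : ℕ} (h : m ≤ n) :
    (node (bpPre f n)).1 ∈ bpI node (bpPre f m) :=
  bpI_pre_antitone node hlt hsub hord hdiam f h ⟨le_refl _, (hlt _).le⟩

end

/-- The point of the scheme attached to a branch `f`. -/
def bpE (f : ℕ → ℕ) : ℝ := sSup (Set.range fun n => (node (bpPre f n)).1)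

section
include hlt hsub hord hdiam

lemma bpE_mem (f : ℕ → ℕ) (n : ℕ) : bpE node f ∈ bpI node (bpPre f n) := by
  have hne : (Set.range fun n => (node (bpPre f n)).1).Nonempty := ⟨_, ⟨0, rfl⟩⟩
  have hbdd : BddAbove (Set.range fun n => (node (bpPre f n)).1) := by
    refine ⟨(node []).2, ?_⟩
    rintro x ⟨m, rfl⟩
    have : (node (bpPre f m)).1 ∈ bpI node (bpPre f 0) :=
      bp_left_mem node hlt hsub hord hdiam f (Nat.zero_le m)
    simpa [bpPre, bpI] using this.2
  constructor
  · exact le_csSup hbdd ⟨n, rfl⟩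
  · refine csSup_le hne ?_
    rintro x ⟨m, rfl⟩
    rcases Nat.le_total m n with h | h
    · exact (bp_left_mono node hlt hsub hord hdiam f h).trans (hlt _).le
    · exact (bp_left_mem node hlt hsub hord hdiam f h).2

lemma bp_eq_of_mem_all {f : ℕ → ℕ} {x : ℝ} (hx : ∀ n, x ∈ bpI node (bpPre f n)) :
    x = bpE node f := by
  by_contra hne
  have hd : 0 < |x - bpE node f| := abs_pos.mpr (sub_ne_zero.mpr hne)
  obtain ⟨n, hn⟩ := pow_unbounded_of_one_lt (((node []).2 - (node []).1) / |x - bpE node f|)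
    (one_lt_two (α := ℝ))
  have h1 := hx n
  have h2 := bpE_mem node hlt hsub hord hdiam f n
  have h3 := bpI_diam_pre node hlt hsub hord hdiam f n
  have h4 : |x - bpE node f| ≤ (node (bpPre f n)).2 - (node (bpPre f n)).1 := by
    rw [abs_sub_le_iff]
    constructor <;> [skip; skip] <;>
      · have := h1.1; have := h1.2; have := h2.1; have := h2.2; linarith
  have h5 : ((node []).2 - (node []).1) / 2 ^ n < |x - bpE node f| := by
    rw [div_lt_iff₀ (by positivity)]
    calc (node []).2 - (node []).1 = (((node []).2 - (node []).1)/|x - bpE node f|) * |x - bpE node f| := by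
          field_simp
      _ < 2 ^ n * |x - bpE node f| := by exact mul_lt_mul_of_pos_right hn hd
      _ = |x - bpE node f| * 2 ^ n := by ring
  linarith [h4.trans h3]

/-- if the branch point lies in a node interval of the right depth, the node is the prefix -/
lemma bp_prefix_of_mem {f : ℕ → ℕ} {s : List ℕ} {n : ℕ} (hs : s.length = n)
    (hx : bpE node f ∈ bpI node s) : s = bpPre f n := by
  by_contra hne
  exact bpI_disjoint node hlt hsub hord hdiam s (bpPre f n) (by simp [hs, bpPre_length]) hne
    (bpE node f) hx (bpE_mem node hlt hsub hord hdiam f n)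

lemma bpE_injective : Function.Injective (bpE node) := by
  intro f g h
  funext n
  have key : ∀ m, bpPre f m = bpPre g m := by
    intro m
    have := bpE_mem node hlt hsub hord hdiam f m
    rw [h] at this
    exact bp_prefix_of_mem node hlt hsub hord hdiam (bpPre_length f m) this
  have h2 := key (n+1)
  simp only [bpPre, List.cons.injEq] at h2
  exact h2.1

end


section BinaryBranch

variable (sig tau : ℕ → ℕ)

/-- binary sub-branches -/
def bpT : Set (ℕ → ℕ) := {f | ∀ n, f n = sig n ∨ f n = tau n}

section
include hlt hsub hord hdiam

lemma bpT_image_closed : IsClosed (bpE node '' bpT sig tau) := by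
  set S := bpE node '' bpT sig tau with hS
  rw [← closure_subset_iff_isClosed]
  intro x hx
  have key : ∀ n, ∃ f, f ∈ bpT sig tau ∧ x ∈ closure (S ∩ bpI node (bpPre f n)) := by
    intro n
    induction n with
    | zero =>
        refine ⟨sig, fun n => Or.inl rfl, ?_⟩
        have : S ∩ bpI node (bpPre sig 0) = S := by
          apply Set.inter_eq_self_of_subset_left
          rintro y ⟨g, hg, rfl⟩
          exact bpE_mem node hlt hsub hord hdiam g 0
        rwa [this]
    | succ n ih =>
        obtain ⟨f, hfT, hxf⟩ := ih
        have hsplit : S ∩ bpI node (bpPre f n) ⊆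
            (S ∩ bpI node (sig n :: bpPre f n)) ∪ (S ∩ bpI node (tau n :: bpPre f n)) := by
          rintro y ⟨⟨g, hg, rfl⟩, hyI⟩
          have hpre : bpPre f n = bpPre g n :=
            (bp_prefix_of_mem node hlt hsub hord hdiam (bpPre_length f n) hyI).symm ▸ rfl
          have hpre' : bpPre g n = bpPre f n :=
            (bp_prefix_of_mem node hlt hsub hord hdiam (bpPre_length f n) hyI).symm
          have hy1 : bpE node g ∈ bpI node (g n :: bpPre g n) :=
            bpE_mem node hlt hsub hord hdiam g (n+1)
          rcases hg n with h | h
          · left; exact ⟨⟨g, hg, rfl⟩, by rw [← h, ← hpre']; exact hy1⟩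
          · right; exact ⟨⟨g, hg, rfl⟩, by rw [← h, ← hpre']; exact hy1⟩
        have hx2 : x ∈ closure (S ∩ bpI node (sig n :: bpPre f n)) ∪
            closure (S ∩ bpI node (tau n :: bpPre f n)) := by
          rw [← closure_union]
          exact closure_mono hsplit hxf
        have mk : ∀ c, c = sig n ∨ c = tau n →
            x ∈ closure (S ∩ bpI node (c :: bpPre f n)) →
            ∃ f', f' ∈ bpT sig tau ∧ x ∈ closure (S ∩ bpI node (bpPre f' (n+1))) := by
          intro c hc hxc
          refine ⟨fun m => if m = n then c else f m, ?_, ?_⟩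
          · intro m
            by_cases hm : m = n
            · subst hm; simpa using hc
            · simpa [hm] using hfT m
          · have h1 : bpPre (fun m => if m = n then c else f m) (n+1)
                = c :: bpPre f n := by
              simp only [bpPre, if_pos rfl]
              congr 1
              exact bpPre_eq_of_agree fun m hm => by simp [Nat.ne_of_lt hm]
            rwa [h1]
        rcases hx2 with h | h
        · exact mk (sig n) (Or.inl rfl) h
        · exact mk (tau n) (Or.inr rfl) h
  choose F hFT hFx using key
  have hxI : ∀ n, x ∈ bpI node (bpPre (F n) n) := by
    intro n
    exact closure_minimal Set.inter_subset_right isClosed_Icc (hFx n)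
  have hchain : ∀ n, bpPre (F (n+1)) n = bpPre (F n) n := by
    intro n
    have h1 : x ∈ bpI node (bpPre (F (n+1)) n) := by
      have : bpI node (bpPre (F (n+1)) (n+1)) ⊆ bpI node (bpPre (F (n+1)) n) :=
        bpI_pre_antitone node hlt hsub hord hdiam _ (Nat.le_succ n)
      exact this (hxI (n+1))
    by_contra hne
    exact bpI_disjoint node hlt hsub hord hdiam _ _
      (by simp [bpPre_length]) hne x h1 (hxI n)
  set g : ℕ → ℕ := fun m => F (m+1) m with hg
  have hgpre : ∀ n, bpPre g n = bpPre (F n) n := by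
    intro n
    induction n with
    | zero => rfl
    | succ n ih =>
        show g n :: bpPre g n = bpPre (F (n+1)) (n+1)
        rw [ih, ← hchain n]
        rfl
  have hgT : g ∈ bpT sig tau := fun m => hFT (m+1) m
  have : x = bpE node g :=
    bp_eq_of_mem_all node hlt hsub hord hdiam fun n => by rw [hgpre n]; exact hxI n
  exact ⟨g, hgT, this.symm⟩

lemma bpT_image_notCountable (hst : ∀ n, sig n ≠ tau n) :
    ¬ (bpE node '' bpT sig tau).Countable := by
  apply bp_notCountable_of_inj _ (fun b => bpE node (fun n => bif b n then sig n else tau n))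
  · intro b b' h
    have h2 := bpE_injective node hlt hsub hord hdiam h
    funext n
    have h3 := congrFun h2 n
    rw [show (b n) = (b' n) ↔ True from ?_, ]
    · trivial
    cases hb : b n <;> cases hb' : b' n <;> rw [hb, hb'] at h3 <;>
      simp only [Bool.cond_true, Bool.cond_false] at h3 <;> simp
    · exact hst n h3.symm
    · exact hst n h3
  · intro b
    refine ⟨fun n => bif b n then sig n else tau n, fun n => ?_, rfl⟩
    cases hb : b n <;> simp [hb]

lemma bpT_image_subset_closure (D : Set ℝ)
    (hw : ∀ f ∈ bpT sig tau, ∀ n, (D ∩ bpI node (bpPre f n)).Nonempty) :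
    bpE node '' bpT sig tau ⊆ closure D := by
  rintro x ⟨f, hf, rfl⟩
  rw [Metric.mem_closure_iff]
  intro ε hε
  obtain ⟨n, hn⟩ := bp_div_pow_small ((node []).2 - (node []).1) hε
  obtain ⟨y, hyD, hyI⟩ := hw f hf n
  refine ⟨y, hyD, ?_⟩
  have h1 := bpE_mem node hlt hsub hord hdiam f n
  have h2 := bpI_diam_pre node hlt hsub hord hdiam f n
  rw [Real.dist_eq, abs_sub_lt_iff]
  have := h1.1; have := h1.2; have := hyI.1; have := hyI.2
  constructor <;> linarith

end
end BinaryBranch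

end Scheme
end BernsteinProof
noncomputable section Part2
open Set

/-- separation lemma: union of sets in ordered boxes accumulating at `q` -/
lemma bp_sep {A : ℕ → Set ℝ} {al be : ℕ → ℝ} {q x : ℝ}
    (hA : ∀ k, A k ⊆ Set.Icc (al k) (be k)) (hbe : ∀ k, be k ≤ q)
    (hmono : Monotone al) (halq : ∀ y, y < q → ∃ K, y < al K)
    (hx : x ∈ closure (⋃ k, A k)) : x = q ∨ ∃ k, x ∈ closure (A k) := by
  by_cases hxq : x = q
  · exact Or.inl hxq
  right
  have hxle : x ≤ q := by
    have : closure (⋃ k, A k) ⊆ Set.Iic q :=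
      closure_minimal (Set.iUnion_subset fun k y hy => ((hA k hy).2.trans (hbe k))) isClosed_Iic
    exact this hx
  have hlt : x < q := lt_of_le_of_ne hxle hxq
  obtain ⟨K, hK⟩ := halq x hlt
  have hsplit : (⋃ k, A k) ⊆ (⋃ k, ⋃ (_ : k < K), A k) ∪ Set.Ici (al K) := by
    intro y hy
    rw [Set.mem_iUnion] at hy
    obtain ⟨k, hk⟩ := hy
    rcases Nat.lt_or_ge k K with h | h
    · left; exact Set.mem_iUnion₂.mpr ⟨k, h, hk⟩
    · right; exact le_trans (hmono h) (hA k hk).1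
  have hx2 : x ∈ closure (⋃ k, ⋃ (_ : k < K), A k) ∪ Set.Ici (al K) := by
    have := closure_mono hsplit hx
    rwa [closure_union, (isClosed_Ici).closure_eq] at this
  rcases hx2 with h | h
  · rw [closure_iUnion₂_lt_nat] at h
    obtain ⟨k, _, hk⟩ := Set.mem_iUnion₂.mp h
    exact ⟨k, hk⟩
  · exact absurd hK (not_lt.mpr h)

/-- the geometric children of an interval with distinguished point `q` -/
def geomChild (a q : ℝ) (k : ℕ) : ℝ × ℝ :=
  (q - (q - a) * (1/2)^(k+1), q - (q - a) * (3/4) * (1/2)^(k+1))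

section geom
variable {a q : ℝ} (h : a < q)
include h

lemma gc_pow_pos (k : ℕ) : (0:ℝ) < (1/2)^(k+1) := by positivity

lemma gc_lt (k : ℕ) : (geomChild a q k).1 < (geomChild a q k).2 := by
  have h1 := gc_pow_pos (a := a) (q := q) h k
  have h2 : (0:ℝ) < q - a := by linarith
  simp only [geomChild]
  nlinarith

lemma gc_a_lt (k : ℕ) : a < (geomChild a q k).1 := by
  have h1 := gc_pow_pos (a := a) (q := q) h k
  have h2 : ((1:ℝ)/2)^(k+1) ≤ 1/2 := by
    calc ((1:ℝ)/2)^(k+1) ≤ (1/2)^1 := by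
          apply pow_le_pow_of_le_one (by norm_num) (by norm_num) (Nat.one_le_iff_ne_zero.mpr (by simp))
      _ = 1/2 := by norm_num
  have h2 : (0:ℝ) < q - a := by linarith
  simp only [geomChild]
  nlinarith [pow_le_pow_of_le_one (by norm_num : (0:ℝ) ≤ 1/2) (by norm_num : (1:ℝ)/2 ≤ 1)
    (Nat.one_le_iff_ne_zero.mpr (by simp) : 1 ≤ k+1)]

lemma gc_lt_q (k : ℕ) : (geomChild a q k).2 < q := by
  have h1 := gc_pow_pos (a := a) (q := q) h k
  have h2 : (0:ℝ) < q - a := by linarith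
  simp only [geomChild]
  nlinarith

lemma gc_ord {k k' : ℕ} (hkk : k < k') : (geomChild a q k).2 < (geomChild a q k').1 := by
  have h2 : (0:ℝ) < q - a := by linarith
  have h3 : ((1:ℝ)/2)^(k'+1) ≤ (1/2)^(k+2) :=
    pow_le_pow_of_le_one (by norm_num) (by norm_num) (show k+2 ≤ k'+1 by omega)
  have h4 : ((1:ℝ)/2)^(k+2) = (1/2) * (1/2)^(k+1) := by ring
  have h1 := gc_pow_pos (a := a) (q := q) h k
  simp only [geomChild]
  nlinarith
  
lemma gc_diam (k : ℕ) : (geomChild a q k).2 - (geomChild a q k).1 ≤ (q - a)/8 := by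
  have h2 : (0:ℝ) < q - a := by linarith
  have h3 : ((1:ℝ)/2)^(k+1) ≤ 1/2 := by
    have := pow_le_pow_of_le_one (show (0:ℝ) ≤ 1/2 by norm_num) (show (1:ℝ)/2 ≤ 1 by norm_num)
      (show 1 ≤ k+1 by omega)
    simpa using this
  simp only [geomChild]
  nlinarith

lemma gc_mono : Monotone fun k => (geomChild a q k).1 := by
  intro k k' hkk
  rcases Nat.eq_or_lt_of_le hkk with rfl | hlt'
  · exact le_refl _
  · exact le_of_lt ((gc_lt h k).trans (gc_ord h hlt'))

lemma gc_tendsto {y : ℝ} (hy : y < q) : ∃ K, y < (geomChild a q K).1 := by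
  obtain ⟨n, hn⟩ := bp_div_pow_small (q - a) (show (0:ℝ) < q - y by linarith)
  refine ⟨n, ?_⟩
  have h2 : (0:ℝ) < q - a := by linarith
  have h3 : ((1:ℝ)/2)^(n+1) = 1 / 2^(n+1) := by
    rw [div_pow]; norm_num
  have h5 : (2:ℝ)^n ≤ 2^(n+1) := by
    have : (2:ℝ)^(n+1) = 2 * 2^n := by ring
    nlinarith [pow_pos (show (0:ℝ) < 2 by norm_num) n]
  have h4 : (q - a) * (1/2)^(n+1) ≤ (q - a)/2^n := by
    rw [h3, mul_one_div]
    exact div_le_div_of_nonneg_left (le_of_lt h2) (by positivity) h5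
  simp only [geomChild]
  nlinarith

end geom
end Part2
noncomputable section Part3
open Set

theorem bern_comp_dense {B : Set ℝ} (hB : IsBernsteinReal B) {a b : ℝ} (h : a < b) :
    ∃ q, q ∉ B ∧ a < q ∧ q < b := by
  have h1 : (2*a+b)/3 < (a+2*b)/3 := by linarith
  obtain ⟨-, q, hq1, hq2⟩ := hB (Set.Icc ((2*a+b)/3) ((a+2*b)/3)) isClosed_Icc
    (bp_notCountable_Icc h1)
  exact ⟨q, hq1, by constructor <;> [linarith [hq2.1]; linarith [hq2.2]]⟩

theorem bern_dense {B : Set ℝ} (hB : IsBernsteinReal B) {a b : ℝ} (h : a < b) :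
    ∃ q, q ∈ B ∧ a < q ∧ q < b := by
  have h1 : (2*a+b)/3 < (a+2*b)/3 := by linarith
  obtain ⟨⟨q, hq1, hq2⟩, -⟩ := hB (Set.Icc ((2*a+b)/3) ((a+2*b)/3)) isClosed_Icc
    (bp_notCountable_Icc h1)
  exact ⟨q, hq1, by constructor <;> [linarith [hq2.1]; linarith [hq2.2]]⟩

/-- a point of `Bᶜ` strictly between `a` and `b` -/
def mqpt (B : Set ℝ) (a b : ℝ) : ℝ :=
  if h : ∃ q, q ∉ B ∧ a < q ∧ q < b then h.choose else a + 1

lemma mqpt_spec {B : Set ℝ} (hB : IsBernsteinReal B) {a b : ℝ} (h : a < b) :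
    mqpt B a b ∉ B ∧ a < mqpt B a b ∧ mqpt B a b < b := by
  have hex := bern_comp_dense hB h
  rw [mqpt, dif_pos hex]
  exact hex.choose_spec

/-- the scheme for the non-Menger part -/
def mnode (B : Set ℝ) : List ℕ → ℝ × ℝ
  | [] => (0, 1)
  | k :: s => geomChild (mnode B s).1 (mqpt B (mnode B s).1 (mnode B s).2) k

variable {B : Set ℝ} (hB : IsBernsteinReal B)
include hB

lemma mlt : ∀ s, (mnode B s).1 < (mnode B s).2 := by
  intro s
  induction s with
  | nil => norm_num [mnode]
  | cons k s ih =>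
      have hq := mqpt_spec hB ih
      exact gc_lt hq.2.1 k

lemma msub : ∀ k s, Set.Icc (mnode B (k::s)).1 (mnode B (k::s)).2 ⊆
    Set.Ioo (mnode B s).1 (mnode B s).2 := by
  intro k s x hx
  have hq := mqpt_spec hB (mlt hB s)
  have h1 := gc_a_lt hq.2.1 k
  have h2 := gc_lt_q hq.2.1 k
  have h3 := hx.1
  have h4 := hx.2
  simp only [mnode] at h3 h4 ⊢
  constructor
  · linarith
  · linarith [hq.2.2]

lemma mord : ∀ s k k', k < k' → (mnode B (k::s)).2 < (mnode B (k'::s)).1 := by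
  intro s k k' hkk
  have hq := mqpt_spec hB (mlt hB s)
  exact gc_ord hq.2.1 hkk

lemma mdiam : ∀ k s, (mnode B (k::s)).2 - (mnode B (k::s)).1 ≤
    ((mnode B s).2 - (mnode B s).1)/2 := by
  intro k s
  have hlt := mlt hB s
  have hq := mqpt_spec hB hlt
  have h1 := gc_diam hq.2.1 k
  simp only [mnode]
  have := hq.2.1
  have := hq.2.2
  calc (geomChild (mnode B s).1 (mqpt B (mnode B s).1 (mnode B s).2) k).2 -
      (geomChild (mnode B s).1 (mqpt B (mnode B s).1 (mnode B s).2) k).1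
      ≤ (mqpt B (mnode B s).1 (mnode B s).2 - (mnode B s).1)/8 := h1
    _ ≤ ((mnode B s).2 - (mnode B s).1)/2 := by linarith

/-- main closure analysis: every point of `B` in the closure of the scheme's branch points
is itself a branch point. -/
lemma m_closure {x : ℝ} (hx : x ∈ closure (Set.range (bpE (mnode B)))) (hxB : x ∈ B) :
    ∃ f, x = bpE (mnode B) f := by
  set R := Set.range (bpE (mnode B)) with hR
  have key : ∀ n, ∃ s : List ℕ, s.length = n ∧ x ∈ closure (R ∩ bpI (mnode B) s) := by
    intro n
    induction n with
    | zero =>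
        refine ⟨[], rfl, ?_⟩
        have : R ∩ bpI (mnode B) [] = R := by
          apply Set.inter_eq_self_of_subset_left
          rintro y ⟨f, rfl⟩
          exact bpE_mem (mnode B) (mlt hB) (msub hB) (mord hB) (mdiam hB) f 0
        rwa [this]
    | succ n ih =>
        obtain ⟨s, hlen, hxs⟩ := ih
        have hq := mqpt_spec hB (mlt hB s)
        set q := mqpt B (mnode B s).1 (mnode B s).2 with hqdef
        have hsplit : R ∩ bpI (mnode B) s ⊆ ⋃ k, (R ∩ bpI (mnode B) (k::s)) := by
          rintro y ⟨⟨f, rfl⟩, hyI⟩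
          have hpre : s = bpPre f n :=
            bp_prefix_of_mem (mnode B) (mlt hB) (msub hB) (mord hB) (mdiam hB) hlen hyI
          refine Set.mem_iUnion.mpr ⟨f n, ⟨f, rfl⟩, ?_⟩
          have := bpE_mem (mnode B) (mlt hB) (msub hB) (mord hB) (mdiam hB) f (n+1)
          rwa [show bpPre f (n+1) = f n :: s by rw [hpre]; rfl] at this
        have hx2 : x ∈ closure (⋃ k, (R ∩ bpI (mnode B) (k::s))) := closure_mono hsplit hxs
        have hsep := bp_sep (q := q)
          (fun k y hy => hy.2) (fun k => (gc_lt_q hq.2.1 k).le)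
          (gc_mono hq.2.1) (fun y hy => gc_tendsto hq.2.1 hy) hx2
        rcases hsep with h | ⟨k, hk⟩
        · exact absurd hxB (h ▸ hq.1)
        · exact ⟨k::s, by simp [hlen], hk⟩
  choose S hSlen hSx using key
  have hxI : ∀ n, x ∈ bpI (mnode B) (S n) := fun n =>
    closure_minimal Set.inter_subset_right isClosed_Icc (hSx n)
  have hcons : ∀ n, ∃ k, S (n+1) = k :: S n := by
    intro n
    cases hSn : S (n+1) with
    | nil => exact absurd (hSn ▸ hSlen (n+1)) (by simp)
    | cons k t =>
        refine ⟨k, ?_⟩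
        have hxt : x ∈ bpI (mnode B) t := by
          have h1 := hxI (n+1)
          rw [hSn] at h1
          exact bpI_cons_subset (mnode B) (mlt hB) (msub hB) (mord hB) (mdiam hB) k t h1
        have htlen : t.length = n := by
          have := hSlen (n+1)
          rw [hSn] at this
          simpa using this
        have : t = S n := by
          by_contra hne
          exact bpI_disjoint (mnode B) (mlt hB) (msub hB) (mord hB) (mdiam hB) t (S n)
            (by rw [htlen, hSlen n]) hne x hxt (hxI n)
        rw [this]
  choose F hF using hcons
  refine ⟨F, bp_eq_of_mem_all (mnode B) (mlt hB) (msub hB) (mord hB) (mdiam hB) ?_⟩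
  have hpre : ∀ n, bpPre F n = S n := by
    intro n
    induction n with
    | zero =>
        have := hSlen 0
        cases hS0 : S 0 with
        | nil => rfl
        | cons k t => rw [hS0] at this; simp at this
    | succ n ih =>
        show F n :: bpPre F n = S (n+1)
        rw [ih, ← hF n]
  intro n
  rw [hpre n]
  exact hxI n

/-- the open sets used for the Menger covers -/
def mV (B : Set ℝ) (n k : ℕ) : Set ℝ :=
  ⋃ (s : List ℕ) (_ : s.length = n + 1 ∧ s.headI < k), Set.Ioo (mnode B s).1 (mnode B s).2

lemma mV_isOpen (n k : ℕ) : IsOpen (mV B n k) := by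
  apply isOpen_iUnion; intro s; apply isOpen_iUnion; intro _; exact isOpen_Ioo

lemma mem_mV_self (f : ℕ → ℕ) (n : ℕ) : bpE (mnode B) f ∈ mV B n (f n + 1) := by
  apply Set.mem_iUnion.mpr
  refine ⟨bpPre f (n+1), Set.mem_iUnion.mpr ⟨⟨bpPre_length f (n+1), by simp [bpPre]⟩, ?_⟩⟩
  have h1 := bpE_mem (mnode B) (mlt hB) (msub hB) (mord hB) (mdiam hB) f (n+2)
  have h2 : bpPre f (n+2) = f (n+1) :: bpPre f (n+1) := rfl
  rw [h2] at h1
  exact msub hB (f (n+1)) (bpPre f (n+1)) h1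

lemma mV_elim {f : ℕ → ℕ} {n k : ℕ} (h : bpE (mnode B) f ∈ mV B n k) : f n < k := by
  obtain ⟨s, hs⟩ := Set.mem_iUnion.mp h
  obtain ⟨⟨hlen, hhead⟩, hmem⟩ := Set.mem_iUnion.mp hs
  have hpre : s = bpPre f (n+1) :=
    bp_prefix_of_mem (mnode B) (mlt hB) (msub hB) (mord hB) (mdiam hB) hlen
      (Set.Ioo_subset_Icc_self hmem)
  rw [hpre] at hhead
  simpa [bpPre] using hhead

end Part3
noncomputable section Part4
open Set

theorem bern_not_menger {B : Set ℝ} (hB : IsBernsteinReal B) : ¬ MengerSpace ↥B := by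
  intro hM
  set R := Set.range (bpE (mnode B)) with hR
  set K := closure R with hK
  set U : ℕ → Set (Set ↥B) :=
    fun n => Set.range (fun k : ℕ => (Subtype.val ⁻¹' (mV B n k ∪ Kᶜ) : Set ↥B)) with hU
  have hUgood : ∀ n, (∀ u ∈ U n, IsOpen u) ∧ ⋃₀ U n = Set.univ := by
    intro n
    constructor
    · rintro u ⟨k, rfl⟩
      exact ((mV_isOpen hB n k).union (isOpen_compl_iff.mpr isClosed_closure)).preimage
        continuous_subtype_val
    · ext x
      simp only [Set.mem_sUnion, Set.mem_univ, iff_true]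
      by_cases hxK : (x : ℝ) ∈ K
      · obtain ⟨f, hf⟩ := m_closure hB hxK x.2
        exact ⟨Subtype.val ⁻¹' (mV B n (f n + 1) ∪ Kᶜ), ⟨f n + 1, rfl⟩,
          Or.inl (hf ▸ mem_mV_self hB f n)⟩
      · exact ⟨Subtype.val ⁻¹' (mV B n 0 ∪ Kᶜ), ⟨0, rfl⟩, Or.inr hxK⟩
  obtain ⟨V, hVsub, hcover⟩ := hM U hUgood
  have hbnd : ∀ n, ∃ m : ℕ, ∀ v ∈ V n, ∃ k ≤ m, v = Subtype.val ⁻¹' (mV B n k ∪ Kᶜ) := by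
    intro n
    have h1 : ∀ v ∈ V n, ∃ k : ℕ, v = Subtype.val ⁻¹' (mV B n k ∪ Kᶜ) := by
      intro v hv
      obtain ⟨k, hk⟩ := (hVsub n).1 hv
      exact ⟨k, hk.symm⟩
    choose! κ hκ using h1
    obtain ⟨m, hm⟩ := ((hVsub n).2.image κ).bddAbove
    exact ⟨m, fun v hv => ⟨κ v, hm (Set.mem_image_of_mem κ hv), hκ v hv⟩⟩
  choose g hg using hbnd
  set S' := bpE (mnode B) '' bpT (fun n => g n + 1) (fun n => g n + 2) with hS'
  have hclosed : IsClosed S' :=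
    bpT_image_closed (mnode B) (mlt hB) (msub hB) (mord hB) (mdiam hB) _ _
  have hnc : ¬ S'.Countable :=
    bpT_image_notCountable (mnode B) (mlt hB) (msub hB) (mord hB) (mdiam hB) _ _
      (fun n => by omega)
  obtain ⟨x, hxB, hxS⟩ := (hB S' hclosed hnc).1
  obtain ⟨f, hfT, rfl⟩ := hxS
  have hxuniv : (⟨bpE (mnode B) f, hxB⟩ : ↥B) ∈ ⋃ n, ⋃₀ V n := by
    rw [hcover]; trivial
  obtain ⟨_, ⟨n, rfl⟩, v, hvV, hxv⟩ := hxuniv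
  obtain ⟨k, hkm, rfl⟩ := hg n v hvV
  have hxK : bpE (mnode B) f ∈ K := subset_closure ⟨f, rfl⟩
  have hxmV : bpE (mnode B) f ∈ mV B n k := by
    rcases hxv with h | h
    · exact h
    · exact absurd hxK h
  have hlt := mV_elim hB hxmV
  rcases hfT n with h | h
  · have h2 : f n = g n + 1 := h
    omega
  · have h2 : f n = g n + 2 := h
    omega

end Part4
noncomputable section Part5
open Set

section BaireScheme

variable (D : Set ℝ) (V : ℕ → Set ℝ) (x ε : ℝ)

/-- the bundle of properties wanted of the children of a node at depth `n` over `(a,b)` -/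
def bBundle (n : ℕ) (a b : ℝ) (ch : ℕ → ℝ × ℝ) : Prop :=
  (∀ k, (ch k).1 < (ch k).2) ∧
  (∀ k, Set.Icc (ch k).1 (ch k).2 ⊆ Set.Ioo a b) ∧
  (∀ k k', k < k' → (ch k).2 < (ch k').1) ∧
  (∀ k, (ch k).2 - (ch k).1 ≤ (b - a)/2) ∧
  (∀ k ≤ 1, Set.Icc (ch k).1 (ch k).2 ⊆ V n ∧ (D ∩ Set.Ioo (ch k).1 (ch k).2).Nonempty)

lemma bstep_ex (hVopen : ∀ n, IsOpen (V n))
    (hnb : ∀ z ∈ D, |z - x| < ε → ∀ δ > 0, ∃ w ∈ D, |w - z| < δ ∧ w ≠ z)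
    (hdense : ∀ n, ∀ z ∈ D, ∀ δ > 0, ∃ y ∈ D ∩ V n, |y - z| < δ)
    {a b : ℝ} (n : ℕ) (hab : a < b) (hne : (D ∩ Set.Ioo a b).Nonempty)
    (hball : Set.Ioo a b ⊆ Set.Ioo (x - ε) (x + ε)) :
    ∃ ch : ℕ → ℝ × ℝ, bBundle D V n a b ch := by
  obtain ⟨z, hzD, hzI⟩ := hne
  have hzball := hball hzI
  have hzx : |z - x| < ε := by rw [abs_sub_lt_iff]; constructor <;>
    [linarith [hzball.2]; linarith [hzball.1]]
  have hδ : 0 < min (z - a) (b - z) := by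
    apply lt_min <;> [linarith [hzI.1]; linarith [hzI.2]]
  obtain ⟨w, hwD, hwz, hwne⟩ := hnb z hzD hzx _ hδ
  have hwI : w ∈ Set.Ioo a b := by
    rw [abs_sub_lt_iff] at hwz
    constructor
    · have := hwz.2; have := min_le_left (z - a) (b - z); linarith
    · have := hwz.1; have := min_le_right (z - a) (b - z); linarith
  set p := min z w with hp
  set p' := max z w with hp'
  have hpp' : p < p' := min_lt_max.mpr hwne.symm
  have hpD : p ∈ D := by rcases min_choice z w with h | h <;> rw [hp, h] <;> assumption
  have hp'D : p' ∈ D := by rcases max_choice z w with h | h <;> rw [hp', h] <;> assumption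
  have hpI : p ∈ Set.Ioo a b := by
    rcases min_choice z w with h | h <;> rw [hp, h] <;> assumption
  have hp'I : p' ∈ Set.Ioo a b := by
    rcases max_choice z w with h | h <;> rw [hp', h] <;> assumption
  set r := (p' - p)/3 with hr
  have hrpos : 0 < r := by rw [hr]; linarith
  -- pick w0
  have h0pos : 0 < min r (p - a) := lt_min hrpos (by linarith [hpI.1])
  obtain ⟨w0, ⟨hw0D, hw0V⟩, hw0d⟩ := hdense n p hpD _ h0pos
  rw [abs_sub_lt_iff] at hw0d
  have hw0a : a < w0 := by
    have := hw0d.2; have := min_le_right r (p - a); linarith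
  have hw0r : w0 < p + r := by
    have := hw0d.1; have := min_le_left r (p - a); linarith
  have hw0b : w0 < b := by have := hp'I.2; linarith
  -- pick w1
  have h1pos : 0 < min r (b - p') := lt_min hrpos (by linarith [hp'I.2])
  obtain ⟨w1, ⟨hw1D, hw1V⟩, hw1d⟩ := hdense n p' hp'D _ h1pos
  rw [abs_sub_lt_iff] at hw1d
  have hw1b : w1 < b := by
    have := hw1d.1; have := min_le_right r (b - p'); linarith
  have hw1r : p' - r < w1 := by
    have := hw1d.2; have := min_le_left r (b - p'); linarith
  have hw1a : a < w1 := by have := hpI.1; linarith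
  have hw01 : w0 < w1 := by linarith
  -- radii
  obtain ⟨η0, hη0pos, hη0⟩ := Metric.isOpen_iff.mp (hVopen n) w0 hw0V
  obtain ⟨η1, hη1pos, hη1⟩ := Metric.isOpen_iff.mp (hVopen n) w1 hw1V
  set ρ0 := (min η0 (min ((w1 - w0)/4) (min (w0 - a) ((b - a)/4))))/2 with hρ0
  set ρ1 := (min η1 (min ((w1 - w0)/4) (min (b - w1) ((b - a)/4))))/2 with hρ1
  have hρ0pos : 0 < ρ0 := by
    rw [hρ0]
    have : 0 < min η0 (min ((w1 - w0)/4) (min (w0 - a) ((b - a)/4))) :=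
      lt_min hη0pos (lt_min (by linarith) (lt_min (by linarith) (by linarith)))
    linarith
  have hρ1pos : 0 < ρ1 := by
    rw [hρ1]
    have : 0 < min η1 (min ((w1 - w0)/4) (min (b - w1) ((b - a)/4))) :=
      lt_min hη1pos (lt_min (by linarith) (lt_min (by linarith) (by linarith)))
    linarith
  have hρ0η : ρ0 < η0 := by
    rw [hρ0]; have := min_le_left η0 (min ((w1 - w0)/4) (min (w0 - a) ((b - a)/4))); linarith
  have hρ0w : ρ0 ≤ (w1 - w0)/8 := by
    rw [hρ0]
    have h1 := min_le_right η0 (min ((w1 - w0)/4) (min (w0 - a) ((b - a)/4)))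
    have h2 := min_le_left ((w1 - w0)/4) (min (w0 - a) ((b - a)/4))
    linarith
  have hρ0a : ρ0 ≤ (w0 - a)/2 := by
    rw [hρ0]
    have h1 := min_le_right η0 (min ((w1 - w0)/4) (min (w0 - a) ((b - a)/4)))
    have h2 := min_le_right ((w1 - w0)/4) (min (w0 - a) ((b - a)/4))
    have h3 := min_le_left (w0 - a) ((b - a)/4)
    linarith
  have hρ0ab : ρ0 ≤ (b - a)/8 := by
    rw [hρ0]
    have h1 := min_le_right η0 (min ((w1 - w0)/4) (min (w0 - a) ((b - a)/4)))
    have h2 := min_le_right ((w1 - w0)/4) (min (w0 - a) ((b - a)/4))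
    have h3 := min_le_right (w0 - a) ((b - a)/4)
    linarith
  have hρ1η : ρ1 < η1 := by
    rw [hρ1]; have := min_le_left η1 (min ((w1 - w0)/4) (min (b - w1) ((b - a)/4))); linarith
  have hρ1w : ρ1 ≤ (w1 - w0)/8 := by
    rw [hρ1]
    have h1 := min_le_right η1 (min ((w1 - w0)/4) (min (b - w1) ((b - a)/4)))
    have h2 := min_le_left ((w1 - w0)/4) (min (b - w1) ((b - a)/4))
    linarith
  have hρ1b : ρ1 ≤ (b - w1)/2 := by
    rw [hρ1]
    have h1 := min_le_right η1 (min ((w1 - w0)/4) (min (b - w1) ((b - a)/4)))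
    have h2 := min_le_right ((w1 - w0)/4) (min (b - w1) ((b - a)/4))
    have h3 := min_le_left (b - w1) ((b - a)/4)
    linarith
  have hρ1ab : ρ1 ≤ (b - a)/8 := by
    rw [hρ1]
    have h1 := min_le_right η1 (min ((w1 - w0)/4) (min (b - w1) ((b - a)/4)))
    have h2 := min_le_right ((w1 - w0)/4) (min (b - w1) ((b - a)/4))
    have h3 := min_le_right (b - w1) ((b - a)/4)
    linarith
  set d1 := w1 + ρ1 with hd1
  have hd1b : d1 < b := by rw [hd1]; linarith
  set q' := (d1 + b)/2 with hq'
  have hd1q' : d1 < q' := by rw [hq']; linarith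
  have hq'b : q' < b := by rw [hq']; linarith
  set ch : ℕ → ℝ × ℝ := fun k => match k with
    | 0 => (w0 - ρ0, w0 + ρ0)
    | 1 => (w1 - ρ1, w1 + ρ1)
    | (k+2) => geomChild d1 q' k
    with hch
  have hchsub : ∀ k, Set.Icc (ch k).1 (ch k).2 ⊆ Set.Ioo a b := by
    intro k
    match k with
    | 0 =>
        intro y hy
        have h1 := hy.1; have h2 := hy.2
        constructor <;> simp only [hch] at h1 h2 <;> [linarith; linarith]
    | 1 =>
        intro y hy
        have h1 := hy.1; have h2 := hy.2
        constructor <;> simp only [hch] at h1 h2 <;> [linarith; linarith]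
    | (k+2) =>
        intro y hy
        have h1 := hy.1; have h2 := hy.2
        have h3 := gc_a_lt hd1q' k
        have h4 := gc_lt_q hd1q' k
        simp only [hch] at h1 h2
        constructor <;> [linarith; linarith]
  refine ⟨ch, ?_, hchsub, ?_, ?_, ?_⟩
  · intro k
    match k with
    | 0 => show w0 - ρ0 < w0 + ρ0; linarith
    | 1 => show w1 - ρ1 < w1 + ρ1; linarith
    | (k+2) => exact gc_lt hd1q' k
  · intro k k' hkk
    match k, k' with
    | 0, 0 => omega
    | k+1, 0 => omega
    | k+2, 1 => omega
    | 1, 1 => omega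
    | 0, 1 => show w0 + ρ0 < w1 - ρ1; linarith
    | 0, (k'+2) =>
        show w0 + ρ0 < (geomChild d1 q' k').1
        have := gc_a_lt hd1q' k'
        linarith
    | 1, (k'+2) =>
        show w1 + ρ1 < (geomChild d1 q' k').1
        have := gc_a_lt hd1q' k'
        linarith
    | (k+2), (k'+2) =>
        show (geomChild d1 q' k).2 < (geomChild d1 q' k').1
        exact gc_ord hd1q' (by omega)
  · intro k
    match k with
    | 0 => show (w0 + ρ0) - (w0 - ρ0) ≤ (b - a)/2; linarith
    | 1 => show (w1 + ρ1) - (w1 - ρ1) ≤ (b - a)/2; linarith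
    | (k+2) =>
        have h1 := gc_diam hd1q' k
        have : q' - d1 ≤ b - a := by rw [hq']; linarith [hpI.1, hw1a]
        show (geomChild d1 q' k).2 - (geomChild d1 q' k).1 ≤ (b - a)/2
        linarith
  · intro k hk
    match k, hk with
    | 0, _ =>
        constructor
        · intro y hy
          apply hη0
          rw [Metric.mem_ball, Real.dist_eq, abs_sub_lt_iff]
          have h1 := hy.1; have h2 := hy.2
          simp only [hch] at h1 h2
          constructor <;> linarith
        · exact ⟨w0, hw0D, by constructor <;> simp only [hch] <;> linarith⟩
    | 1, _ =>
        constructor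
        · intro y hy
          apply hη1
          rw [Metric.mem_ball, Real.dist_eq, abs_sub_lt_iff]
          have h1 := hy.1; have h2 := hy.2
          simp only [hch] at h1 h2
          constructor <;> linarith
        · exact ⟨w1, hw1D, by constructor <;> simp only [hch] <;> linarith⟩

/-- children for the Baire scheme -/
def bchild (n : ℕ) (p : ℝ × ℝ) (k : ℕ) : ℝ × ℝ :=
  if h : ∃ ch : ℕ → ℝ × ℝ, bBundle D V n p.1 p.2 ch then h.choose k
  else geomChild p.1 ((p.1 + p.2)/2) k

/-- the Baire scheme -/
def bnode : List ℕ → ℝ × ℝ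
  | [] => (x - ε/2, x + ε/2)
  | k :: s => bchild D V (s.length) (bnode s) k

end BaireScheme
end Part5
noncomputable section Part6
open Set

section BaireScheme2

variable {D : Set ℝ} {V : ℕ → Set ℝ} {x ε : ℝ} (hε : 0 < ε)

include hε

lemma blt : ∀ s, (bnode D V x ε s).1 < (bnode D V x ε s).2 := by
  intro s
  induction s with
  | nil => simp only [bnode]; linarith
  | cons k s ih =>
      show (bchild D V (s.length) (bnode D V x ε s) k).1 <
        (bchild D V (s.length) (bnode D V x ε s) k).2
      rw [bchild]
      split_ifs with h
      · exact h.choose_spec.1 k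
      · exact gc_lt (show (bnode D V x ε s).1 <
          ((bnode D V x ε s).1 + (bnode D V x ε s).2)/2 by linarith) k

lemma bsub : ∀ k s, Set.Icc (bnode D V x ε (k::s)).1 (bnode D V x ε (k::s)).2 ⊆
    Set.Ioo (bnode D V x ε s).1 (bnode D V x ε s).2 := by
  intro k s
  have hab := blt (D := D) (V := V) (x := x) hε s
  show Set.Icc (bchild D V (s.length) (bnode D V x ε s) k).1
    (bchild D V (s.length) (bnode D V x ε s) k).2 ⊆ _
  rw [bchild]
  split_ifs with h
  · exact h.choose_spec.2.1 k
  · intro y hy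
    have h1 := hy.1; have h2 := hy.2
    have hmid : (bnode D V x ε s).1 < ((bnode D V x ε s).1 + (bnode D V x ε s).2)/2 := by
      linarith
    have h3 := gc_a_lt hmid k
    have h4 := gc_lt_q hmid k
    constructor <;> [linarith; linarith]

lemma bord : ∀ s k k', k < k' →
    (bnode D V x ε (k::s)).2 < (bnode D V x ε (k'::s)).1 := by
  intro s k k' hkk
  have hab := blt (D := D) (V := V) (x := x) hε s
  show (bchild D V (s.length) (bnode D V x ε s) k).2 <
    (bchild D V (s.length) (bnode D V x ε s) k').1
  simp only [bchild]
  split_ifs with h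
  · exact h.choose_spec.2.2.1 k k' hkk
  · exact gc_ord (show (bnode D V x ε s).1 <
      ((bnode D V x ε s).1 + (bnode D V x ε s).2)/2 by linarith) hkk

lemma bdiam : ∀ k s, (bnode D V x ε (k::s)).2 - (bnode D V x ε (k::s)).1 ≤
    ((bnode D V x ε s).2 - (bnode D V x ε s).1)/2 := by
  intro k s
  have hab := blt (D := D) (V := V) (x := x) hε s
  show (bchild D V (s.length) (bnode D V x ε s) k).2 -
    (bchild D V (s.length) (bnode D V x ε s) k).1 ≤ _
  rw [bchild]
  split_ifs with h
  · exact h.choose_spec.2.2.2.1 k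
  · have hmid : (bnode D V x ε s).1 < ((bnode D V x ε s).1 + (bnode D V x ε s).2)/2 := by
      linarith
    have h1 := gc_diam hmid k
    linarith

variable (hVopen : ∀ n, IsOpen (V n))
  (hnb : ∀ z ∈ D, |z - x| < ε → ∀ δ > 0, ∃ w ∈ D, |w - z| < δ ∧ w ≠ z)
  (hdense : ∀ n, ∀ z ∈ D, ∀ δ > 0, ∃ y ∈ D ∩ V n, |y - z| < δ)
  (hxD : x ∈ D)

include hVopen hnb hdense hxD

lemma bgood : ∀ f ∈ bpT (fun _ => 0) (fun _ => 1), ∀ n,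
    (D ∩ Set.Ioo (bnode D V x ε (bpPre f n)).1 (bnode D V x ε (bpPre f n)).2).Nonempty ∧
    Set.Ioo (bnode D V x ε (bpPre f n)).1 (bnode D V x ε (bpPre f n)).2 ⊆
      Set.Ioo (x - ε) (x + ε) := by
  intro f hf n
  induction n with
  | zero =>
      constructor
      · exact ⟨x, hxD, by simp only [bnode, bpPre]; constructor <;> linarith⟩
      · simp only [bnode, bpPre]
        intro y hy
        have := hy.1; have := hy.2
        constructor <;> [linarith; linarith]
  | succ n ih =>
      obtain ⟨hne, hball⟩ := ih
      have hab := blt (D := D) (V := V) (x := x) hε (bpPre f n)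
      have hex := bstep_ex D V x ε hVopen hnb hdense n hab hne hball
      have hred : bnode D V x ε (bpPre f (n+1)) =
          bchild D V n (bnode D V x ε (bpPre f n)) (f n) := by
        show bchild D V ((bpPre f n).length) _ _ = _
        rw [bpPre_length]
      have hch : bnode D V x ε (bpPre f (n+1)) = hex.choose (f n) := by
        rw [hred, bchild, dif_pos hex]
      have hspec := hex.choose_spec
      have hfn : f n ≤ 1 := by
        rcases hf n with h | h
        · have h2 : f n = 0 := h; omega
        · have h2 : f n = 1 := h; omega
      obtain ⟨hV, hne'⟩ := hspec.2.2.2.2 (f n) hfn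
      constructor
      · rw [hch]; exact hne'
      · rw [hch]
        intro y hy
        exact hball (hspec.2.1 (f n) (Set.Ioo_subset_Icc_self hy))

lemma bV : ∀ f ∈ bpT (fun _ => 0) (fun _ => 1), ∀ n,
    Set.Icc (bnode D V x ε (bpPre f (n+1))).1 (bnode D V x ε (bpPre f (n+1))).2 ⊆ V n := by
  intro f hf n
  obtain ⟨hne, hball⟩ := bgood hε hVopen hnb hdense hxD f hf n
  have hab := blt (D := D) (V := V) (x := x) hε (bpPre f n)
  have hex := bstep_ex D V x ε hVopen hnb hdense n hab hne hball
  have hch : bnode D V x ε (bpPre f (n+1)) = hex.choose (f n) := by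
    have hred : bnode D V x ε (bpPre f (n+1)) =
        bchild D V n (bnode D V x ε (bpPre f n)) (f n) := by
      show bchild D V ((bpPre f n).length) _ _ = _
      rw [bpPre_length]
    rw [hred, bchild, dif_pos hex]
  have hfn : f n ≤ 1 := by
    rcases hf n with h | h
    · have h2 : f n = 0 := h; omega
    · have h2 : f n = 1 := h; omega
  rw [hch]
  exact (hex.choose_spec.2.2.2.2 (f n) hfn).1

end BaireScheme2

/-- The key real-line statement for complete Baireness of a Bernstein set. -/
theorem bern_baire_piece {B : Set ℝ} (hB : IsBernsteinReal B) {F0 : Set ℝ}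
    (hF0 : IsClosed F0) (V : ℕ → Set ℝ) (hVopen : ∀ n, IsOpen (V n))
    (hdense : ∀ n, ∀ z ∈ B ∩ F0, ∀ δ > 0, ∃ y ∈ (B ∩ F0) ∩ V n, |y - z| < δ)
    {x : ℝ} (hx : x ∈ B ∩ F0) {ε : ℝ} (hε : 0 < ε) :
    ∃ y, y ∈ (B ∩ F0) ∩ (⋂ n, V n) ∧ |y - x| < ε := by
  set D := B ∩ F0 with hD
  by_cases hiso : ∃ z ∈ D, |z - x| < ε ∧ ∃ δ > 0, ∀ w ∈ D, |w - z| < δ → w = z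
  · obtain ⟨z, hzD, hzx, δ, hδ, hδspec⟩ := hiso
    refine ⟨z, ⟨hzD, ?_⟩, hzx⟩
    rw [Set.mem_iInter]
    intro n
    obtain ⟨y, ⟨hyD, hyV⟩, hyz⟩ := hdense n z hzD δ hδ
    rwa [hδspec y hyD hyz] at hyV
  · push_neg at hiso
    have hnb : ∀ z ∈ D, |z - x| < ε → ∀ δ > 0, ∃ w ∈ D, |w - z| < δ ∧ w ≠ z := by
      intro z hz hzx δ hδ
      obtain ⟨w, hw1, hw2, hw3⟩ := hiso z hz hzx δ hδ
      exact ⟨w, hw1, hw2, hw3⟩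
    set node := bnode D V x ε with hnode
    have h1 := blt (D := D) (V := V) (x := x) hε
    have h2 := bsub (D := D) (V := V) (x := x) hε
    have h3 := bord (D := D) (V := V) (x := x) hε
    have h4 := bdiam (D := D) (V := V) (x := x) hε
    set S' := bpE node '' bpT (fun _ => 0) (fun _ => 1) with hS'
    have hclosed : IsClosed S' := bpT_image_closed node h1 h2 h3 h4 _ _
    have hnc : ¬ S'.Countable := bpT_image_notCountable node h1 h2 h3 h4 _ _ (fun n => by omega)
    have hsubcl : S' ⊆ closure D := by
      apply bpT_image_subset_closure node h1 h2 h3 h4 _ _ D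
      intro f hf n
      obtain ⟨⟨y, hy1, hy2⟩, -⟩ := bgood hε hVopen hnb hdense hx f hf n
      exact ⟨y, hy1, Set.Ioo_subset_Icc_self hy2⟩
    obtain ⟨y, hyB, hyS'⟩ := (hB S' hclosed hnc).1
    have hyF0 : y ∈ F0 := by
      have hclD : closure D ⊆ F0 := by
        rw [← hF0.closure_eq]
        exact closure_mono Set.inter_subset_right
      exact hclD (hsubcl hyS')
    obtain ⟨f, hfT, rfl⟩ := hyS'
    refine ⟨bpE node f, ⟨⟨hyB, hyF0⟩, ?_⟩, ?_⟩
    · rw [Set.mem_iInter]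
      intro n
      exact bV hε hVopen hnb hdense hx f hfT n (bpE_mem node h1 h2 h3 h4 f (n+1))
    · have := bpE_mem node h1 h2 h3 h4 f 0
      have hroot : bnode D V x ε (bpPre f 0) = (x - ε/2, x + ε/2) := rfl
      rw [show bpI node (bpPre f 0) = Set.Icc (x - ε/2) (x + ε/2) by rw [bpI, hnode, hroot]]
        at this
      rw [abs_sub_lt_iff]
      constructor <;> [linarith [this.2]; linarith [this.1]]

end Part6
noncomputable section Part7
open Set

theorem bern_completelyBaire {B : Set ℝ} (hB : IsBernsteinReal B) : CompletelyBaire ↥B := by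
  intro C hC
  obtain ⟨F0, hF0, hCF0⟩ := isClosed_induced_iff.mp hC
  have hmemC : ∀ z : ↥B, z ∈ C ↔ (z : ℝ) ∈ F0 := by
    intro z
    rw [← hCF0]
    exact Iff.rfl
  constructor
  intro g hgo hgd
  have hrad : ∀ n (c : ↥C), c ∈ g n → ∃ r, 0 < r ∧ Metric.ball c r ⊆ g n :=
    fun n c hc => Metric.isOpen_iff.mp (hgo n) c hc
  choose! rad hradpos hradsub using hrad
  set V : ℕ → Set ℝ :=
    fun n => ⋃ (c : ↥C) (_ : c ∈ g n), Metric.ball ((c : ↥B) : ℝ) (rad n c) with hV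
  have hVopen : ∀ n, IsOpen (V n) := by
    intro n
    apply isOpen_iUnion; intro c; apply isOpen_iUnion; intro _; exact Metric.isOpen_ball
  have hdense : ∀ n, ∀ z ∈ B ∩ F0, ∀ δ > 0, ∃ y ∈ (B ∩ F0) ∩ V n, |y - z| < δ := by
    intro n z hz δ hδ
    set cz : ↥C := ⟨⟨z, hz.1⟩, (hmemC ⟨z, hz.1⟩).mpr hz.2⟩ with hcz
    obtain ⟨c', hc'ball, hc'g⟩ := Metric.dense_iff.mp (hgd n) cz δ hδ
    refine ⟨((c' : ↥B) : ℝ), ⟨⟨(c' : ↥B).2, (hmemC (c' : ↥B)).mp c'.2⟩, ?_⟩, ?_⟩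
    · exact Set.mem_iUnion.mpr ⟨c', Set.mem_iUnion.mpr ⟨hc'g,
        Metric.mem_ball_self (hradpos n c' hc'g)⟩⟩
    · have hd : dist c' cz < δ := Metric.mem_ball.mp hc'ball
      rw [Subtype.dist_eq, Subtype.dist_eq, Real.dist_eq] at hd
      exact hd
  rw [Metric.dense_iff]
  intro c0 r hr
  have hx : ((c0 : ↥B) : ℝ) ∈ B ∩ F0 := ⟨(c0 : ↥B).2, (hmemC (c0 : ↥B)).mp c0.2⟩
  obtain ⟨y, ⟨⟨hyB, hyF0⟩, hyV⟩, hyx⟩ := bern_baire_piece hB hF0 V hVopen hdense hx hr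
  set cy : ↥C := ⟨⟨y, hyB⟩, (hmemC ⟨y, hyB⟩).mpr hyF0⟩ with hcy
  refine ⟨cy, ⟨?_, ?_⟩⟩
  · rw [Metric.mem_ball, Subtype.dist_eq, Subtype.dist_eq, Real.dist_eq]
    exact hyx
  · rw [Set.mem_iInter]
    intro n
    have hyVn : y ∈ V n := Set.mem_iInter.mp hyV n
    obtain ⟨c', hmem⟩ := Set.mem_iUnion.mp hyVn
    obtain ⟨hc'g, hball⟩ := Set.mem_iUnion.mp hmem
    apply hradsub n c' hc'g
    rw [Metric.mem_ball, Subtype.dist_eq, Subtype.dist_eq, Real.dist_eq]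
    exact Metric.mem_ball.mp hball

theorem bernstein_completelyBaire_not_menger (B : Set ℝ) (hB : IsBernsteinReal B) :
    CompletelyBaire ↥B ∧ ¬ MengerSpace ↥B :=
  ⟨bern_completelyBaire hB, bern_not_menger hB⟩

end Part7
end

section
/- If B is a Bernstein subset of ℝ, then B contains a closed (in B) subspace homeomorphic to a Bernstein subset of ℕ^ℕ. -/
/-- `D` is a Bernstein subset of ℕ^ℕ: both `D` and its complement meet every
nonempty perfect subset. -/
def IsBernsteinBaire (D : Set (ℕ → ℕ)) : Prop :=
  ∀ C : Set (ℕ → ℕ), Perfect C → C.Nonempty → (D ∩ C).Nonempty ∧ (Dᶜ ∩ C).Nonempty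

namespace BCB

open Set PiNat CantorScheme Function Filter Topology

noncomputable section

lemma uncountable_cantor : ¬ Countable (ℕ → Bool) := by
  intro h
  classical
  have hinj : Function.Injective (fun (s : Set ℕ) (n : ℕ) => decide (n ∈ s)) := by
    intro s t hst
    ext n
    have := congrFun hst n
    simpa using this
  have : Countable (Set ℕ) := hinj.countable
  obtain ⟨f, hf⟩ := Countable.exists_injective_nat (Set ℕ)
  exact Function.cantor_injective f hf

lemma icc_not_countable {a b : ℝ} (h : a < b) : ¬ (Set.Icc a b).Countable := by
  intro hc
  have h1 : (Cardinal.mk (Set.Icc a b)) ≤ Cardinal.aleph0 :=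
    Cardinal.mk_le_aleph0_iff.mpr (Set.countable_coe_iff.mpr hc)
  rw [Cardinal.mk_Icc_real h] at h1
  exact Cardinal.aleph0_lt_continuum.not_ge h1

lemma t_pos (n : ℕ) : (0:ℝ) < (1/3 : ℝ) ^ n := pow_pos (by norm_num) n

lemma t_anti {m n : ℕ} (h : m ≤ n) : ((1/3 : ℝ)) ^ n ≤ (1/3 : ℝ) ^ m :=
  pow_le_pow_of_le_one (by norm_num) (by norm_num) h

variable (B : Set ℝ) (hB : IsBernsteinReal B)

include hB

lemma dense_compl {a b : ℝ} (hab : a < b) :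
    ∃ q, q ∉ B ∧ a < q ∧ q < b := by
  have h1 : a + (b - a)/3 < b - (b - a)/3 := by linarith
  obtain ⟨q, hq, hq2⟩ := (hB _ isClosed_Icc (icc_not_countable h1)).2
  exact ⟨q, hq, by linarith [hq2.1, hq2.2], by linarith [hq2.1, hq2.2]⟩

/-- Pick a point of `Bᶜ` strictly inside `(a,b)`. -/
def pick (a b : ℝ) : ℝ :=
  if h : a < b then (dense_compl B hB h).choose else 0

lemma pick_spec {a b : ℝ} (h : a < b) :
    pick B hB a b ∉ B ∧ a < pick B hB a b ∧ pick B hB a b < b := by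
  rw [pick, dif_pos h]
  obtain ⟨h1, h2, h3⟩ := (dense_compl B hB h).choose_spec
  exact ⟨h1, h2, h3⟩

/-- endpoints of the interval scheme -/
def EP : List ℕ → ℝ × ℝ
  | [] => (0, 1)
  | n :: l =>
      (pick B hB (EP l).1 (EP l).2
          + ((EP l).2 - pick B hB (EP l).1 (EP l).2) * (1/3 : ℝ) ^ (n+2),
       pick B hB (EP l).1 (EP l).2
          + ((EP l).2 - pick B hB (EP l).1 (EP l).2) * 2 * (1/3 : ℝ) ^ (n+2))

def lo (l : List ℕ) : ℝ := (EP B hB l).1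
def hi (l : List ℕ) : ℝ := (EP B hB l).2
def qp (l : List ℕ) : ℝ := pick B hB (lo B hB l) (hi B hB l)
def sp (l : List ℕ) : ℝ := hi B hB l - qp B hB l

lemma lo_cons (n : ℕ) (l : List ℕ) :
    lo B hB (n :: l) = qp B hB l + sp B hB l * (1/3 : ℝ) ^ (n+2) := rfl

lemma hi_cons (n : ℕ) (l : List ℕ) :
    hi B hB (n :: l) = qp B hB l + sp B hB l * 2 * (1/3 : ℝ) ^ (n+2) := rfl



lemma lo_lt_hi (l : List ℕ) : lo B hB l < hi B hB l := by
  induction l with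
  | nil => norm_num [lo, hi, EP]
  | cons n l ih =>
      have hq := pick_spec B hB ih
      have hs : 0 < sp B hB l := by
        have := hq.2.2
        simp only [sp, qp]
        linarith
      rw [lo_cons, hi_cons]
      have ht := t_pos (n+2)
      nlinarith

lemma q_mem (l : List ℕ) :
    qp B hB l ∉ B ∧ lo B hB l < qp B hB l ∧ qp B hB l < hi B hB l :=
  pick_spec B hB (lo_lt_hi B hB l)

lemma sp_pos (l : List ℕ) : 0 < sp B hB l := by
  have := (q_mem B hB l).2.2; simp only [sp]; linarith

/-- the interval scheme -/
def A (l : List ℕ) : Set ℝ := Set.Icc (lo B hB l) (hi B hB l)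

lemma child_subset (n : ℕ) (l : List ℕ) :
    Set.Icc (lo B hB (n :: l)) (hi B hB (n :: l)) ⊆
      Set.Ioc (qp B hB l) (hi B hB l) := by
  rw [lo_cons, hi_cons]
  intro z hz
  have h1 := hz.1
  have h2 := hz.2
  have hs := sp_pos B hB l
  have ht := t_pos (n+2)
  have ht9 : ((1/3:ℝ)) ^ (n+2) ≤ (1/3:ℝ)^2 := t_anti (by omega)
  constructor
  · nlinarith
  · have : sp B hB l * 2 * (1/3:ℝ)^(n+2) ≤ sp B hB l := by nlinarith
    have hq : qp B hB l + sp B hB l = hi B hB l := by simp [sp]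
    linarith

lemma A_child_subset (n : ℕ) (l : List ℕ) : A B hB (n :: l) ⊆ A B hB l := by
  intro z hz
  have h := child_subset B hB n l hz
  have := (q_mem B hB l).2.1
  exact ⟨by linarith [h.1], h.2⟩

/-- separation between distinct children -/
lemma gap {m k : ℕ} (hmk : m ≠ k) (l : List ℕ) {y z : ℝ}
    (hy : y ∈ A B hB (m :: l)) (hz : z ∈ A B hB (k :: l)) :
    sp B hB l * (1/3 : ℝ) ^ (k+3) ≤ |z - y| := by
  have hs := sp_pos B hB l
  have hy1 := hy.1; have hy2 := hy.2
  have hz1 := hz.1; have hz2 := hz.2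
  rw [lo_cons] at hy1 hz1
  rw [hi_cons] at hy2 hz2
  rcases lt_or_gt_of_ne hmk with h | h
  · -- m < k : y's interval is to the right of z's
    have ht : ((1/3:ℝ))^(k+2) ≤ (1/3:ℝ)^(m+3) := t_anti (by omega)
    have key : sp B hB l * (1/3:ℝ)^(m+3) ≤ y - z := by
      have e1 : (1/3:ℝ)^(m+2) = 3 * (1/3:ℝ)^(m+3) := by ring
      nlinarith
    have ht2 : ((1/3:ℝ))^(k+3) ≤ (1/3:ℝ)^(m+3) := t_anti (by omega)
    rw [abs_sub_comm]
    calc sp B hB l * (1/3:ℝ)^(k+3) ≤ sp B hB l * (1/3:ℝ)^(m+3) := by nlinarith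
    _ ≤ y - z := key
    _ ≤ |y - z| := le_abs_self _
  · -- k < m
    have ht : ((1/3:ℝ))^(m+2) ≤ (1/3:ℝ)^(k+3) := t_anti (by omega)
    have key : sp B hB l * (1/3:ℝ)^(k+3) ≤ z - y := by
      have e1 : (1/3:ℝ)^(k+2) = 3 * (1/3:ℝ)^(k+3) := by ring
      nlinarith
    exact key.trans (le_abs_self _)

lemma A_disjoint : CantorScheme.Disjoint (A B hB) := by
  intro l m k hmk
  rw [Set.disjoint_left]
  intro z hz1 hz2
  have := gap B hB hmk l hz1 hz2
  simp only [sub_self, abs_zero] at this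
  nlinarith [sp_pos B hB l, t_pos (k+3)]

lemma diam_le (l : List ℕ) : hi B hB l - lo B hB l ≤ (1/2 : ℝ) ^ l.length := by
  induction l with
  | nil => norm_num [lo, hi, EP]
  | cons n l ih =>
      rw [lo_cons, hi_cons]
      have hs := sp_pos B hB l
      have hlq := (q_mem B hB l).2.1
      have hsle : sp B hB l ≤ hi B hB l - lo B hB l := by
        simp only [sp]; linarith
      have ht9 : ((1/3:ℝ)) ^ (n+2) ≤ (1/9:ℝ) := by
        calc ((1/3:ℝ))^(n+2) ≤ (1/3:ℝ)^2 := t_anti (by omega)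
        _ = 1/9 := by norm_num
      have hpow : ((1/2:ℝ)) ^ (n :: l).length = (1/2) * (1/2)^l.length := by
        simp [pow_succ]; ring
      rw [hpow]
      have hp : (0:ℝ) < (1/2)^l.length := pow_pos (by norm_num) _
      nlinarith

lemma A_anti : CantorScheme.ClosureAntitone (A B hB) :=
  CantorScheme.Antitone.closureAntitone (fun l n => A_child_subset B hB n l)
    (fun _ => isClosed_Icc)

lemma A_nonempty (l : List ℕ) : (A B hB l).Nonempty :=
  Set.nonempty_Icc.mpr (lo_lt_hi B hB l).le

lemma res_length_eq (x : ℕ → ℕ) (n : ℕ) : (res x n).length = n := res_length x n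

lemma A_vanishing : CantorScheme.VanishingDiam (A B hB) := by
  intro x
  have hle : ∀ n : ℕ, EMetric.diam (A B hB (res x n)) ≤ ENNReal.ofReal ((1/2:ℝ)^n) := by
    intro n
    rw [A, EMetric.diam, Real.ediam_Icc]
    apply ENNReal.ofReal_le_ofReal
    have := diam_le B hB (res x n)
    rwa [res_length] at this
  have h0 : Filter.Tendsto (fun n : ℕ => ENNReal.ofReal ((1/2:ℝ)^n)) atTop (nhds 0) := by
    rw [show (0 : ENNReal) = ENNReal.ofReal 0 by simp]
    apply ENNReal.tendsto_ofReal
    exact tendsto_pow_atTop_nhds_zero_of_lt_one (by norm_num) (by norm_num)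
  exact tendsto_of_tendsto_of_tendsto_of_le_of_le' tendsto_const_nhds h0
    (Filter.Eventually.of_forall fun n => zero_le)
    (Filter.Eventually.of_forall hle)

lemma A_total : (CantorScheme.inducedMap (A B hB)).1 = Set.univ :=
  (A_anti B hB).map_of_vanishingDiam (A_vanishing B hB) (A_nonempty B hB)

/-- the induced embedding of Baire space into ℝ -/
def e (x : ℕ → ℕ) : ℝ :=
  (CantorScheme.inducedMap (A B hB)).2 ⟨x, by rw [A_total]; trivial⟩

lemma e_mem (x : ℕ → ℕ) (n : ℕ) : e B hB x ∈ A B hB (res x n) :=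
  CantorScheme.map_mem _ n

lemma e_continuous : Continuous (e B hB) :=
  ((A_vanishing B hB).map_continuous).comp (Continuous.subtype_mk continuous_id _)

lemma e_injective : Function.Injective (e B hB) := by
  intro x y hxy
  have := (A_disjoint B hB).map_injective hxy
  simpa [Subtype.ext_iff] using this

/-- separation estimate giving inverse continuity -/
lemma sep (x : ℕ → ℕ) (n : ℕ) :
    ∃ ε > 0, ∀ y : ℕ → ℕ, |e B hB y - e B hB x| < ε → res y n = res x n := by
  induction n with
  | zero => exact ⟨1, by norm_num, fun y _ => by simp⟩
  | succ n ih =>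
      obtain ⟨ε, hε, hsep⟩ := ih
      set l := res x n with hl
      refine ⟨min ε (sp B hB l * (1/3:ℝ)^(x n + 3)), ?_, ?_⟩
      · exact lt_min hε (mul_pos (sp_pos B hB l) (t_pos _))
      intro y hy
      have h1 : res y n = res x n := hsep y (hy.trans_le (min_le_left _ _))
      have hyn : y n = x n := by
        by_contra hne
        have hyA : e B hB y ∈ A B hB (y n :: l) := by
          have := e_mem B hB y (n+1)
          rwa [res_succ, h1] at this
        have hxA : e B hB x ∈ A B hB (x n :: l) := by
          have := e_mem B hB x (n+1)
          rwa [res_succ] at this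
        have := gap B hB hne l hyA hxA
        have h2 := hy.trans_le (min_le_right _ _)
        rw [abs_sub_comm] at h2
        linarith
      rw [res_succ, res_succ, h1, hyn]

lemma e_embedding : IsEmbedding (e B hB) := by
  refine ⟨isInducing_iff_nhds.2 fun x => le_antisymm ?_ ?_, e_injective B hB⟩
  · exact ((e_continuous B hB).tendsto x).le_comap
  · intro U hU
    obtain ⟨V, ⟨z, n, rfl⟩, hxV, hVU⟩ :=
      (isTopologicalBasis_cylinders (fun _ : ℕ => ℕ)).mem_nhds_iff.mp hU
    obtain ⟨ε, hε, hsep⟩ := sep B hB x n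
    refine Filter.mem_of_superset (Filter.preimage_mem_comap (Metric.ball_mem_nhds _ hε)) ?_
    intro y hy
    apply hVU
    rw [mem_cylinder_iff_eq] at hxV
    rw [← hxV]
    simp only [cylinder_eq_res, Set.mem_setOf_eq]
    exact hsep y (by simpa [Real.dist_eq] using hy)

/-- the key closedness lemma: a union of closed sets sitting in the children intervals,
together with the accumulation point, is closed. -/
lemma closed_union_aux (q s : ℝ) (hs : 0 < s) (F : ℕ → Set ℝ)
    (hF : ∀ n, IsClosed (F n))
    (hsub : ∀ n, F n ⊆ Set.Icc (q + s * (1/3:ℝ)^(n+2)) (q + s * 2 * (1/3:ℝ)^(n+2))) :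
    IsClosed ({q} ∪ ⋃ n, F n) := by
  rw [← isOpen_compl_iff, Metric.isOpen_iff]
  intro z hz
  simp only [Set.mem_compl_iff, Set.mem_union, Set.mem_singleton_iff, Set.mem_iUnion,
    not_or, not_exists] at hz
  obtain ⟨hzq, hzF⟩ := hz
  have hδ : 0 < |z - q| := by
    rw [abs_pos, sub_ne_zero]; exact hzq
  set δ := |z - q| with hδdef
  obtain ⟨N, hN⟩ : ∃ N : ℕ, s * 2 * (1/3:ℝ)^(N+2) < δ/2 := by
    have h3 : Filter.Tendsto (fun n : ℕ => s * 2 * (1/3:ℝ)^(n+2)) atTop (nhds 0) := by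
      have := tendsto_pow_atTop_nhds_zero_of_lt_one (by norm_num : (0:ℝ) ≤ 1/3) (by norm_num)
      have h4 := this.comp (tendsto_add_atTop_nat 2)
      have := h4.const_mul (s * 2)
      simpa [Function.comp] using this
    have := (h3.eventually (eventually_lt_nhds (by linarith : (0:ℝ) < δ/2))).exists
    exact this
  -- closed set of "near" parts
  have hK : IsClosed (⋃ n ∈ Finset.range N, F n) :=
    Set.Finite.isClosed_biUnion (Finset.range N).finite_toSet (fun n _ => hF n)
  have hzK : z ∈ (⋃ n ∈ Finset.range N, F n)ᶜ := by
    simp only [Set.mem_compl_iff, Set.mem_iUnion, not_exists]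
    intro n _
    exact hzF n
  obtain ⟨ε₁, hε₁, hball⟩ := Metric.isOpen_iff.mp hK.isOpen_compl z hzK
  refine ⟨min ε₁ (δ/2), lt_min hε₁ (by linarith), ?_⟩
  intro w hw
  simp only [Metric.mem_ball] at hw
  have hw1 : dist w z < ε₁ := hw.trans_le (min_le_left _ _)
  have hw2 : dist w z < δ/2 := hw.trans_le (min_le_right _ _)
  simp only [Set.mem_compl_iff, Set.mem_union, Set.mem_singleton_iff, Set.mem_iUnion,
    not_or, not_exists]
  constructor
  · -- w ≠ q
    intro hwq
    rw [hwq] at hw2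
    rw [Real.dist_eq, abs_sub_comm] at hw2
    linarith
  · intro n hn
    by_cases hnN : n < N
    · have := hball (Metric.mem_ball.mpr hw1)
      simp only [Set.mem_compl_iff, Set.mem_iUnion, not_exists] at this
      exact this n (Finset.mem_range.mpr hnN) hn
    · -- n ≥ N : F n is within δ/2 of q, but w is within δ/2 of z
      push_neg at hnN
      have hwq : |w - q| ≤ s * 2 * (1/3:ℝ)^(n+2) := by
        have h1 := (hsub n hn).1
        have h2 := (hsub n hn).2
        rw [abs_le]
        constructor <;> nlinarith [t_pos (n+2)]
      have hle : s * 2 * (1/3:ℝ)^(n+2) ≤ s * 2 * (1/3:ℝ)^(N+2) := by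
        have := t_anti (show N+2 ≤ n+2 by omega)
        nlinarith
      have : |z - q| ≤ |z - w| + |w - q| := abs_sub_le z w q
      rw [Real.dist_eq] at hw2
      rw [abs_sub_comm] at hw2
      linarith

/-- the level-approximation sets -/
def W : ℕ → List ℕ → Set ℝ
  | 0, l => A B hB l
  | (m+1), l => {qp B hB l} ∪ ⋃ n, W m (n :: l)

lemma W_subset_A : ∀ m l, W B hB m l ⊆ A B hB l := by
  intro m
  induction m with
  | zero => intro l; exact Set.Subset.rfl
  | succ m ih =>
      intro l
      rw [W]
      rintro z (hz | hz)
      · rw [Set.mem_singleton_iff] at hz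
        subst hz
        exact ⟨(q_mem B hB l).2.1.le, (q_mem B hB l).2.2.le⟩
      · obtain ⟨n, hn⟩ := Set.mem_iUnion.mp hz
        exact A_child_subset B hB n l (ih (n :: l) hn)

lemma W_closed : ∀ m l, IsClosed (W B hB m l) := by
  intro m
  induction m with
  | zero => intro l; exact isClosed_Icc
  | succ m ih =>
      intro l
      rw [W]
      apply closed_union_aux B hB (qp B hB l) (sp B hB l) (sp_pos B hB l)
        (fun n => W B hB m (n :: l)) (fun n => ih (n :: l))
      intro n
      refine (W_subset_A B hB m (n :: l)).trans ?_
      rw [A, lo_cons, hi_cons]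

lemma W_anti : ∀ m l, W B hB (m+1) l ⊆ W B hB m l := by
  intro m
  induction m with
  | zero =>
      intro l
      rw [W, W]
      rintro z (hz | hz)
      · rw [Set.mem_singleton_iff] at hz; subst hz
        exact ⟨(q_mem B hB l).2.1.le, (q_mem B hB l).2.2.le⟩
      · obtain ⟨n, hn⟩ := Set.mem_iUnion.mp hz
        exact A_child_subset B hB n l (W_subset_A B hB 0 (n :: l) hn)
  | succ m ih =>
      intro l
      rw [W, W]
      rintro z (hz | hz)
      · exact Or.inl hz
      · obtain ⟨n, hn⟩ := Set.mem_iUnion.mp hz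
        exact Or.inr (Set.mem_iUnion.mpr ⟨n, ih (n :: l) hn⟩)

lemma range_subset_W (m j : ℕ) (x : ℕ → ℕ) : e B hB x ∈ W B hB m (res x j) := by
  induction m generalizing j with
  | zero => exact e_mem B hB x j
  | succ m ih =>
      rw [W]
      right
      exact Set.mem_iUnion.mpr ⟨x j, by rw [← res_succ]; exact ih (j+1)⟩

/-- points of `B` in the closure of the range are in the range -/
lemma mem_range_of_mem_closure {z : ℝ} (hz : z ∈ closure (Set.range (e B hB)))
    (hzB : z ∈ B) : z ∈ Set.range (e B hB) := by
  have hW : ∀ m, z ∈ W B hB m [] := by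
    intro m
    have : Set.range (e B hB) ⊆ W B hB m [] := by
      rintro _ ⟨x, rfl⟩
      exact range_subset_W B hB m 0 x
    exact (closure_minimal this (W_closed B hB m [])) hz
  -- z is never one of the chosen points
  have hzq : ∀ l, z ≠ qp B hB l := by
    intro l h
    exact (q_mem B hB l).1 (h ▸ hzB)
  -- step: from all levels at l, find a child
  have step : ∀ l, (∀ m, z ∈ W B hB m l) → ∃ n, ∀ m, z ∈ W B hB m (n :: l) := by
    intro l hl
    have hchoice : ∀ m, ∃ n, z ∈ W B hB m (n :: l) := by
      intro m
      have := hl (m+1)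
      rw [W] at this
      rcases this with h | h
      · exact absurd h (hzq l)
      · exact Set.mem_iUnion.mp h
    obtain ⟨n0, hn0⟩ := hchoice 0
    refine ⟨n0, fun m => ?_⟩
    obtain ⟨nm, hnm⟩ := hchoice m
    have h1 : z ∈ A B hB (nm :: l) := W_subset_A B hB m (nm :: l) hnm
    have h2 : z ∈ A B hB (n0 :: l) := hn0
    have : nm = n0 := by
      by_contra hne
      have := gap B hB hne l h1 h2
      simp only [sub_self, abs_zero] at this
      nlinarith [sp_pos B hB l, t_pos (n0+3)]
    rwa [this] at hnm
  -- build the branch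
  let g : ℕ → {l : List ℕ // ∀ m, z ∈ W B hB m l} := fun j =>
    Nat.rec ⟨[], hW⟩ (fun _ p => ⟨(step p.1 p.2).choose :: p.1, (step p.1 p.2).choose_spec⟩) j
  set x : ℕ → ℕ := fun j => (g (j+1)).1.headI with hx
  have hres : ∀ j, res x j = (g j).1 := by
    intro j
    induction j with
    | zero => rfl
    | succ j ih =>
        rw [res_succ, ih]
        show x j :: (g j).1 = (g (j+1)).1
        have : (g (j+1)).1 = (step (g j).1 (g j).2).choose :: (g j).1 := rfl
        rw [this]
        rfl
  refine ⟨x, ?_⟩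
  have hdist : ∀ j, |e B hB x - z| ≤ (1/2:ℝ)^j := by
    intro j
    have hzA : z ∈ A B hB (res x j) := by
      rw [hres j]
      exact (g j).2 0
    have hxA : e B hB x ∈ A B hB (res x j) := e_mem B hB x j
    have hd := diam_le B hB (res x j)
    rw [res_length] at hd
    simp only [BCB.A, Set.mem_Icc] at hxA hzA
    rw [abs_le]
    exact ⟨by linarith [hxA.1, hzA.2], by linarith [hxA.2, hzA.1]⟩
  have : |e B hB x - z| ≤ 0 := by
    refine ge_of_tendsto' (tendsto_pow_atTop_nhds_zero_of_lt_one
      (by norm_num : (0:ℝ) ≤ 1/2) (by norm_num)) hdist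
  have : e B hB x = z := by
    have h0 := abs_nonneg (e B hB x - z)
    have : |e B hB x - z| = 0 := le_antisymm this h0
    rwa [abs_eq_zero, sub_eq_zero] at this
  exact this

end

end BCB

open Topology in
theorem bernstein_contains_closed_bernstein_copy (B : Set ℝ) (hB : IsBernsteinReal B) :
    ∃ C : Set ↥B, IsClosed C ∧
      ∃ D : Set (ℕ → ℕ), IsBernsteinBaire D ∧ Nonempty (↥C ≃ₜ ↥D) := by
  classical
  set e := BCB.e B hB with he
  have he_cont : Continuous e := BCB.e_continuous B hB
  have he_inj : Function.Injective e := BCB.e_injective B hB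
  have he_emb : IsEmbedding e := BCB.e_embedding B hB
  set F : Set ℝ := closure (Set.range e) with hF
  set C : Set ↥B := (fun p : ↥B => (p : ℝ)) ⁻¹' F with hC
  set D : Set (ℕ → ℕ) := e ⁻¹' B with hD
  have hBF : ∀ z : ℝ, z ∈ B → z ∈ F → z ∈ Set.range e := fun z hzB hzF =>
    BCB.mem_range_of_mem_closure B hB hzF hzB
  refine ⟨C, isClosed_closure.preimage continuous_subtype_val, D, ?_, ?_⟩
  · -- D is Bernstein in Baire space
    intro P hP hPne
    letI := TopologicalSpace.upgradeIsCompletelyMetrizable (ℕ → ℕ)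
    obtain ⟨g, hgP, hg_cont, hg_inj⟩ := hP.exists_nat_bool_injection hPne
    set M : Set ℝ := Set.range (fun c : ℕ → Bool => e (g c)) with hM
    have hMcomp : IsCompact M := isCompact_range (he_cont.comp hg_cont)
    have hMclosed : IsClosed M := hMcomp.isClosed
    have hMunc : ¬ M.Countable := by
      intro h
      have hinj : Function.Injective (fun c : ℕ → Bool => e (g c)) :=
        fun a b hab => hg_inj (he_inj hab)
      have h2 := h.preimage hinj
      rw [Set.preimage_range] at h2
      rw [Set.countable_univ_iff] at h2
      exact BCB.uncountable_cantor h2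
    obtain ⟨⟨z1, hz1B, hz1M⟩, ⟨z2, hz2B, hz2M⟩⟩ := hB M hMclosed hMunc
    obtain ⟨c1, hc1⟩ := hz1M
    obtain ⟨c2, hc2⟩ := hz2M
    constructor
    · exact ⟨g c1, by rw [Set.mem_inter_iff]; exact ⟨by simp [hD, hc1 ▸ hz1B], hgP ⟨c1, rfl⟩⟩⟩
    · exact ⟨g c2, by rw [Set.mem_inter_iff]; exact ⟨by simp [hD]; exact fun h => hz2B (hc2 ▸ h), hgP ⟨c2, rfl⟩⟩⟩
  · -- the homeomorphism
    set f : ↥D → ↥C := fun x => ⟨⟨e x.1, x.2⟩, subset_closure ⟨x.1, rfl⟩⟩ with hf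
    have hf_bij : Function.Bijective f := by
      constructor
      · intro a b hab
        apply Subtype.ext
        apply he_inj
        exact congrArg (fun p : ↥C => ((p : ↥B) : ℝ)) hab
      · rintro ⟨⟨z, hzB⟩, hzF⟩
        obtain ⟨x, hx⟩ := hBF z hzB hzF
        exact ⟨⟨x, by simp [hD, hx ▸ hzB]⟩, by apply Subtype.ext; apply Subtype.ext; exact hx⟩
    have hf_cont : Continuous f := by
      apply Continuous.subtype_mk
      apply Continuous.subtype_mk
      exact he_cont.comp continuous_subtype_val
    have hf_ind : IsInducing f := by
      apply IsInducing.of_comp hf_cont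
        (continuous_subtype_val.comp continuous_subtype_val)
      exact (he_emb.toIsInducing.comp IsInducing.subtypeVal :
        IsInducing (e ∘ (Subtype.val : ↥D → ℕ → ℕ)))
    set equiv := Equiv.ofBijective f hf_bij with hequiv
    have hsymm_cont : Continuous equiv.symm := by
      rw [hf_ind.continuous_iff]
      have : f ∘ equiv.symm = id := by
        funext z
        exact equiv.apply_symm_apply z
      rw [this]
      exact continuous_id
    exact ⟨(Homeomorph.mk equiv hf_cont hsymm_cont).symm⟩
end
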